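/- arXiv:0910.3892 — 10 statements merged into one kernel-verified Lean document; each statement's English description precedes it below -/
import Mathlib

section
/- Let m be an integer and n a positive integer, and let p be an odd prime dividing m-4. Then the p-adic valuation of the sum over k from 0 to n-1 of C(2k,k)/m^k is at least the p-adic valuation of n. -/
open Nat Finset

/-- coefficient in expansion of partial central-binomial sums around m = 4 -/
def cc (n j : ℕ) : ℚ :=
  if j < n then (((2*n)! * j ! : ℕ) : ℚ) / ((2 * n ! * (n - 1 - j)! * (2*j+1)! : ℕ) : ℚ)
  else 0

lemma cc_of_lt {n j : ℕ} (h : j < n) :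
    cc n j = (((2*n)! * j ! : ℕ) : ℚ) / ((2 * n ! * (n - 1 - j)! * (2*j+1)! : ℕ) : ℚ) :=
  if_pos h

lemma cc_of_ge {n j : ℕ} (h : n ≤ j) : cc n j = 0 := if_neg (by omega)

lemma cc_pos {n j : ℕ} (h : j < n) : 0 < cc n j := by
  rw [cc_of_lt h]
  apply _root_.div_pos <;> · push_cast; positivity

lemma fac_cast_ne (k : ℕ) : ((k ! : ℕ) : ℚ) ≠ 0 := by
  exact_mod_cast (Nat.factorial_pos k).ne'

lemma cc_rec0 (n : ℕ) : cc (n+1) 0 = 4 * cc n 0 + ((2*n).choose n : ℚ) := by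
  rcases Nat.eq_zero_or_pos n with h | h
  · subst h
    rw [cc_of_ge (le_refl 0), cc_of_lt (by omega)]
    norm_num [cc, Nat.factorial]
  · obtain ⟨s, rfl⟩ : ∃ s, n = s + 1 := ⟨n - 1, by omega⟩
    rw [cc_of_lt (by omega), cc_of_lt (by omega)]
    have hch : (((2*(s+1)).choose (s+1) : ℕ) : ℚ)
        = ((2*(s+1))! : ℚ) / (((s+1)! : ℚ) * ((s+1)! : ℚ)) := by
      rw [eq_div_iff (by positivity)]
      have := Nat.choose_mul_factorial_mul_factorial (show s+1 ≤ 2*(s+1) by omega)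
      have h2 : 2*(s+1) - (s+1) = s+1 := by omega
      rw [h2] at this
      rw [← mul_assoc]; exact_mod_cast congrArg (Nat.cast : ℕ → ℚ) this
    have e1 : ((2*(s+1+1))! : ℚ) = (2*(s+1)+2) * ((2*(s+1)+1) * (2*(s+1))!) := by
      have : 2*(s+1+1) = (2*(s+1)+1)+1 := by ring
      rw [this, Nat.factorial_succ, Nat.factorial_succ]
      push_cast; ring
    have e2 : ((s+1+1)! : ℚ) = (s+2) * (s+1)! := by
      rw [Nat.factorial_succ]; push_cast; ring
    have e3 : ((s+1)! : ℚ) = (s+1) * s ! := by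
      rw [Nat.factorial_succ]; push_cast; ring
    have i1 : (s+1+1) - 1 - 0 = s + 1 := by omega
    have i2 : (s+1) - 1 - 0 = s := by omega
    rw [i1, i2, hch]
    push_cast
    rw [e1, e2]
    nth_rewrite 2 [e3]
    nth_rewrite 3 [e3]
    have f1 := fac_cast_ne (s+1)
    have f2 := fac_cast_ne s
    field_simp
    ring

lemma fac_succ_q (k : ℕ) : ((k+1)! : ℚ) = (k+1) * k ! := by
  rw [Nat.factorial_succ]; push_cast; ring

lemma cc_rec (n j : ℕ) (h : j < n) :
    cc (n+1) (j+1) = cc n j + 4 * cc n (j+1) := by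
  rcases Nat.lt_or_ge (j+1) n with h2 | h2
  · -- generic case: n = j + 2 + t
    obtain ⟨t, rfl⟩ : ∃ t, n = j + 2 + t := ⟨n - 2 - j, by omega⟩
    rw [cc_of_lt (by omega), cc_of_lt (by omega), cc_of_lt (by omega)]
    have i1 : (j+2+t) + 1 - 1 - (j+1) = t + 1 := by omega
    have i2 : (j+2+t) - 1 - j = t + 1 := by omega
    have i3 : (j+2+t) - 1 - (j+1) = t := by omega
    rw [i1, i2, i3]
    push_cast
    have e1 : ((2*(j+2+t+1))! : ℚ) = (2*(j:ℚ)+2*t+6) * ((2*j+2*t+5) * (2*(j+2+t))!) := by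
      have h1 : 2*(j+2+t+1) = (2*(j+2+t)+1)+1 := by ring
      rw [h1, Nat.factorial_succ, Nat.factorial_succ]
      push_cast; ring
    have e2 : ((j+2+t+1)! : ℚ) = ((j:ℚ)+t+3) * (j+2+t)! := by
      rw [fac_succ_q]; push_cast; ring
    have e3 : ((2*(j+1)+1)! : ℚ) = (2*(j:ℚ)+3) * ((2*j+2) * (2*j+1)!) := by
      have h1 : 2*(j+1)+1 = ((2*j+1)+1)+1 := by ring
      rw [h1, Nat.factorial_succ, Nat.factorial_succ]
      push_cast; ring
    have e4 : ((j+1)! : ℚ) = ((j:ℚ)+1) * j ! := by rw [fac_succ_q]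
    have e5 : ((t+1)! : ℚ) = ((t:ℚ)+1) * t ! := by rw [fac_succ_q]
    rw [e1, e2, e3, e4, e5]
    have f1 := fac_cast_ne (2*(j+2+t))
    have f2 := fac_cast_ne (j+2+t)
    have f3 := fac_cast_ne (2*j+1)
    have f4 := fac_cast_ne j
    have f5 := fac_cast_ne t
    have g1 : ((j:ℚ)+t+3) ≠ 0 := by positivity
    have g2 : (2*(j:ℚ)+3) ≠ 0 := by positivity
    have g3 : ((t:ℚ)+1) ≠ 0 := by positivity
    field_simp
    ring
  · -- top case: j + 1 = n, both sides equal 1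
    have hn : n = j + 1 := by omega
    subst hn
    rw [cc_of_lt (by omega), cc_of_lt (by omega), cc_of_ge (le_refl _)]
    have i1 : (j+1) + 1 - 1 - (j+1) = 0 := by omega
    have i2 : (j+1) - 1 - j = 0 := by omega
    rw [i1, i2]
    push_cast
    have e1 : ((2*(j+1+1))! : ℚ) = (2*(j:ℚ)+4) * (2*(j+1)+1)! := by
      have h1 : 2*(j+1+1) = (2*(j+1)+1)+1 := by ring
      rw [h1, Nat.factorial_succ]; push_cast; ring
    have e2 : ((j+1+1)! : ℚ) = ((j:ℚ)+2) * (j+1)! := by rw [fac_succ_q]; push_cast; ring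
    have e3 : ((2*(j+1))! : ℚ) = (2*(j:ℚ)+2) * (2*j+1)! := by
      have h1 : 2*(j+1) = (2*j+1)+1 := by ring
      rw [h1, Nat.factorial_succ]; push_cast; ring
    have e4 : ((j+1)! : ℚ) = ((j:ℚ)+1) * j ! := by rw [fac_succ_q]
    rw [e1, e2, e3]
    nth_rewrite 2 [e4]
    have f1 := fac_cast_ne (2*(j+1)+1)
    have f2 := fac_cast_ne (j+1)
    have f3 := fac_cast_ne (2*j+1)
    have f4 := fac_cast_ne j
    norm_num [Nat.factorial]
    field_simp
    ring

lemma key_id (n : ℕ) (x : ℚ) :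
    (∑ k ∈ range n, ((2*k).choose k : ℚ) * x^(n-1-k))
      = ∑ j ∈ range n, cc n j * (x-4)^j := by
  induction n generalizing x with
  | zero => simp
  | succ n ih =>
    have lhs : (∑ k ∈ range (n+1), ((2*k).choose k : ℚ) * x^(n+1-1-k))
        = x * (∑ k ∈ range n, ((2*k).choose k : ℚ) * x^(n-1-k)) + ((2*n).choose n : ℚ) := by
      rw [Finset.sum_range_succ]
      have h0 : n + 1 - 1 - n = 0 := by omega
      rw [h0, pow_zero, mul_one, Finset.mul_sum]
      congr 1
      apply Finset.sum_congr rfl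
      intro k hk
      have hk' : k < n := Finset.mem_range.mp hk
      have : n + 1 - 1 - k = (n - 1 - k) + 1 := by omega
      rw [this, pow_succ]
      ring
    rw [lhs, ih]
    -- now RHS side
    rw [Finset.sum_range_succ' (fun j => cc (n+1) j * (x-4)^j)]
    have : (∑ j ∈ range n, cc (n+1) (j+1) * (x-4)^(j+1))
        = ∑ j ∈ range n, (cc n j + 4 * cc n (j+1)) * (x-4)^(j+1) := by
      apply Finset.sum_congr rfl
      intro j hj
      rw [cc_rec n j (Finset.mem_range.mp hj)]
    rw [this, cc_rec0 n]
    have expand : ∑ j ∈ range n, (cc n j + 4 * cc n (j+1)) * (x-4)^(j+1)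
        = (x-4) * (∑ j ∈ range n, cc n j * (x-4)^j)
          + 4 * (∑ j ∈ range n, cc n (j+1) * (x-4)^(j+1)) := by
      rw [Finset.mul_sum, Finset.mul_sum, ← Finset.sum_add_distrib]
      apply Finset.sum_congr rfl
      intro j hj
      rw [pow_succ]
      ring
    rw [expand]
    have shift : (∑ j ∈ range n, cc n (j+1) * (x-4)^(j+1))
        = (∑ j ∈ range n, cc n j * (x-4)^j) - cc n 0 := by
      have := Finset.sum_range_succ' (fun j => cc n j * (x-4)^j) n
      rw [Finset.sum_range_succ, cc_of_ge (le_refl n)] at this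
      simp only [zero_mul, add_zero, pow_zero, mul_one] at this
      linarith [this]
    rw [shift]
    ring

lemma padicValNat_le_of_dvd' {p a b : ℕ} [Fact p.Prime] (h : a ∣ b) (hb : b ≠ 0) :
    padicValNat p a ≤ padicValNat p b :=
  (padicValNat_dvd_iff_le hb).mp (dvd_trans pow_padicValNat_dvd h)

lemma core_ineq (p n j : ℕ) [Fact p.Prime] (hp3 : 3 ≤ p) (hn : 0 < n) (hj : j < n) :
    padicValNat p n + padicValNat p (n !) + padicValNat p ((n - 1 - j)!)
      + padicValNat p ((2*j+1)!)
    ≤ padicValNat p ((2*n)!) + padicValNat p (j !) + j := by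
  have h1 : padicValNat p ((2*j+1)!) ≤ j := by
    have h := sub_one_mul_padicValNat_factorial (p := p) (2*j+1)
    have h2 : 2 * padicValNat p ((2*j+1)!) ≤ (p-1) * padicValNat p ((2*j+1)!) :=
      Nat.mul_le_mul_right _ (by omega)
    omega
  have h2 : padicValNat p ((n-1-j)!) ≤ padicValNat p ((n-1)!) :=
    padicValNat_le_of_dvd' (Nat.factorial_dvd_factorial (by omega)) (Nat.factorial_ne_zero _)
  have h3 : padicValNat p (n !) = padicValNat p n + padicValNat p ((n-1)!) := by
    conv_lhs => rw [← Nat.mul_factorial_pred hn.ne']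
    exact padicValNat.mul hn.ne' (Nat.factorial_ne_zero _)
  have h4 : padicValNat p (n !) + padicValNat p (n !) ≤ padicValNat p ((2*n)!) := by
    have hd : n ! * n ! ∣ (2*n)! := by
      refine ⟨(2*n).choose n, ?_⟩
      have := Nat.choose_mul_factorial_mul_factorial (show n ≤ 2*n by omega)
      rw [show 2*n - n = n by omega] at this
      rw [← this]; ring
    have := padicValNat_le_of_dvd' (p := p) hd (Nat.factorial_ne_zero _)
    rwa [padicValNat.mul (Nat.factorial_ne_zero _) (Nat.factorial_ne_zero _)] at this
  omega

lemma val_sum {p : ℕ} [hp : Fact p.Prime] (t : ℤ) (s : Finset ℕ) (f : ℕ → ℚ)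
    (h : ∀ i ∈ s, f i = 0 ∨ t ≤ padicValRat p (f i)) :
    (∑ i ∈ s, f i) = 0 ∨ t ≤ padicValRat p (∑ i ∈ s, f i) := by
  classical
  induction s using Finset.induction_on with
  | empty => simp
  | @insert a s ha ih =>
    rw [Finset.sum_insert ha]
    rcases h a (Finset.mem_insert_self _ _) with h1 | h1
    · rw [h1, zero_add]; exact ih fun i hi => h i (Finset.mem_insert_of_mem hi)
    rcases ih (fun i hi => h i (Finset.mem_insert_of_mem hi)) with h2 | h2
    · rw [h2, add_zero]; right; exact h1
    by_cases hz : f a + ∑ i ∈ s, f i = 0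
    · left; exact hz
    · right
      calc t ≤ min (padicValRat p (f a)) (padicValRat p (∑ i ∈ s, f i)) := le_min h1 h2
        _ ≤ _ := padicValRat.min_le_padicValRat_add hz

lemma cc_val (p n j : ℕ) [Fact p.Prime] (hp3 : 3 ≤ p) (hn : 0 < n) (hj : j < n) :
    (padicValNat p n : ℤ) ≤ padicValRat p (cc n j) + j := by
  have hnum : (((2*n)! * j ! : ℕ) : ℚ) ≠ 0 := by
    exact_mod_cast Nat.mul_ne_zero (Nat.factorial_ne_zero _) (Nat.factorial_ne_zero _)
  have hden : ((2 * n ! * (n - 1 - j)! * (2*j+1)! : ℕ) : ℚ) ≠ 0 := by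
    have : (2 * n ! * (n - 1 - j)! * (2*j+1)! : ℕ) ≠ 0 := by positivity
    exact_mod_cast this
  rw [cc_of_lt hj, padicValRat.div hnum hden, padicValRat.of_nat, padicValRat.of_nat]
  have e1 : padicValNat p ((2*n)! * j !) = padicValNat p ((2*n)!) + padicValNat p (j !) :=
    padicValNat.mul (Nat.factorial_ne_zero _) (Nat.factorial_ne_zero _)
  have e2 : padicValNat p (2 * n ! * (n - 1 - j)! * (2*j+1)!)
      = padicValNat p (2 * n !) + padicValNat p ((n - 1 - j)!) + padicValNat p ((2*j+1)!) := by
    rw [padicValNat.mul (by positivity) (Nat.factorial_ne_zero _),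
        padicValNat.mul (by positivity) (Nat.factorial_ne_zero _)]
  have e3 : padicValNat p (2 * n !) = padicValNat p (n !) := by
    rw [padicValNat.mul (by norm_num) (Nat.factorial_ne_zero _),
        padicValNat.eq_zero_of_not_dvd (fun hh => by have := Nat.le_of_dvd (by norm_num) hh; omega)]
    omega
  rw [e1, e2, e3]
  have := core_ineq p n j hp3 hn hj
  omega

theorem stmt_0 (m : ℤ) (n : ℕ) (hn : 0 < n) (p : ℕ) (hp : p.Prime) (hodd : Odd p)
    (hdvd : (p : ℤ) ∣ m - 4) :
    (∑ k ∈ Finset.range n, (Nat.choose (2 * k) k : ℚ) / (m : ℚ) ^ k) = 0 ∨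
      (padicValNat p n : ℤ) ≤
        padicValRat p (∑ k ∈ Finset.range n, (Nat.choose (2 * k) k : ℚ) / (m : ℚ) ^ k) := by
  haveI : Fact p.Prime := ⟨hp⟩
  have hp3 : 3 ≤ p := by
    obtain ⟨r, hr⟩ := hodd
    have := hp.two_le
    omega
  have hp4 : ¬ (p : ℤ) ∣ 4 := by
    intro h4
    have h4' : p ∣ 4 := by exact_mod_cast h4
    have hle := Nat.le_of_dvd (by norm_num) h4'
    interval_cases p
    · revert h4'; decide
    · exact absurd hp (by decide)
  have hm0 : m ≠ 0 := by
    rintro rfl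
    exact hp4 (by simpa using hdvd.neg_right)
  have hpm : ¬ (p : ℤ) ∣ m := by
    intro hm
    exact hp4 (by have := hm.sub hdvd; simpa using this)
  have hmq : (m : ℚ) ≠ 0 := Int.cast_ne_zero.mpr hm0
  set S := ∑ k ∈ Finset.range n, (Nat.choose (2 * k) k : ℚ) / (m : ℚ) ^ k with hS_def
  by_cases hS : S = 0
  · left; exact hS
  right
  have hident : S * (m : ℚ) ^ (n - 1) = ∑ j ∈ range n, cc n j * ((m : ℚ) - 4) ^ j := by
    rw [← key_id n (m : ℚ), hS_def, Finset.sum_mul]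
    apply Finset.sum_congr rfl
    intro k hk
    have hk' : k < n := Finset.mem_range.mp hk
    have hpow : (m : ℚ) ^ (n - 1) = (m : ℚ) ^ k * (m : ℚ) ^ (n - 1 - k) := by
      rw [← pow_add]; congr 1; omega
    rw [hpow, div_mul_eq_mul_div, mul_comm ((m:ℚ)^k) _, mul_div_assoc,
      mul_div_cancel_right₀ _ (pow_ne_zero _ hmq), mul_comm]
  -- valuation of each term
  have hterm : ∀ j ∈ range n, (cc n j * ((m : ℚ) - 4) ^ j = 0 ∨
      (padicValNat p n : ℤ) ≤ padicValRat p (cc n j * ((m : ℚ) - 4) ^ j)) := by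
    intro j hj
    have hj' : j < n := Finset.mem_range.mp hj
    by_cases hq : ((m : ℚ) - 4) = 0
    · rcases Nat.eq_zero_or_pos j with rfl | hjpos
      · right
        simpa using (by simpa using cc_val p n 0 hp3 hn hj' : (padicValNat p n : ℤ) ≤ padicValRat p (cc n 0))
      · left; rw [hq, zero_pow (by omega), mul_zero]
    · right
      have hcc : cc n j ≠ 0 := (cc_pos hj').ne'
      have hqpow : ((m : ℚ) - 4) ^ j ≠ 0 := pow_ne_zero _ hq
      rw [padicValRat.mul hcc hqpow, padicValRat.pow ((m : ℚ) - 4)]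
      have hq_int : ((m : ℚ) - 4) = ((m - 4 : ℤ) : ℚ) := by push_cast; ring
      have hm4 : m - 4 ≠ 0 := by
        intro h0
        rw [hq_int, h0] at hq
        exact hq (by norm_num)
      have hval1 : 1 ≤ padicValRat p ((m : ℚ) - 4) := by
        rw [hq_int, padicValRat.of_int]
        have hdvd' : p ∣ (m - 4).natAbs := by
          rw [← Int.natCast_dvd]
          exact hdvd
        have : 1 ≤ padicValNat p (m - 4).natAbs :=
          one_le_padicValNat_of_dvd (Int.natAbs_pos.mpr hm4).ne' hdvd'
        exact_mod_cast this
      have := cc_val p n j hp3 hn hj'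
      nlinarith [hval1, this, (by exact_mod_cast Nat.zero_le j : (0:ℤ) ≤ (j:ℤ))]
  have hsum := val_sum (p := p) (padicValNat p n : ℤ) (range n)
    (fun j => cc n j * ((m : ℚ) - 4) ^ j) hterm
  have hT : (∑ j ∈ range n, cc n j * ((m : ℚ) - 4) ^ j) ≠ 0 := by
    rw [← hident]
    exact mul_ne_zero hS (pow_ne_zero _ hmq)
  rcases hsum with h0 | hle
  · exact absurd h0 hT
  have hvm : padicValRat p ((m : ℚ) ^ (n - 1)) = 0 := by
    rw [padicValRat.pow (m : ℚ), padicValRat.of_int, padicValInt.eq_zero_of_not_dvd hpm]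
    ring
  have : padicValRat p S = padicValRat p (∑ j ∈ range n, cc n j * ((m : ℚ) - 4) ^ j) := by
    rw [← hident, padicValRat.mul hS (pow_ne_zero _ hmq), hvm, add_zero]
  rw [this]
  exact hle
end

section
/- Let m be an integer and n a positive integer, and let p be an odd prime dividing m-4. Then the p-adic valuation of the sum over k from 0 to n-1 of C(n-1,k)·(-1)^k·C(2k,k)/m^k is at least ν_p(n). -/
open Finset Polynomial


lemma coeff_one_sub_X_pow (n i : ℕ) :
    ((1 - Polynomial.X : Polynomial ℚ) ^ n).coeff i = (-1) ^ i * (n.choose i : ℚ) := by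
  have h : (1 - Polynomial.X : Polynomial ℚ) ^ n
      = ∑ k ∈ range (n+1), Polynomial.C ((-1)^k * (n.choose k : ℚ)) * Polynomial.X ^ k := by
    rw [sub_eq_add_neg, add_comm, add_pow]
    refine Finset.sum_congr rfl fun k hk => ?_
    rw [neg_pow]
    simp [Polynomial.C_mul, mul_comm, mul_assoc, mul_left_comm]
  rw [h, Polynomial.finset_sum_coeff]
  simp only [Polynomial.coeff_C_mul, Polynomial.coeff_X_pow]
  rw [Finset.sum_eq_single i]
  · by_cases hi : i ≤ n
    · simp
    · rw [Nat.choose_eq_zero_of_lt (by omega)]; simp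
  · intro b _ hb; simp [Ne.symm hb]
  · intro h'; simp only [Finset.mem_range, not_lt] at h'
    rw [Nat.choose_eq_zero_of_lt (by omega)]; simp

lemma lemE (M : ℕ) :
    ∑ k ∈ range (M+1), (M.choose k : ℚ) * (-1)^k * ((2*k).choose k : ℚ) * 4^(M-k)
      = ((2*M).choose M : ℚ) := by
  have hpoly : ((Polynomial.X + 1 : Polynomial ℚ))^(2*M)
      = ∑ k ∈ range (M+1),
          Polynomial.C ((M.choose k : ℚ) * 4^(M-k)) *
            (Polynomial.X^(M-k) * (1 - Polynomial.X)^(2*k)) := by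
    have h1 : ((Polynomial.X + 1 : Polynomial ℚ))^(2*M)
        = ((1 - Polynomial.X)^2 + 4*Polynomial.X)^M := by
      rw [show ((1 - Polynomial.X : Polynomial ℚ))^2 + 4*Polynomial.X
          = (Polynomial.X + 1)^2 by ring, ← pow_mul, mul_comm 2 M]
    rw [h1, add_pow]
    refine Finset.sum_congr rfl fun k hk => ?_
    rw [← pow_mul, mul_pow, mul_comm 2 k]
    have h4 : ((4 : Polynomial ℚ))^(M-k) = Polynomial.C ((4:ℚ)^(M-k)) := by
      rw [map_pow]; congr 1
    rw [h4, map_mul, ← Polynomial.C_eq_natCast]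
    ring
  have hc := congrArg (fun f => Polynomial.coeff f M) hpoly
  simp only [Polynomial.coeff_X_add_one_pow, Polynomial.finset_sum_coeff,
    Polynomial.coeff_C_mul] at hc
  rw [hc]
  refine Finset.sum_congr rfl fun k hk => ?_
  simp only [Finset.mem_range] at hk
  have hM : M = k + (M - k) := by omega
  have h2 : (Polynomial.X^(M-k) * (1 - Polynomial.X)^(2*k) : Polynomial ℚ).coeff M
      = ((1 - Polynomial.X : Polynomial ℚ)^(2*k)).coeff k := by
    have := Polynomial.coeff_X_pow_mul ((1 - Polynomial.X : Polynomial ℚ)^(2*k)) (M-k) k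
    rwa [← hM] at this
  rw [h2, coeff_one_sub_X_pow]
  ring

lemma trinom (N k j : ℕ) : N.choose k * (N-k).choose j = N.choose j * (N-j).choose k := by
  by_cases h : k + j ≤ N
  · have h1 := Nat.choose_mul (n := N) (k := k + j) (s := j) (Nat.le_add_left j k)
    have h2 := Nat.choose_mul (n := N) (k := k + j) (s := k) (Nat.le_add_right k j)
    rw [Nat.add_sub_cancel] at h1
    rw [Nat.add_sub_cancel_left] at h2
    have h3 : (k+j).choose k = (k+j).choose j := Nat.choose_symm_add
    calc N.choose k * (N-k).choose j = N.choose (k+j) * (k+j).choose k := h2.symm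
      _ = N.choose (k+j) * (k+j).choose j := by rw [h3]
      _ = N.choose j * (N-j).choose k := h1
  · rcases le_or_gt k N with hk | hk
    · rcases le_or_gt j N with hj | hj
      · rw [Nat.choose_eq_zero_of_lt (show N - k < j by omega),
          Nat.choose_eq_zero_of_lt (show N - j < k by omega)]
        ring
      · rw [Nat.choose_eq_zero_of_lt (show N < j by omega),
          Nat.choose_eq_zero_of_lt (show N - k < j by omega)]
        ring
    · rw [Nat.choose_eq_zero_of_lt (show N < k from hk),
          Nat.choose_eq_zero_of_lt (show N - j < k by omega)]
      ring

lemma lemF (N : ℕ) (x : ℚ) :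
    ∑ k ∈ range (N+1), (N.choose k : ℚ) * (-1)^k * ((2*k).choose k : ℚ) * x^(N-k)
      = ∑ j ∈ range (N+1), (N.choose j : ℚ) * ((2*(N-j)).choose (N-j) : ℚ) * (x-4)^j := by
  have hx : ∀ k, k ≤ N → x^(N-k)
      = ∑ j ∈ range (N+1), ((N-k).choose j : ℚ) * (x-4)^j * 4^(N-k-j) := by
    intro k hk
    have h1 : x^(N-k) = ((x-4) + 4)^(N-k) := by norm_num
    rw [h1, add_pow]
    rw [Finset.sum_subset (Finset.range_subset_range.mpr (by omega : N - k + 1 ≤ N + 1))]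
    · exact Finset.sum_congr rfl fun j hj => by push_cast; ring
    · intro j hj hj2
      simp only [Finset.mem_range, not_lt] at hj hj2
      rw [Nat.choose_eq_zero_of_lt (by omega)]
      simp
  calc ∑ k ∈ range (N+1), (N.choose k : ℚ) * (-1)^k * ((2*k).choose k : ℚ) * x^(N-k)
      = ∑ k ∈ range (N+1), ∑ j ∈ range (N+1),
          (N.choose k : ℚ) * (-1)^k * ((2*k).choose k : ℚ) *
            (((N-k).choose j : ℚ) * (x-4)^j * 4^(N-k-j)) := by
        refine Finset.sum_congr rfl fun k hk => ?_
        rw [hx k (by simpa using Nat.lt_succ_iff.mp (Finset.mem_range.mp hk)), Finset.mul_sum]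
    _ = ∑ j ∈ range (N+1), ∑ k ∈ range (N+1),
          (N.choose k : ℚ) * (-1)^k * ((2*k).choose k : ℚ) *
            (((N-k).choose j : ℚ) * (x-4)^j * 4^(N-k-j)) := Finset.sum_comm
    _ = ∑ j ∈ range (N+1), (N.choose j : ℚ) * ((2*(N-j)).choose (N-j) : ℚ) * (x-4)^j := by
        refine Finset.sum_congr rfl fun j hj => ?_
        simp only [Finset.mem_range] at hj
        have hjN : j ≤ N := by omega
        have step : ∀ k, (N.choose k : ℚ) * (-1)^k * ((2*k).choose k : ℚ) *
            (((N-k).choose j : ℚ) * (x-4)^j * 4^(N-k-j))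
            = (N.choose j : ℚ) * (x-4)^j *
              (((N-j).choose k : ℚ) * (-1)^k * ((2*k).choose k : ℚ) * 4^((N-j)-k)) := by
          intro k
          have ht : (N.choose k : ℚ) * ((N-k).choose j : ℚ)
              = (N.choose j : ℚ) * ((N-j).choose k : ℚ) := by
            exact_mod_cast congrArg (Nat.cast : ℕ → ℚ) (trinom N k j)
          have hsub : N - k - j = N - j - k := by omega
          rw [hsub]
          linear_combination ((-1:ℚ)^k * ((2*k).choose k : ℚ) * (x-4)^j * 4^((N-j)-k)) * ht
        rw [Finset.sum_congr rfl fun k _ => step k, ← Finset.mul_sum]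
        have hres : ∑ k ∈ range (N+1),
            (((N-j).choose k : ℚ) * (-1)^k * ((2*k).choose k : ℚ) * 4^((N-j)-k))
            = (((2*(N-j)).choose (N-j) : ℚ)) := by
          rw [← lemE (N-j)]
          rw [Finset.sum_subset (Finset.range_subset_range.mpr (by omega : N - j + 1 ≤ N + 1))]
          intro k hk hk2
          simp only [Finset.mem_range, not_lt] at hk hk2
          rw [Nat.choose_eq_zero_of_lt (by omega)]
          simp
        rw [hres]
        ring

lemma two_mul_add_one_le_three_pow (i : ℕ) : 2*i + 1 ≤ 3^i := by
  induction i with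
  | zero => norm_num
  | succ i ih => have : (3:ℕ)^(i+1) = 3 * 3^i := by ring
                 omega

lemma mod_key {p i n j e : ℕ} (hp : 0 < p) (hin : 1 ≤ i) (hie : i ≤ e)
    (hpe : p^e ∣ n) (hjn : j + 1 ≤ n) :
    (n - 1 - j) % p^i = p^i - 1 - j % p^i := by
  set M := p^i with hM
  have hM0 : 0 < M := Nat.pow_pos hp
  have hMn : M ∣ n := dvd_trans (pow_dvd_pow p hie) hpe
  obtain ⟨t, ht⟩ := hMn
  have hjd := Nat.div_add_mod j M
  set a := j / M with ha
  set b := j % M with hb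
  have hbM : b < M := Nat.mod_lt _ hM0
  have hta : a + 1 ≤ t := by
    by_contra hcon
    push_neg at hcon
    have : M * t ≤ M * a := Nat.mul_le_mul_left M (by omega)
    omega
  set c := t - (a+1) with hc
  have htc : t = a + 1 + c := by omega
  have hn' : n = M*a + M*c + M := by rw [ht, htc]; ring
  have key : n - 1 - j = M*c + (M - 1 - b) := by omega
  rw [key, Nat.mul_add_mod]
  exact Nat.mod_eq_of_lt (by omega)

lemma keyval {p : ℕ} (hp : p.Prime) (hodd : Odd p) {n e j : ℕ} (hn : 0 < n)
    (hpe : p^e ∣ n) (hj : j < e) :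
    p^(e-j) ∣ ((2*(n-1-j)).choose (n-1-j)) := by
  haveI : Fact p.Prime := ⟨hp⟩
  have hp3 : 3 ≤ p := by
    have h1 := hp.two_le
    have h2 := Nat.odd_iff.mp hodd
    omega
  have hen : e < n := by
    calc e < 3^e := Nat.lt_pow_self (by norm_num)
      _ ≤ p^e := Nat.pow_le_pow_left hp3 e
      _ ≤ n := Nat.le_of_dvd hn hpe
  set r := n - 1 - j with hr
  have hrr : r ≤ 2*r := by omega
  -- valuation via Kummer
  set b := max (e+1) (Nat.log p (2*r) + 1) with hbdef
  have hlogb : Nat.log p (2*r) < b := by omega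
  have hval := padicValNat_choose (p := p) hrr hlogb
  have h2rr : 2*r - r = r := by omega
  rw [h2rr] at hval
  -- the good set
  have hsub1 : (Finset.Ico 1 (e+1)).filter (fun i => p ^ i ≤ r % p ^ i + r % p ^ i)
      ⊆ (Finset.Ico 1 b).filter (fun i => p ^ i ≤ r % p ^ i + r % p ^ i) := by
    apply Finset.filter_subset_filter
    apply Finset.Ico_subset_Ico le_rfl
    omega
  have hbadsub : (Finset.Ico 1 (e+1)).filter (fun i => ¬ p ^ i ≤ r % p ^ i + r % p ^ i)
      ⊆ Finset.Ico 1 (j+1) := by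
    intro i hi
    simp only [Finset.mem_filter, Finset.mem_Ico, not_le] at hi
    obtain ⟨⟨hi1, hi2⟩, hbad⟩ := hi
    have hmod : r % p^i = p^i - 1 - j % p^i :=
      mod_key (by omega) hi1 (by omega) hpe (by omega)
    rw [hmod] at hbad
    have hpi : 0 < p^i := Nat.pow_pos (by omega)
    have hjm : j % p^i ≤ j := Nat.mod_le _ _
    have h3i : 2*i + 1 ≤ 3^i := two_mul_add_one_le_three_pow i
    have h3p : (3:ℕ)^i ≤ p^i := Nat.pow_le_pow_left hp3 i
    -- hbad : p^i - 1 - j%p^i + (p^i - 1 - j%p^i) < p^i  → p^i < 2*(j%p^i) + 2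
    have hjpi : j % p^i < p^i := Nat.mod_lt _ hpi
    simp only [Finset.mem_Ico]
    constructor
    · exact hi1
    · omega
  have hcard : e - j ≤ ((Finset.Ico 1 (e+1)).filter
      (fun i => p ^ i ≤ r % p ^ i + r % p ^ i)).card := by
    have htot := Finset.card_filter_add_card_filter_not
      (s := Finset.Ico 1 (e+1)) (p := fun i => p ^ i ≤ r % p ^ i + r % p ^ i)
    have hbc : ((Finset.Ico 1 (e+1)).filter
        (fun i => ¬ p ^ i ≤ r % p ^ i + r % p ^ i)).card ≤ j := by
      calc _ ≤ (Finset.Ico 1 (j+1)).card := Finset.card_le_card hbadsub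
        _ = j := by rw [Nat.card_Ico]; omega
    have hIc : (Finset.Ico 1 (e+1)).card = e := by rw [Nat.card_Ico]; omega
    omega
  have hle : e - j ≤ padicValNat p ((2*r).choose r) := by
    rw [hval]
    calc e - j ≤ _ := hcard
      _ ≤ _ := Finset.card_le_card hsub1
  exact (padicValNat_dvd_iff_le (Nat.choose_pos hrr).ne').mpr hle

theorem stmt_1 (m : ℤ) (n : ℕ) (hn : 0 < n) (p : ℕ) (hp : p.Prime) (hodd : Odd p)
    (hdvd : (p : ℤ) ∣ m - 4) :
    (∑ k ∈ Finset.range n,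
        ((n - 1).choose k : ℚ) * (-1) ^ k * (Nat.choose (2 * k) k : ℚ) / (m : ℚ) ^ k) = 0 ∨
      (padicValNat p n : ℤ) ≤
        padicValRat p (∑ k ∈ Finset.range n,
          ((n - 1).choose k : ℚ) * (-1) ^ k * (Nat.choose (2 * k) k : ℚ) / (m : ℚ) ^ k) := by
  haveI : Fact p.Prime := ⟨hp⟩
  set S := ∑ k ∈ Finset.range n,
      ((n - 1).choose k : ℚ) * (-1) ^ k * (Nat.choose (2 * k) k : ℚ) / (m : ℚ) ^ k with hSdef
  by_cases hS0 : S = 0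
  · left; exact hS0
  right
  have hpm : ¬ (p : ℤ) ∣ m := by
    intro h
    have h4 : (p : ℤ) ∣ 4 := by
      have := dvd_sub h hdvd
      simpa using this
    have h4' : p ∣ 4 := by exact_mod_cast h4
    have h4'' : p ∣ 2^2 := by norm_num; exact h4'
    have hpd : p ∣ 2 := hp.dvd_of_dvd_pow h4''
    have hp2 : p = 2 := (Nat.prime_dvd_prime_iff_eq hp Nat.prime_two).mp hpd
    have := Nat.odd_iff.mp hodd
    omega
  have hm0 : (m : ℚ) ≠ 0 := by
    intro h
    have : m = 0 := by exact_mod_cast h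
    exact hpm (this ▸ dvd_zero _)
  set N := n - 1 with hN
  set e := padicValNat p n with he
  -- the integer sum T
  set T : ℤ := ∑ j ∈ Finset.range n,
      (N.choose j : ℤ) * (((2*(N-j)).choose (N-j) : ℕ) : ℤ) * (m-4)^j with hT
  -- identity S = T / m^N
  have hid : S = (T : ℚ) / (m : ℚ)^N := by
    rw [eq_div_iff (pow_ne_zero _ hm0)]
    have hn1 : n = N + 1 := by omega
    calc S * (m:ℚ)^N
        = ∑ k ∈ range (N+1), (N.choose k : ℚ) * (-1)^k * ((2*k).choose k : ℚ) * (m:ℚ)^(N-k) := by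
          rw [hSdef, Finset.sum_mul, hn1]
          refine Finset.sum_congr rfl fun k hk => ?_
          simp only [Finset.mem_range] at hk
          have hkN : k ≤ N := by omega
          have : (m:ℚ)^N = (m:ℚ)^k * (m:ℚ)^(N-k) := by
            rw [← pow_add]; congr 1; omega
          rw [this]
          field_simp
      _ = ∑ j ∈ range (N+1), (N.choose j : ℚ) * ((2*(N-j)).choose (N-j) : ℚ) * ((m:ℚ)-4)^j :=
          lemF N m
      _ = (T : ℚ) := by
          rw [hT, hn1]
          push_cast
          ring
  have hT0 : T ≠ 0 := by
    intro h
    apply hS0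
    rw [hid, h]
    simp
  -- divisibility
  have hpen : p^e ∣ n := pow_padicValNat_dvd
  have hdvdT : (p : ℤ)^e ∣ T := by
    rw [hT]
    apply Finset.dvd_sum
    intro j hj
    by_cases hje : j < e
    · have h1 : (p:ℕ)^(e-j) ∣ ((2*(N-j)).choose (N-j)) := by
        have : N - j = n - 1 - j := by omega
        rw [this]
        exact keyval hp hodd hn hpen hje
      have h2 : (p:ℤ)^(e-j) ∣ (((2*(N-j)).choose (N-j) : ℕ) : ℤ) := by exact_mod_cast h1
      have h3 : (p:ℤ)^j ∣ (m-4)^j := pow_dvd_pow_of_dvd hdvd j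
      have h4 : (p:ℤ)^e = (p:ℤ)^(e-j) * (p:ℤ)^j := by rw [← pow_add]; congr 1; omega
      rw [h4]
      exact mul_dvd_mul (Dvd.dvd.mul_left h2 _) h3
    · have h3 : (p:ℤ)^e ∣ (m-4)^j := by
        calc (p:ℤ)^e ∣ (p:ℤ)^j := pow_dvd_pow _ (by omega)
          _ ∣ (m-4)^j := pow_dvd_pow_of_dvd hdvd j
      exact Dvd.dvd.mul_left h3 _
  -- valuation computation
  have hTQ : ((T : ℤ) : ℚ) ≠ 0 := Int.cast_ne_zero.mpr hT0
  have hval : padicValRat p S = padicValRat p (T : ℚ) - padicValRat p ((m:ℚ)^N) := by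
    rw [hid]
    exact padicValRat.div hTQ (pow_ne_zero _ hm0)
  have hvm : padicValRat p ((m:ℚ)^N) = 0 := by
    rw [padicValRat.pow (m:ℚ)]
    rw [padicValRat.of_int, padicValInt.eq_zero_of_not_dvd hpm]
    ring
  have hvT : (e : ℤ) ≤ padicValRat p (T : ℚ) := by
    rw [padicValRat.of_int]
    have := (padicValInt_dvd_iff (p := p) e T).mp hdvdT
    rcases this with h | h
    · exact absurd h hT0
    · exact_mod_cast h
  rw [hval, hvm]
  omega
end

section
/- Let m be an integer, n a positive integer, and p a prime with p > 3 dividing m-4. Then (1/n)·Σ_{k=0}^{n-1} C(2k,k)/m^k ≡ C(2n-1,n-1)/4^{n-1} (mod p^{ν_p(m-4)}), i.e., the p-adic valuation of the difference is at least ν_p(m-4). -/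
open Finset Nat

lemma five_pow_lt (j : ℕ) (hj : 2 ≤ j) : 2*j*(2*j+1) < 5^j := by
  induction j with
  | zero => omega
  | succ k ih =>
    rcases Nat.lt_or_ge k 2 with hk | hk
    · have hk1 : k = 1 := by omega
      subst hk1; norm_num
    · have h1 := ih hk
      calc 2*(k+1)*(2*(k+1)+1) ≤ 5*(2*k*(2*k+1)) := by nlinarith
        _ < 5 * 5^k := by omega
        _ = 5^(k+1) := by ring

lemma val_d_le {p : ℕ} (hp : p.Prime) (h5 : 5 ≤ p) (j : ℕ) (hj : 1 ≤ j) :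
    padicValNat p ((2*j+1) * (2*j).choose j) ≤ j - 1 := by
  haveI : Fact p.Prime := ⟨hp⟩
  have hc : (2*j).choose j ≠ 0 := (Nat.choose_pos (by omega)).ne'
  rw [padicValNat.mul (by omega) hc]
  rcases eq_or_lt_of_le hj with h1 | h2
  · -- j = 1
    have h3 : ¬ p ∣ 3 := fun h => by have := Nat.le_of_dvd (by norm_num) h; omega
    have h2' : ¬ p ∣ 2 := fun h => by have := Nat.le_of_dvd (by norm_num) h; omega
    rw [← h1]
    norm_num [show (2:ℕ).choose 1 = 2 from rfl,
      padicValNat.eq_zero_of_not_dvd h3, padicValNat.eq_zero_of_not_dvd h2']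
  · -- j ≥ 2
    by_contra hcon
    push_neg at hcon
    have hge : j ≤ padicValNat p (2*j+1) + padicValNat p ((2*j).choose j) := by omega
    have b1 : p ^ padicValNat p (2*j+1) ≤ 2*j+1 :=
      Nat.le_of_dvd (by omega) pow_padicValNat_dvd
    have b2 : p ^ padicValNat p ((2*j).choose j) ≤ 2*j := by
      have := Nat.pow_factorization_choose_le (p := p) (n := 2*j) (k := j) (by omega)
      rwa [Nat.factorization_def _ hp] at this
    have hle : p ^ j ≤ 2*j*(2*j+1) := by
      calc p ^ j ≤ p ^ (padicValNat p (2*j+1) + padicValNat p ((2*j).choose j)) :=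
            Nat.pow_le_pow_right (by omega) hge
        _ = p ^ padicValNat p (2*j+1) * p ^ padicValNat p ((2*j).choose j) := pow_add _ _ _
        _ ≤ (2*j+1) * (2*j) := Nat.mul_le_mul b1 b2
        _ = 2*j*(2*j+1) := Nat.mul_comm _ _
    have h5j : 5 ^ j ≤ p ^ j := Nat.pow_le_pow_left h5 j
    have := five_pow_lt j (by omega)
    omega

noncomputable def Vc (N j : ℕ) : ℚ :=
  ((N+1) * ((2*N+1).choose N) * (N.choose j) : ℚ) / (((2*j+1) * ((2*j).choose j) : ℕ) : ℚ)


lemma Vc_diag (N : ℕ) : Vc N N = 1 := by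
  unfold Vc
  rw [Nat.choose_self]
  have h1 : ((2*N+1).choose N : ℚ) = (2*N+1)! / (N ! * (N+1)!) := by
    rw [Nat.cast_choose ℚ (by omega), show 2*N+1 - N = N+1 from by omega]
  have h2 : ((2*N).choose N : ℚ) = (2*N)! / (N ! * N !) := by
    rw [Nat.cast_choose ℚ (by omega), show 2*N - N = N from by omega]
  have h3 : ((2*N+1)! : ℚ) = (2*N+1) * (2*N)! := by
    rw [show 2*N+1 = (2*N)+1 from rfl, Nat.factorial_succ]; push_cast; ring
  have h4 : ((N+1)! : ℚ) = (N+1) * N ! := by rw [Nat.factorial_succ]; push_cast; ring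
  have hN : (N ! : ℚ) ≠ 0 := by positivity
  have h2N : ((2*N)! : ℚ) ≠ 0 := by positivity
  push_cast [h1, h2, h3, h4]
  field_simp


lemma Vc_succ_rec (N j : ℕ) : Vc (N+1) (j+1) = 4 * Vc N (j+1) + Vc N j := by
  rcases Nat.lt_or_ge j N with hj | hj
  · -- generic case : j + 1 ≤ N
    have hjN : j + 1 ≤ N := hj
    have e1 : ((2*(N+1)+1).choose (N+1) : ℚ) = (2*N+3)! / ((N+1)! * (N+2)!) := by
      rw [show 2*(N+1)+1 = 2*N+3 from by ring, Nat.cast_choose ℚ (by omega),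
          show 2*N+3 - (N+1) = N+2 from by omega]
    have e2 : ((N+1).choose (j+1) : ℚ) = (N+1)! / ((j+1)! * ((N-j)!)) := by
      rw [Nat.cast_choose ℚ (by omega), show N+1 - (j+1) = N-j from by omega]
    have e3 : ((2*N+1).choose N : ℚ) = (2*N+1)! / (N ! * (N+1)!) := by
      rw [Nat.cast_choose ℚ (by omega), show 2*N+1 - N = N+1 from by omega]
    have e4 : (N.choose (j+1) : ℚ) = N ! / ((j+1)! * ((N-(j+1))!)) := by
      rw [Nat.cast_choose ℚ (by omega)]
    have e5 : (N.choose j : ℚ) = N ! / (j ! * ((N-j)!)) := by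
      rw [Nat.cast_choose ℚ (by omega)]
    have e6 : ((2*(j+1)).choose (j+1) : ℚ) = (2*j+2)! / ((j+1)! * (j+1)!) := by
      rw [show 2*(j+1) = 2*j+2 from by ring, Nat.cast_choose ℚ (by omega),
          show 2*j+2 - (j+1) = j+1 from by omega]
    have e7 : ((2*j).choose j : ℚ) = (2*j)! / (j ! * j !) := by
      rw [Nat.cast_choose ℚ (by omega), show 2*j - j = j from by omega]
    have f1 : ((2*N+3)! : ℚ) = (2*N+3) * ((2*N+2) * (2*N+1)!) := by
      rw [show 2*N+3 = (2*N+2)+1 from rfl, Nat.factorial_succ,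
          show 2*N+2 = (2*N+1)+1 from rfl, Nat.factorial_succ]
      push_cast; ring
    have f2 : ((N+2)! : ℚ) = (N+2) * ((N+1) * N !) := by
      rw [Nat.factorial_succ, Nat.factorial_succ]; push_cast; ring
    have f3 : ((N+1)! : ℚ) = (N+1) * N ! := by rw [Nat.factorial_succ]; push_cast; ring
    have hc : ((N-(j+1) : ℕ) : ℚ) = (N:ℚ) - j - 1 := by
      rw [Nat.cast_sub hjN]; push_cast; ring
    have f4 : ((N-j)! : ℚ) = ((N:ℚ)-(j:ℚ)) * ((N-(j+1))! : ℚ) := by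
      rw [show N - j = (N-(j+1))+1 from by omega, Nat.factorial_succ]
      push_cast
      rw [hc]; ring
    have f5 : ((2*j+2)! : ℚ) = (2*j+2) * ((2*j+1) * (2*j)!) := by
      rw [show 2*j+2 = (2*j+1)+1 from rfl, Nat.factorial_succ,
          show 2*j+1 = (2*j)+1 from rfl, Nat.factorial_succ]
      push_cast; ring
    have f6 : ((j+1)! : ℚ) = (j+1) * j ! := by rw [Nat.factorial_succ]; push_cast; ring
    have hNf : (N ! : ℚ) ≠ 0 := by positivity
    have h2N : ((2*N+1)! : ℚ) ≠ 0 := by positivity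
    have hjf : (j ! : ℚ) ≠ 0 := by positivity
    have h2j : ((2*j)! : ℚ) ≠ 0 := by positivity
    have hNj : (((N-(j+1))! : ℕ) : ℚ) ≠ 0 := by positivity
    have hNjq : ((N:ℚ) - j) ≠ 0 := by
      have h1 : (j:ℚ) + 1 ≤ N := by exact_mod_cast Nat.cast_le.mpr hjN
      intro h; rw [sub_eq_zero] at h; rw [h] at h1; linarith
    unfold Vc
    push_cast
    rw [e1, e2, e3, e4, e5, e6, e7, f1, f2, f3, f4, f5, f6]
    field_simp
    ring
  · rcases Nat.eq_or_lt_of_le hj with hEq | hlt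
    · -- j = N
      subst hEq
      rw [Vc_diag, Vc_diag,
          show Vc N (N+1) = 0 from by
            unfold Vc
            rw [show N.choose (N+1) = 0 from Nat.choose_eq_zero_of_lt (by omega)]
            simp]
      ring
    · -- j > N : everything vanishes
      unfold Vc
      rw [show (N+1).choose (j+1) = 0 from Nat.choose_eq_zero_of_lt (by omega),
          show N.choose (j+1) = 0 from Nat.choose_eq_zero_of_lt (by omega),
          show N.choose j = 0 from Nat.choose_eq_zero_of_lt (by omega)]
      simp

lemma Vc_zero_rec (N : ℕ) : Vc (N+1) 0 = 4 * Vc N 0 + ((2*N+2).choose (N+1) : ℚ) := by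
  unfold Vc
  simp only [Nat.choose_zero_right]
  have e1 : ((2*(N+1)+1).choose (N+1) : ℚ) = (2*N+3)! / ((N+1)! * (N+2)!) := by
    rw [show 2*(N+1)+1 = 2*N+3 from by ring, Nat.cast_choose ℚ (by omega),
        show 2*N+3 - (N+1) = N+2 from by omega]
  have e2 : ((2*N+1).choose N : ℚ) = (2*N+1)! / (N ! * (N+1)!) := by
    rw [Nat.cast_choose ℚ (by omega), show 2*N+1 - N = N+1 from by omega]
  have e3 : ((2*N+2).choose (N+1) : ℚ) = (2*N+2)! / ((N+1)! * (N+1)!) := by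
    rw [Nat.cast_choose ℚ (by omega), show 2*N+2 - (N+1) = N+1 from by omega]
  have f1 : ((2*N+3)! : ℚ) = (2*N+3) * ((2*N+2) * (2*N+1)!) := by
    rw [show 2*N+3 = (2*N+2)+1 from rfl, Nat.factorial_succ,
        show 2*N+2 = (2*N+1)+1 from rfl, Nat.factorial_succ]
    push_cast; ring
  have f2 : ((2*N+2)! : ℚ) = (2*N+2) * (2*N+1)! := by
    rw [show 2*N+2 = (2*N+1)+1 from rfl, Nat.factorial_succ]; push_cast; ring
  have f3 : ((N+2)! : ℚ) = (N+2) * ((N+1) * N !) := by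
    rw [Nat.factorial_succ, Nat.factorial_succ]; push_cast; ring
  have f4 : ((N+1)! : ℚ) = (N+1) * N ! := by rw [Nat.factorial_succ]; push_cast; ring
  have hN : (N ! : ℚ) ≠ 0 := by positivity
  have h2N : ((2*N+1)! : ℚ) ≠ 0 := by positivity
  rw [e1, e2, e3, f1, f2, f3, f4]
  push_cast
  field_simp
  ring

lemma keyID (N : ℕ) (q : ℚ) :
    ∑ k ∈ range (N+1), ((2*k).choose k : ℚ) * q^(N-k)
      = ∑ j ∈ range (N+1), Vc N j * (q-4)^j := by
  induction N generalizing q with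
  | zero => norm_num [Vc]
  | succ N ih =>
    have step1 : ∑ k ∈ range (N+1+1), ((2*k).choose k : ℚ) * q^(N+1-k)
        = q * ∑ k ∈ range (N+1), ((2*k).choose k : ℚ) * q^(N-k)
          + ((2*(N+1)).choose (N+1) : ℚ) := by
      rw [Finset.sum_range_succ]
      congr 1
      · rw [Finset.mul_sum]
        apply Finset.sum_congr rfl
        intro k hk
        have hk' : k ≤ N := Nat.lt_succ_iff.mp (Finset.mem_range.mp hk)
        rw [show N+1-k = (N-k)+1 from by omega, pow_succ]
        ring
      · simp [Nat.sub_self]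
    rw [step1, ih]
    have h0 : Vc N (N+1) = 0 := by
      unfold Vc
      rw [show N.choose (N+1) = 0 from Nat.choose_eq_zero_of_lt (by omega)]
      simp
    set x := q - 4 with hxdef
    have hq : q = 4 + x := by rw [hxdef]; ring
    have A : ∑ j ∈ range (N+2), Vc (N+1) j * x^j
        = 4 * (∑ j ∈ range (N+1), Vc N (j+1) * x^(j+1))
          + (∑ j ∈ range (N+1), Vc N j * x^(j+1))
          + (4 * Vc N 0 + ((2*N+2).choose (N+1) : ℚ)) := by
      rw [Finset.sum_range_succ']
      simp only [Vc_succ_rec, Vc_zero_rec, pow_zero, mul_one, add_mul,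
        Finset.sum_add_distrib, Finset.mul_sum, mul_assoc]
    have B : ∑ j ∈ range (N+1), Vc N j * x^j
        = (∑ j ∈ range (N+1), Vc N (j+1) * x^(j+1)) + Vc N 0 := by
      rw [Finset.sum_range_succ' (fun j => Vc N j * x^j) N,
          Finset.sum_range_succ (fun j => Vc N (j+1) * x^(j+1)) N, h0]
      simp
    have Cq : ∑ j ∈ range (N+1), Vc N j * x^(j+1)
        = x * ∑ j ∈ range (N+1), Vc N j * x^j := by
      rw [Finset.mul_sum]
      apply Finset.sum_congr rfl
      intro j _
      rw [pow_succ]; ring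
    rw [A, Cq, B, show ((2*(N+1)).choose (N+1) : ℚ) = ((2*N+2).choose (N+1) : ℚ) from by
      norm_num [show 2*(N+1) = 2*N+2 from by ring]]
    rw [hq]
    ring

lemma val_sum_ge {p : ℕ} [hp : Fact p.Prime] {e : ℤ} (s : Finset ℕ) (F : ℕ → ℚ)
    (h : ∀ i ∈ s, F i ≠ 0 → e ≤ padicValRat p (F i))
    (hs : ∑ i ∈ s, F i ≠ 0) : e ≤ padicValRat p (∑ i ∈ s, F i) := by
  classical
  induction s using Finset.induction_on with
  | empty => simp at hs
  | @insert a t ha ih =>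
    rw [Finset.sum_insert ha] at hs ⊢
    by_cases h1 : F a = 0
    · rw [h1, zero_add] at hs ⊢
      exact ih (fun i hi => h i (Finset.mem_insert_of_mem hi)) hs
    · by_cases h2 : ∑ i ∈ t, F i = 0
      · rw [h2, add_zero] at hs ⊢
        exact h a (Finset.mem_insert_self a t) h1
      · refine le_trans (le_min ?_ ?_) (padicValRat.min_le_padicValRat_add hs)
        · exact h a (Finset.mem_insert_self a t) h1
        · exact ih (fun i hi => h i (Finset.mem_insert_of_mem hi)) h2

theorem stmt_2 (m : ℤ) (n : ℕ) (hn : 0 < n) (p : ℕ) (hp : p.Prime) (h3 : 3 < p)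
    (hdvd : (p : ℤ) ∣ m - 4) :
    (1 / (n : ℚ)) * ∑ k ∈ Finset.range n, (Nat.choose (2 * k) k : ℚ) / (m : ℚ) ^ k
        = (Nat.choose (2 * n - 1) (n - 1) : ℚ) / 4 ^ (n - 1) ∨
      (padicValInt p (m - 4) : ℤ) ≤
        padicValRat p
          ((1 / (n : ℚ)) * ∑ k ∈ Finset.range n, (Nat.choose (2 * k) k : ℚ) / (m : ℚ) ^ k
            - (Nat.choose (2 * n - 1) (n - 1) : ℚ) / 4 ^ (n - 1)) := by
  obtain ⟨N, rfl⟩ : ∃ N, n = N + 1 := ⟨n - 1, by omega⟩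
  haveI : Fact p.Prime := ⟨hp⟩
  have hp5 : 5 ≤ p := by
    have h4 : p ≠ 4 := by rintro rfl; norm_num at hp
    omega
  rw [show 2 * (N+1) - 1 = 2*N+1 from by omega, show N + 1 - 1 = N from by omega]
  -- basic nonvanishing
  have hnd4 : ¬ (p:ℤ) ∣ 4 := by
    intro h
    have : p ∣ 4 := by exact_mod_cast h
    have := Nat.le_of_dvd (by norm_num) this
    omega
  have hpm : ¬ (p:ℤ) ∣ m := by
    intro h
    exact hnd4 (by simpa using dvd_sub h hdvd)
  have hm0 : m ≠ 0 := by
    rintro rfl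
    exact hnd4 (by simpa using hdvd.neg_right)
  have hmQ : (m:ℚ) ≠ 0 := Int.cast_ne_zero.mpr hm0
  have hMQ : (m:ℚ)^N ≠ 0 := pow_ne_zero _ hmQ
  have hcQ : ((N+1 : ℕ):ℚ) ≠ 0 := by positivity
  -- the main identity
  have main : (1 / ((N+1 : ℕ) : ℚ)) * ∑ k ∈ Finset.range (N+1), ((2*k).choose k : ℚ) / (m : ℚ) ^ k
      - (((2*N+1).choose N : ℕ) : ℚ) / 4 ^ N
    = ∑ j ∈ Finset.range (N+1),
        (((2*N+1).choose N : ℕ) : ℚ) * ((N.choose j : ℕ) : ℚ) * ((m - 4 : ℤ) : ℚ)^j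
          * (((((2*j+1) * (2*j).choose j : ℕ)) : ℚ)⁻¹ - ((4:ℚ)^j)⁻¹) / (m:ℚ)^N := by
    have ha : ∑ k ∈ range (N+1), ((2*k).choose k : ℚ) / (m:ℚ)^k
        = (∑ k ∈ range (N+1), ((2*k).choose k : ℚ) * (m:ℚ)^(N-k)) / (m:ℚ)^N := by
      rw [Finset.sum_div]
      refine Finset.sum_congr rfl fun k hk => ?_
      have hk' : k ≤ N := Nat.lt_succ_iff.mp (mem_range.mp hk)
      have hsplit : (m:ℚ)^N = (m:ℚ)^k * (m:ℚ)^(N-k) := by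
        rw [← pow_add]
        congr 1
        omega
      rw [hsplit, mul_div_mul_right _ _ (pow_ne_zero _ hmQ)]
    have hbin : (m:ℚ)^N = ∑ j ∈ range (N+1), ((m-4:ℤ):ℚ)^j * 4^(N-j) * (N.choose j : ℚ) := by
      have h := add_pow (((m-4:ℤ):ℚ)) 4 N
      rw [show ((m:ℚ)) = ((m-4:ℤ):ℚ) + 4 from by push_cast; ring, h]
    have hb : (((2*N+1).choose N : ℕ) : ℚ) / 4 ^ N
        = (∑ j ∈ range (N+1), (((2*N+1).choose N : ℕ) : ℚ) * (N.choose j : ℚ)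
            * ((m-4:ℤ):ℚ)^j * ((4:ℚ)^j)⁻¹) / (m:ℚ)^N := by
      rw [div_eq_div_iff (by positivity) hMQ]
      conv_lhs => rw [hbin]
      rw [Finset.mul_sum, Finset.sum_mul]
      refine Finset.sum_congr rfl fun j hj => ?_
      have hj' : j ≤ N := Nat.lt_succ_iff.mp (mem_range.mp hj)
      have hsplit : (4:ℚ)^N = 4^(N-j) * 4^j := by
        rw [← pow_add]
        congr 1
        omega
      rw [hsplit]
      have h4j : ((4:ℚ)^j) ≠ 0 := by positivity
      field_simp
    rw [ha, keyID N (m:ℚ), show ((m:ℚ) - 4) = ((m - 4 : ℤ):ℚ) from by push_cast; ring, hb]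
    rw [mul_div_assoc', div_sub_div_same, Finset.mul_sum, ← Finset.sum_sub_distrib, Finset.sum_div]
    refine Finset.sum_congr rfl fun j hj => ?_
    have hd : (((2*j+1) * ((2*j).choose j) : ℕ) : ℚ) ≠ 0 := by
      have : (2*j).choose j ≠ 0 := (Nat.choose_pos (by omega)).ne'
      positivity
    have h4j : ((4:ℚ)^j) ≠ 0 := by positivity
    congr 1
    simp only [Vc]
    have hc' : ((N:ℚ)+1) ≠ 0 := by positivity
    rw [show ((N+1:ℕ):ℚ) = (N:ℚ)+1 from by push_cast; ring]
    generalize hDq : (((2*j+1) * ((2*j).choose j) : ℕ) : ℚ) = D at hd ⊢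
    field_simp
  by_cases hST : (1 / ((N+1 : ℕ) : ℚ)) * ∑ k ∈ Finset.range (N+1), ((2*k).choose k : ℚ) / (m : ℚ) ^ k
      = (((2*N+1).choose N : ℕ) : ℚ) / 4 ^ N
  · exact Or.inl hST
  · right
    have hne : (1 / ((N+1 : ℕ) : ℚ)) * ∑ k ∈ Finset.range (N+1), ((2*k).choose k : ℚ) / (m : ℚ) ^ k
        - (((2*N+1).choose N : ℕ) : ℚ) / 4 ^ N ≠ 0 := sub_ne_zero.mpr hST
    rw [main] at hne ⊢
    refine val_sum_ge _ _ (fun j hj hG => ?_) hne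
    have hA : (((2*N+1).choose N : ℕ) : ℚ) ≠ 0 := by
      simp only [ne_eq, Nat.cast_eq_zero]
      exact (Nat.choose_pos (by omega)).ne'
    simp only [div_ne_zero_iff, mul_ne_zero_iff] at hG
    obtain ⟨⟨⟨⟨_, hB⟩, hT⟩, hBr⟩, -⟩ := hG
    have hj1 : 1 ≤ j := by
      rcases Nat.eq_zero_or_pos j with rfl | h
      · exfalso; apply hBr; norm_num
      · exact h
    have ht : (m - 4 : ℤ) ≠ 0 := by
      intro h
      rw [h] at hT
      simp [zero_pow (show j ≠ 0 by omega)] at hT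
    have htQ : ((m - 4 : ℤ) : ℚ) ≠ 0 := Int.cast_ne_zero.mpr ht
    have hdvdN : p ∣ (m - 4).natAbs := by
      have := Int.natAbs_dvd_natAbs.mpr hdvd
      simpa using this
    have e1 : 1 ≤ padicValInt p (m - 4) := by
      unfold padicValInt
      exact one_le_padicValNat_of_dvd (Int.natAbs_ne_zero.mpr ht) hdvdN
    have hdQ : (((2*j+1) * ((2*j).choose j) : ℕ) : ℚ) ≠ 0 := by
      have : (2*j).choose j ≠ 0 := (Nat.choose_pos (by omega)).ne'
      positivity
    have h4j : ((4:ℚ)^j) ≠ 0 := by positivity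
    -- valuations
    have vm : padicValRat p ((m : ℤ) : ℚ) = 0 := by
      rw [padicValRat.of_int, padicValInt.eq_zero_of_not_dvd hpm]
      simp
    have vM : padicValRat p ((m:ℚ)^N) = 0 := by
      rw [padicValRat.pow (m:ℚ), vm, mul_zero]
    have v4 : padicValRat p (4:ℚ) = 0 := by
      have h4' : ¬ p ∣ 4 := fun h => by have := Nat.le_of_dvd (by norm_num) h; omega
      rw [show (4:ℚ) = ((4:ℕ):ℚ) from by norm_num, padicValRat.of_nat,
          padicValNat.eq_zero_of_not_dvd h4']
      simp
    have vb : padicValRat p ((4:ℚ)^j) = 0 := by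
      rw [padicValRat.pow (4:ℚ), v4, mul_zero]
    have vT : padicValRat p (((m - 4 : ℤ):ℚ)^j) = j * (padicValInt p (m-4) : ℤ) := by
      rw [padicValRat.pow ((m - 4 : ℤ):ℚ), padicValRat.of_int]
    have vA : 0 ≤ padicValRat p (((2*N+1).choose N : ℕ) : ℚ) := by
      rw [padicValRat.of_nat]; positivity
    have vB : 0 ≤ padicValRat p ((N.choose j : ℕ) : ℚ) := by
      rw [padicValRat.of_nat]; positivity
    have vD : padicValRat p ((((2*j+1) * ((2*j).choose j) : ℕ)) : ℚ) ≤ (j:ℤ) - 1 := by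
      rw [padicValRat.of_nat]
      have := val_d_le hp hp5 j hj1
      omega
    have hba : ((((2*j+1) * ((2*j).choose j) : ℕ)) : ℚ)⁻¹ - ((4:ℚ)^j)⁻¹
        = ((4:ℚ)^j - (((2*j+1) * ((2*j).choose j) : ℕ) : ℚ))
            / ((((2*j+1) * ((2*j).choose j) : ℕ) : ℚ) * (4:ℚ)^j) := by
      rw [inv_eq_one_div, inv_eq_one_div, div_sub_div _ _ hdQ h4j, one_mul, mul_one]
    have hnum : (4:ℚ)^j - (((2*j+1) * ((2*j).choose j) : ℕ) : ℚ) ≠ 0 := by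
      intro h
      apply hBr
      rw [hba, h, zero_div]
    have hvnum : 0 ≤ padicValRat p ((4:ℚ)^j - (((2*j+1) * ((2*j).choose j) : ℕ) : ℚ)) := by
      have hcast : (4:ℚ)^j - (((2*j+1) * ((2*j).choose j) : ℕ) : ℚ)
          = (((4^j : ℤ) - (((2*j+1) * ((2*j).choose j) : ℕ) : ℤ) : ℤ) : ℚ) := by
        push_cast; ring
      rw [hcast, padicValRat.of_int]
      exact Int.natCast_nonneg _
    have vBr : -((j:ℤ) - 1) ≤ padicValRat p
        (((((2*j+1) * ((2*j).choose j) : ℕ)) : ℚ)⁻¹ - ((4:ℚ)^j)⁻¹) := by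
      rw [hba, padicValRat.div hnum (mul_ne_zero hdQ h4j), padicValRat.mul hdQ h4j, vb]
      linarith
    have hsplit : padicValRat p ((((2*N+1).choose N : ℕ) : ℚ) * ((N.choose j : ℕ) : ℚ)
          * ((m - 4 : ℤ) : ℚ)^j
          * (((((2*j+1) * (2*j).choose j : ℕ)) : ℚ)⁻¹ - ((4:ℚ)^j)⁻¹) / (m:ℚ)^N)
        = padicValRat p (((2*N+1).choose N : ℕ) : ℚ) + padicValRat p ((N.choose j : ℕ) : ℚ)
          + padicValRat p (((m - 4 : ℤ) : ℚ)^j)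
          + padicValRat p (((((2*j+1) * (2*j).choose j : ℕ)) : ℚ)⁻¹ - ((4:ℚ)^j)⁻¹)
          - padicValRat p ((m:ℚ)^N) := by
      rw [padicValRat.div (mul_ne_zero (mul_ne_zero (mul_ne_zero hA hB) (pow_ne_zero _ htQ)) hBr) hMQ,
          padicValRat.mul (mul_ne_zero (mul_ne_zero hA hB) (pow_ne_zero _ htQ)) hBr,
          padicValRat.mul (mul_ne_zero hA hB) (pow_ne_zero _ htQ),
          padicValRat.mul hA hB]
      try ring
    rw [hsplit, vM, vT]
    have e1' : (1:ℤ) ≤ (padicValInt p (m-4) : ℤ) := by exact_mod_cast e1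
    have hj1' : (1:ℤ) ≤ (j:ℤ) := by exact_mod_cast hj1
    have hprod : 0 ≤ ((j:ℤ) - 1) * ((padicValInt p (m-4) : ℤ) - 1) := by
      apply mul_nonneg <;> linarith
    nlinarith [vA, vB, vBr]
end

section
/- Let m be an integer, n a positive integer, and p a prime with p > 3 dividing m-4. Then (1/n)·Σ_{k=0}^{n-1} C(n-1,k)·(-1)^k·C(2k,k)/m^k ≡ C_{n-1}/4^{n-1} (mod p^{ν_p(m-4)}), where C_{n-1} = C(2n-2,n-1)/n is the (n-1)-st Catalan number. -/
open Finset

namespace Stmt3Aux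

noncomputable def cs (M : ℕ) : ℚ :=
  ∑ k ∈ range (M + 1), (M.choose k : ℚ) * (-1) ^ k * (catalan k : ℚ) * 4 ^ (M - k)

noncomputable def gs (M : ℕ) : ℚ :=
  ∑ k ∈ range (M + 1), (M.choose k : ℚ) * (-1) ^ k * ((2 * k).choose k : ℚ) * 4 ^ (M - k)

lemma helper1 (k : ℕ) : ((2 * k).choose k : ℚ) = (k + 1) * (catalan k : ℚ) := by
  rw [← Nat.centralBinom_eq_two_mul_choose, ← succ_mul_catalan_eq_centralBinom]
  push_cast; ring

lemma helper2 (k : ℕ) :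
    ((2 * (k + 1)).choose (k + 1) : ℚ) = 2 * (2 * k + 1) * (catalan k : ℚ) := by
  have h := Nat.succ_mul_centralBinom_succ k
  have h1 : ((k:ℚ) + 1) * ((2 * (k+1)).choose (k+1) : ℚ)
      = 2 * (2 * k + 1) * ((2 * k).choose k : ℚ) := by
    rw [← Nat.centralBinom_eq_two_mul_choose, ← Nat.centralBinom_eq_two_mul_choose]
    exact_mod_cast congrArg (Nat.cast : ℕ → ℚ) h
  have hk : ((k:ℚ) + 1) ≠ 0 := by positivity
  field_simp [helper1] at h1 ⊢
  rw [helper1 k] at h1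
  apply mul_left_cancel₀ hk
  linear_combination h1

lemma E1 (k : ℕ) :
    ((2 * (k + 1)).choose (k + 1) : ℚ) = 4 * ((2 * k).choose k : ℚ) - 2 * (catalan k : ℚ) := by
  rw [helper2, helper1]; ring

lemma R1 (M : ℕ) : gs (M + 1) = 2 * cs M := by
  have hsplit := Finset.sum_range_succ'
    (fun k => ((M + 1).choose k : ℚ) * (-1) ^ k * ((2 * k).choose k : ℚ) * 4 ^ (M + 1 - k)) (M + 1)
  simp only [Nat.add_sub_add_right] at hsplit
  have hPascal : ∀ i ∈ range (M + 1),
      ((M + 1).choose (i + 1) : ℚ) * (-1) ^ (i + 1) * ((2 * (i+1)).choose (i+1) : ℚ) * 4 ^ (M - i)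
      = (M.choose i : ℚ) * (-1) ^ (i+1) * ((2 * (i+1)).choose (i+1) : ℚ) * 4 ^ (M - i)
        + (M.choose (i+1) : ℚ) * (-1) ^ (i+1) * ((2 * (i+1)).choose (i+1) : ℚ) * 4 ^ (M - i) := by
    intro i _
    rw [Nat.choose_succ_succ]
    push_cast
    ring
  rw [Finset.sum_congr rfl hPascal, Finset.sum_add_distrib] at hsplit
  have hA : (∑ i ∈ range (M + 1),
        ((M.choose i : ℚ) * (-1) ^ (i+1) * ((2 * (i+1)).choose (i+1) : ℚ) * 4 ^ (M - i)))
      = -(4 * gs M) + 2 * cs M := by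
    have hterm : ∀ i ∈ range (M + 1),
        (M.choose i : ℚ) * (-1) ^ (i+1) * ((2 * (i+1)).choose (i+1) : ℚ) * 4 ^ (M - i)
        = -(4 * ((M.choose i : ℚ) * (-1) ^ i * ((2 * i).choose i : ℚ) * 4 ^ (M - i)))
          + 2 * ((M.choose i : ℚ) * (-1) ^ i * (catalan i : ℚ) * 4 ^ (M - i)) := by
      intro i _
      rw [E1]
      ring
    rw [Finset.sum_congr rfl hterm, Finset.sum_add_distrib, Finset.sum_neg_distrib,
      ← Finset.mul_sum, ← Finset.mul_sum, gs, cs]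
  -- the B-part: ∑ (M.choose (i+1)) ... + f 0 = 4 * gs M
  have key := Finset.sum_range_succ'
    (fun k => (M.choose k : ℚ) * (-1) ^ k * ((2 * k).choose k : ℚ) * 4 ^ (M + 1 - k)) (M + 1)
  have key2 := Finset.sum_range_succ
    (fun k => (M.choose k : ℚ) * (-1) ^ k * ((2 * k).choose k : ℚ) * 4 ^ (M + 1 - k)) (M + 1)
  simp only [Nat.add_sub_add_right] at key
  have hsum4 : (∑ k ∈ range (M + 1),
      (M.choose k : ℚ) * (-1) ^ k * ((2 * k).choose k : ℚ) * 4 ^ (M + 1 - k)) = 4 * gs M := by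
    rw [gs, Finset.mul_sum]
    refine Finset.sum_congr rfl fun k hk => ?_
    have hkM : k ≤ M := Nat.lt_succ_iff.mp (Finset.mem_range.mp hk)
    have h4 : M + 1 - k = (M - k) + 1 := by omega
    rw [h4]
    ring
  have hchoosetop : (M.choose (M + 1) : ℚ) = 0 := by
    rw [Nat.choose_eq_zero_of_lt (Nat.lt_succ_self M)]; simp
  rw [hsum4, hchoosetop] at key2
  simp only [zero_mul] at key2
  -- combine: key : ∑range(M+2) = ∑ B-terms + G 0 ; key2 : ∑range(M+2) = 4*gs M + 0
  have hB : (∑ i ∈ range (M + 1),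
      (M.choose (i+1) : ℚ) * (-1) ^ (i+1) * ((2 * (i+1)).choose (i+1) : ℚ) * 4 ^ (M - i))
      + ((M.choose 0 : ℚ) * (-1) ^ 0 * ((2 * 0).choose 0 : ℚ) * 4 ^ (M + 1 - 0)) = 4 * gs M := by
    rw [← key, key2]; ring
  have hf0 : (((M+1).choose 0 : ℚ) * (-1) ^ 0 * ((2 * 0).choose 0 : ℚ) * 4 ^ (M + 1 - 0))
      = ((M.choose 0 : ℚ) * (-1) ^ 0 * ((2 * 0).choose 0 : ℚ) * 4 ^ (M + 1 - 0)) := by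
    simp
  rw [gs, hsplit, hA, hf0]
  linarith [hB]
lemma choose_weight (M k : ℕ) : (M + 1).choose k * (M + 1 - k) = (M + 1) * M.choose k := by
  rw [← Nat.choose_succ_right_eq, ← Nat.add_one_mul_choose_eq]

lemma R2 (M : ℕ) : gs (M + 1) = (M + 2) * cs (M + 1) - 4 * (M + 1) * cs M := by
  have hterm : ∀ k ∈ range (M + 2),
      ((M + 1).choose k : ℚ) * (-1) ^ k * ((2 * k).choose k : ℚ) * 4 ^ (M + 1 - k)
      = (M + 2) * (((M + 1).choose k : ℚ) * (-1) ^ k * (catalan k : ℚ) * 4 ^ (M + 1 - k))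
        - (M + 1) * ((M.choose k : ℚ) * (-1) ^ k * (catalan k : ℚ) * 4 ^ (M + 1 - k)) := by
    intro k hk
    have hkM : k ≤ M + 1 := Nat.lt_succ_iff.mp (Finset.mem_range.mp hk)
    have hw : (((M + 1).choose k : ℚ)) * ((M : ℚ) + 1 - k) = (M + 1) * (M.choose k : ℚ) := by
      have := choose_weight M k
      have hcast : ((M + 1 - k : ℕ) : ℚ) = (M : ℚ) + 1 - k := by
        push_cast [Nat.cast_sub hkM]; ring
      calc (((M + 1).choose k : ℚ)) * ((M : ℚ) + 1 - k)
          = (((M + 1).choose k * (M + 1 - k) : ℕ) : ℚ) := by rw [Nat.cast_mul, hcast]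
        _ = (((M + 1) * M.choose k : ℕ) : ℚ) := by rw [this]
        _ = (M + 1) * (M.choose k : ℚ) := by push_cast; ring
    rw [helper1]
    linear_combination (-(-1:ℚ)^k * (catalan k : ℚ) * 4^(M+1-k)) * hw
  rw [gs, Finset.sum_congr rfl hterm, Finset.sum_sub_distrib, ← Finset.mul_sum, ← Finset.mul_sum]
  have h1 : (∑ k ∈ range (M + 2),
      ((M + 1).choose k : ℚ) * (-1) ^ k * (catalan k : ℚ) * 4 ^ (M + 1 - k)) = cs (M + 1) := rfl
  have h2 : (∑ k ∈ range (M + 2),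
      (M.choose k : ℚ) * (-1) ^ k * (catalan k : ℚ) * 4 ^ (M + 1 - k)) = 4 * cs M := by
    rw [Finset.sum_range_succ, Nat.choose_eq_zero_of_lt (Nat.lt_succ_self M)]
    simp only [Nat.cast_zero, zero_mul, add_zero]
    rw [cs, Finset.mul_sum]
    refine Finset.sum_congr rfl fun k hk => ?_
    have hkM : k ≤ M := Nat.lt_succ_iff.mp (Finset.mem_range.mp hk)
    have h4 : M + 1 - k = (M - k) + 1 := by omega
    rw [h4]; ring
  rw [h1, h2]
  ring

lemma cs_rec (M : ℕ) : ((M : ℚ) + 2) * cs (M + 1) = (4 * M + 6) * cs M := by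
  have h1 := R1 M
  have h2 := R2 M
  have : (2 : ℚ) * cs M = (M + 2) * cs (M + 1) - 4 * (M + 1) * cs M := by rw [← h1, h2]
  linarith [this]

lemma csB (M : ℕ) : cs M = (2 * M + 1) * (catalan M : ℚ) := by
  induction M with
  | zero => simp [cs]
  | succ M ih =>
      have hrec := cs_rec M
      rw [ih] at hrec
      have hcat : ((M : ℚ) + 2) * (catalan (M + 1) : ℚ) = 2 * (2 * M + 1) * (catalan M : ℚ) := by
        have h1 : ((M + 2 : ℕ) : ℚ) * (catalan (M + 1) : ℚ) = (Nat.centralBinom (M + 1) : ℚ) := by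
          exact_mod_cast congrArg (Nat.cast : ℕ → ℚ) (succ_mul_catalan_eq_centralBinom (M + 1))
        have h2 : (Nat.centralBinom (M + 1) : ℚ) = 2 * (2 * M + 1) * (catalan M : ℚ) := by
          rw [Nat.centralBinom_eq_two_mul_choose, helper2]
        rw [← h2, ← h1]; push_cast; ring
      have hM2 : ((M : ℚ) + 2) ≠ 0 := by positivity
      apply mul_left_cancel₀ hM2
      rw [hrec]
      push_cast
      linear_combination (-(2*(M:ℚ)+3)) * hcat

lemma gsC (M : ℕ) : gs M = ((2 * M).choose M : ℚ) := by
  cases M with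
  | zero => simp [gs]
  | succ M =>
      rw [R1, csB, helper2]
      ring

lemma trinom {N k j : ℕ} (h : k + j ≤ N) :
    N.choose k * (N - k).choose j = N.choose j * (N - j).choose k := by
  have h1 := Nat.choose_mul (n := N) (Nat.le_add_right k j)
  have h2 := Nat.choose_mul (n := N) (Nat.le_add_left j k)
  simp only [Nat.add_sub_cancel, Nat.add_sub_cancel_left] at h1 h2
  have hsymm : (k + j).choose k = (k + j).choose j := Nat.choose_symm_add
  rw [hsymm] at h1
  omega

lemma mainId (N : ℕ) (x : ℚ) :
    ∑ k ∈ range (N + 1), (N.choose k : ℚ) * (-1) ^ k * ((2 * k).choose k : ℚ) * x ^ (N - k)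
    = ∑ j ∈ range (N + 1),
        (N.choose j : ℚ) * ((2 * (N - j)).choose (N - j) : ℚ) * (x - 4) ^ j := by
  have hx : ∀ k, k ≤ N → x ^ (N - k)
      = ∑ j ∈ range (N + 1), ((N - k).choose j : ℚ) * (x - 4) ^ j * 4 ^ (N - k - j) := by
    intro k hk
    have hb := add_pow (x - 4) 4 (N - k)
    have hx4 : x - 4 + 4 = x := by ring
    rw [hx4] at hb
    rw [hb]
    have hsub : range (N - k + 1) ⊆ range (N + 1) := Finset.range_subset_range.mpr (by omega)
    have hvan : ∀ j ∈ range (N + 1), j ∉ range (N - k + 1) →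
        (x - 4) ^ j * 4 ^ (N - k - j) * ((N - k).choose j : ℚ) = 0 := by
      intro j _ hj
      have hlt : N - k < j := by
        by_contra hcon
        exact hj (Finset.mem_range.mpr (by omega))
      rw [Nat.choose_eq_zero_of_lt hlt]
      simp
    rw [Finset.sum_subset hsub hvan]
    refine Finset.sum_congr rfl fun j _ => ?_
    ring
  calc
    ∑ k ∈ range (N + 1), (N.choose k : ℚ) * (-1) ^ k * ((2 * k).choose k : ℚ) * x ^ (N - k)
        = ∑ k ∈ range (N + 1), ∑ j ∈ range (N + 1),
            (N.choose k : ℚ) * (-1) ^ k * ((2 * k).choose k : ℚ)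
              * (((N - k).choose j : ℚ) * (x - 4) ^ j * 4 ^ (N - k - j)) := by
        refine Finset.sum_congr rfl fun k hk => ?_
        rw [hx k (Nat.lt_succ_iff.mp (Finset.mem_range.mp hk)), Finset.mul_sum]
    _ = ∑ j ∈ range (N + 1), ∑ k ∈ range (N + 1),
            (N.choose k : ℚ) * (-1) ^ k * ((2 * k).choose k : ℚ)
              * (((N - k).choose j : ℚ) * (x - 4) ^ j * 4 ^ (N - k - j)) := Finset.sum_comm
    _ = ∑ j ∈ range (N + 1),
          (N.choose j : ℚ) * ((2 * (N - j)).choose (N - j) : ℚ) * (x - 4) ^ j := by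
        refine Finset.sum_congr rfl fun j hj => ?_
        have hjN : j ≤ N := Nat.lt_succ_iff.mp (Finset.mem_range.mp hj)
        have htrunc : ∑ k ∈ range (N + 1),
            (N.choose k : ℚ) * (-1) ^ k * ((2 * k).choose k : ℚ)
              * (((N - k).choose j : ℚ) * (x - 4) ^ j * 4 ^ (N - k - j))
            = ∑ k ∈ range (N - j + 1),
            (N.choose k : ℚ) * (-1) ^ k * ((2 * k).choose k : ℚ)
              * (((N - k).choose j : ℚ) * (x - 4) ^ j * 4 ^ (N - k - j)) := by
          refine (Finset.sum_subset (Finset.range_subset_range.mpr (by omega)) ?_).symm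
          intro k hk hknot
          have hk1 : k ≤ N := Nat.lt_succ_iff.mp (Finset.mem_range.mp hk)
          have hk2 : N - j < k := by
            by_contra hcon
            exact hknot (Finset.mem_range.mpr (by omega))
          rw [Nat.choose_eq_zero_of_lt (by omega : N - k < j)]
          simp
        rw [htrunc]
        have hterm : ∀ k ∈ range (N - j + 1),
            (N.choose k : ℚ) * (-1) ^ k * ((2 * k).choose k : ℚ)
              * (((N - k).choose j : ℚ) * (x - 4) ^ j * 4 ^ (N - k - j))
            = (N.choose j : ℚ) * (x - 4) ^ j
              * (((N - j).choose k : ℚ) * (-1) ^ k * ((2 * k).choose k : ℚ) * 4 ^ ((N - j) - k)) := by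
          intro k hk
          have hkNj : k ≤ N - j := Nat.lt_succ_iff.mp (Finset.mem_range.mp hk)
          have htri : (N.choose k : ℚ) * ((N - k).choose j : ℚ)
              = (N.choose j : ℚ) * ((N - j).choose k : ℚ) := by
            exact_mod_cast congrArg (Nat.cast : ℕ → ℚ) (trinom (by omega : k + j ≤ N))
          have hexp : N - k - j = N - j - k := by omega
          rw [hexp]
          linear_combination ((-1:ℚ))^k * ((2*k).choose k : ℚ) * (x-4)^j * 4^(N-j-k) * htri
        rw [Finset.sum_congr rfl hterm, ← Finset.mul_sum]
        have : (∑ k ∈ range (N - j + 1),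
            ((N - j).choose k : ℚ) * (-1) ^ k * ((2 * k).choose k : ℚ) * 4 ^ ((N - j) - k))
            = gs (N - j) := rfl
        rw [this, gsC]
        ring

lemma addle {e j : ℕ} (he : 1 ≤ e) (hj : 1 ≤ j) : e + j ≤ e * j + 1 := by
  obtain ⟨e', rfl⟩ : ∃ e', e = e' + 1 := ⟨e - 1, by omega⟩
  obtain ⟨j', rfl⟩ : ∃ j', j = j' + 1 := ⟨j - 1, by omega⟩
  have hprod : (e' + 1) * (j' + 1) = e' * j' + e' + j' + 1 := by ring
  omega

lemma pow5 (i : ℕ) : 4 * i + 1 ≤ 5 ^ i := by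
  induction i with
  | zero => norm_num
  | succ i ih =>
      have : 5 ^ (i + 1) = 5 * 5 ^ i := by ring
      omega

lemma KL {p : ℕ} (hp : p.Prime) (h5 : 5 ≤ p) {n j : ℕ} (hj1 : 1 ≤ j) (hjn : j + 1 ≤ n) :
    p ^ (padicValNat p n + 1 - j) ∣ (2 * (n - 1 - j)).choose (n - 1 - j) := by
  haveI := Fact.mk hp
  set a := padicValNat p n with ha
  rcases Nat.lt_or_ge a j with hcase | hcase
  · have h0 : a + 1 - j = 0 := by omega
    rw [h0, pow_zero]
    exact one_dvd _
  -- now j ≤ a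
  have hn0 : 0 < n := by omega
  have hpa : p ^ a ∣ n := pow_padicValNat_dvd
  have hpan : p ^ a ≤ n := Nat.le_of_dvd hn0 hpa
  have h5a : 5 ^ a ≤ p ^ a := Nat.pow_le_pow_left h5 a
  have ha1 : 1 ≤ a := le_trans hj1 hcase
  set M := n - 1 - j with hMdef
  have hM1 : 1 ≤ M := by
    have := pow5 a
    have hja : 4 * j + 1 ≤ 5 ^ a := le_trans (by omega) (le_trans (pow5 a) (Nat.pow_le_pow_right (by norm_num) le_rfl))
    omega
  have hM0 : 2 * M ≠ 0 := by omega
  set b := Nat.log p (2 * M) + 1 with hb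
  have hval := padicValNat_choose (p := p) (n := 2 * M) (k := M) (b := b)
    (by omega) (by omega)
  have h2MM : 2 * M - M = M := by omega
  rw [h2MM] at hval
  set T := (Finset.Ico 1 (a + 1)).filter (fun i => 2 * j + 2 ≤ p ^ i) with hT
  have hsub : T ⊆ (Finset.Ico 1 b).filter (fun i => p ^ i ≤ M % p ^ i + M % p ^ i) := by
    intro i hi
    rw [hT, Finset.mem_filter, Finset.mem_Ico] at hi
    obtain ⟨⟨hi1, hi2⟩, hicond⟩ := hi
    have hpin : p ^ i ∣ n := dvd_trans (pow_dvd_pow p (by omega : i ≤ a)) hpa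
    have hpile : p ^ i ≤ n := Nat.le_of_dvd hn0 hpin
    have h2M : p ^ i ≤ 2 * M := by omega
    have hilog : i ≤ Nat.log p (2 * M) :=
      (Nat.le_log_iff_pow_le (Nat.lt_of_lt_of_le (by norm_num) h5) hM0).mpr h2M
    obtain ⟨q, hq⟩ := hpin
    rcases q with _ | q'
    · omega
    have hq' : n = q' * p ^ i + p ^ i := by rw [hq]; ring
    have hMeq : M = (p ^ i - (j + 1)) + q' * p ^ i := by omega
    have hmod : M % p ^ i = p ^ i - (j + 1) := by
      rw [hMeq, Nat.add_mul_mod_self_right]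
      exact Nat.mod_eq_of_lt (by omega)
    rw [Finset.mem_filter, Finset.mem_Ico]
    refine ⟨⟨hi1, by omega⟩, ?_⟩
    rw [hmod]
    omega
  have hcardT : a + 1 - j ≤ T.card := by
    have hsplit := Finset.card_filter_add_card_filter_not
      (s := Finset.Ico 1 (a + 1)) (p := fun i => 2 * j + 2 ≤ p ^ i)
    rw [← hT] at hsplit
    have hneg : (Finset.Ico 1 (a + 1)).filter (fun i => ¬(2 * j + 2 ≤ p ^ i)) ⊆ Finset.Ico 1 j := by
      intro i hi
      rw [Finset.mem_filter, Finset.mem_Ico] at hi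
      obtain ⟨⟨hi1, _⟩, hicond⟩ := hi
      push_neg at hicond
      have h5i : 5 ^ i ≤ p ^ i := Nat.pow_le_pow_left h5 i
      have hp5 := pow5 i
      rw [Finset.mem_Ico]
      omega
    have hnegcard : ((Finset.Ico 1 (a + 1)).filter (fun i => ¬(2 * j + 2 ≤ p ^ i))).card ≤ j - 1 := by
      have := Finset.card_le_card hneg
      simpa [Nat.card_Ico] using this
    have hIcocard : (Finset.Ico 1 (a + 1)).card = a := by simp [Nat.card_Ico]
    omega
  have hvalge : a + 1 - j ≤ padicValNat p ((2 * M).choose M) := by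
    rw [hval]
    exact le_trans hcardT (Finset.card_le_card hsub)
  exact dvd_trans (pow_dvd_pow p hvalge) pow_padicValNat_dvd

end Stmt3Aux

open Stmt3Aux

theorem stmt_3 (m : ℤ) (n : ℕ) (hn : 0 < n) (p : ℕ) (hp : p.Prime) (h3 : 3 < p)
    (hdvd : (p : ℤ) ∣ m - 4) :
    (1 / (n : ℚ)) * ∑ k ∈ Finset.range n,
        ((n - 1).choose k : ℚ) * (-1) ^ k * (Nat.choose (2 * k) k : ℚ) / (m : ℚ) ^ k
        = (catalan (n - 1) : ℚ) / 4 ^ (n - 1) ∨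
      (padicValInt p (m - 4) : ℤ) ≤
        padicValRat p
          ((1 / (n : ℚ)) * ∑ k ∈ Finset.range n,
              ((n - 1).choose k : ℚ) * (-1) ^ k * (Nat.choose (2 * k) k : ℚ) / (m : ℚ) ^ k
            - (catalan (n - 1) : ℚ) / 4 ^ (n - 1)) := by
  haveI := Fact.mk hp
  obtain ⟨N, rfl⟩ : ∃ N, n = N + 1 := ⟨n - 1, (Nat.succ_pred_eq_of_pos hn).symm⟩
  simp only [Nat.add_sub_cancel]
  have h5 : 5 ≤ p := by
    have h4 : p ≠ 4 := by rintro rfl; norm_num at hp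
    omega
  -- p does not divide m, 4
  have hpm : ¬ (p : ℤ) ∣ m := by
    intro h
    have h4 : (p : ℤ) ∣ 4 := by
      have := dvd_sub h hdvd
      simpa using this
    have : (p : ℤ) ∣ ((4 : ℕ) : ℤ) := by exact_mod_cast h4
    have : p ∣ 4 := Int.ofNat_dvd.mp this
    have := Nat.le_of_dvd (by norm_num) this
    omega
  have hm0 : m ≠ 0 := by rintro rfl; exact hpm (dvd_zero _)
  have hmQ : (m : ℚ) ≠ 0 := Int.cast_ne_zero.mpr hm0
  set e := padicValInt p (m - 4) with he
  set a := padicValNat p (N + 1) with haa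
  -- the integer numerator
  set Dz : ℤ := ((N : ℤ) + 1) * (catalan N : ℤ) * (4 ^ N - m ^ N)
      + 4 ^ N * ∑ j ∈ Finset.Ico 1 (N + 1),
          ((N.choose j : ℤ) * (((2 * (N - j)).choose (N - j) : ℕ) : ℤ) * (m - 4) ^ j) with hDz
  set den : ℚ := (((N : ℚ)) + 1) * 4 ^ N * (m : ℚ) ^ N with hden
  have hdenne : den ≠ 0 := by
    rw [hden]
    positivity
  have hNQ : ((N : ℚ) + 1) ≠ 0 := by positivity
  -- key algebraic identity
  have heqD : ((1 / ((N + 1 : ℕ) : ℚ)) * ∑ k ∈ Finset.range (N + 1),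
        (N.choose k : ℚ) * (-1) ^ k * (Nat.choose (2 * k) k : ℚ) / (m : ℚ) ^ k
      - (catalan N : ℚ) / 4 ^ N) * den = (Dz : ℚ) := by
    have hSm : (∑ k ∈ Finset.range (N + 1),
          (N.choose k : ℚ) * (-1) ^ k * (Nat.choose (2 * k) k : ℚ) / (m : ℚ) ^ k) * (m : ℚ) ^ N
        = ∑ k ∈ Finset.range (N + 1),
          (N.choose k : ℚ) * (-1) ^ k * (Nat.choose (2 * k) k : ℚ) * (m : ℚ) ^ (N - k) := by
      rw [Finset.sum_mul]
      refine Finset.sum_congr rfl fun k hk => ?_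
      have hkN : k ≤ N := Nat.lt_succ_iff.mp (Finset.mem_range.mp hk)
      have hpow : (m : ℚ) ^ (N - k) * (m : ℚ) ^ k = (m : ℚ) ^ N := by
        rw [← pow_add]
        congr 1
        omega
      have hqd : (m : ℚ) ^ N / (m : ℚ) ^ k = (m : ℚ) ^ (N - k) := by
        rw [eq_comm, eq_div_iff (pow_ne_zero k hmQ), hpow]
      rw [div_mul_eq_mul_div, mul_div_assoc, hqd]
    have hW := mainId N (m : ℚ)
    have hsplitW : (∑ j ∈ Finset.range (N + 1),
          (N.choose j : ℚ) * ((2 * (N - j)).choose (N - j) : ℚ) * ((m : ℚ) - 4) ^ j)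
        = ((N : ℚ) + 1) * (catalan N : ℚ)
          + ∑ j ∈ Finset.Ico 1 (N + 1),
            (N.choose j : ℚ) * ((2 * (N - j)).choose (N - j) : ℚ) * ((m : ℚ) - 4) ^ j := by
      rw [Finset.range_eq_Ico, Finset.sum_eq_sum_Ico_succ_bot (by omega : 0 < N + 1)]
      simp only [Nat.choose_zero_right, Nat.cast_one, one_mul, pow_zero, mul_one, Nat.sub_zero]
      rw [helper1 N]
    -- assemble
    have expand : ((1 / ((N + 1 : ℕ) : ℚ)) * ∑ k ∈ Finset.range (N + 1),
          (N.choose k : ℚ) * (-1) ^ k * (Nat.choose (2 * k) k : ℚ) / (m : ℚ) ^ k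
        - (catalan N : ℚ) / 4 ^ N) * den
        = (∑ k ∈ Finset.range (N + 1),
          (N.choose k : ℚ) * (-1) ^ k * (Nat.choose (2 * k) k : ℚ) / (m : ℚ) ^ k) * (m : ℚ) ^ N
            * 4 ^ N
          - (catalan N : ℚ) * ((N : ℚ) + 1) * (m : ℚ) ^ N := by
      rw [hden]
      have h4 : (4 : ℚ) ^ N ≠ 0 := by positivity
      push_cast
      field_simp
    rw [expand, hSm, hW, hsplitW, hDz]
    push_cast
    ring
  by_cases heq0 : (1 / ((N + 1 : ℕ) : ℚ)) * ∑ k ∈ Finset.range (N + 1),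
        (N.choose k : ℚ) * (-1) ^ k * (Nat.choose (2 * k) k : ℚ) / (m : ℚ) ^ k
      = (catalan N : ℚ) / 4 ^ N
  · exact Or.inl heq0
  right
  have hdiffne : (1 / ((N + 1 : ℕ) : ℚ)) * ∑ k ∈ Finset.range (N + 1),
        (N.choose k : ℚ) * (-1) ^ k * (Nat.choose (2 * k) k : ℚ) / (m : ℚ) ^ k
      - (catalan N : ℚ) / 4 ^ N ≠ 0 := sub_ne_zero.mpr heq0
  have hDzQne : (Dz : ℚ) ≠ 0 := by
    rw [← heqD]
    exact mul_ne_zero hdiffne hdenne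
  have hDzne : Dz ≠ 0 := fun h => hDzQne (by rw [h]; simp)
  have hm4 : m ≠ 4 := by
    rintro rfl
    apply hDzne
    rw [hDz]
    have hsum0 : (∑ j ∈ Finset.Ico 1 (N + 1),
        ((N.choose j : ℤ) * (((2 * (N - j)).choose (N - j) : ℕ) : ℤ) * ((4 : ℤ) - 4) ^ j)) = 0 := by
      refine Finset.sum_eq_zero fun j hj => ?_
      have hj1 : 1 ≤ j := (Finset.mem_Ico.mp hj).1
      rw [sub_self, zero_pow (by omega)]
      ring
    rw [hsum0]
    ring
  have he1 : 1 ≤ e := by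
    rcases (padicValInt_dvd_iff 1 (m - 4)).mp (by simpa using hdvd) with h | h
    · exfalso; apply hm4; omega
    · exact h
  -- divisibility
  have heZ : (p : ℤ) ^ e ∣ (m - 4) := padicValInt_dvd (m - 4)
  have hpaZ : (p : ℤ) ^ a ∣ ((N : ℤ) + 1) := by
    have := pow_padicValNat_dvd (p := p) (n := N + 1)
    have := Int.ofNat_dvd.mpr this
    push_cast at this
    exact this
  have hdvdD : (p : ℤ) ^ (e + a) ∣ Dz := by
    rw [hDz]
    apply dvd_add
    · rw [pow_add, mul_comm ((p:ℤ)^e)]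
      apply mul_dvd_mul
      · exact dvd_mul_of_dvd_left hpaZ _
      · have h4m : ((4 : ℤ) - m) ∣ (4 : ℤ) ^ N - m ^ N := sub_dvd_pow_sub_pow 4 m N
        have : (p : ℤ) ^ e ∣ (4 : ℤ) - m := by
          have := heZ.neg_right
          simpa using this
        exact this.trans h4m
    · apply dvd_mul_of_dvd_right
      apply Finset.dvd_sum
      intro j hj
      obtain ⟨hj1, hj2⟩ := Finset.mem_Ico.mp hj
      have hejdvd : (p : ℤ) ^ (e * j) ∣ (m - 4) ^ j := by
        rw [pow_mul]
        exact pow_dvd_pow_of_dvd heZ j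
      rcases le_or_gt j a with hja | hja
      · -- use the Kummer bound
        have hKL := KL hp h5 hj1 (by omega : j + 1 ≤ N + 1)
        simp only [Nat.add_sub_cancel] at hKL
        have hKLZ : (p : ℤ) ^ (a + 1 - j) ∣ (((2 * (N - j)).choose (N - j) : ℕ) : ℤ) := by
          have := Int.ofNat_dvd.mpr hKL
          push_cast at this
          exact this
        have hle : e + a ≤ (a + 1 - j) + e * j := by
          have hejj : e + j ≤ e * j + 1 := addle he1 hj1
          omega
        refine dvd_trans (pow_dvd_pow (p : ℤ) hle) ?_
        rw [pow_add]
        exact mul_dvd_mul (hKLZ.mul_left _) hejdvd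
      · have hle : e + a ≤ e * j := by
          have h1 : e * (a + 1) ≤ e * j := Nat.mul_le_mul_left e (by omega)
          have h2 : e * (a + 1) = e * a + e := by ring
          have h3 : a ≤ e * a := Nat.le_mul_of_pos_left a (by omega)
          omega
        exact ((pow_dvd_pow (p : ℤ) hle).trans hejdvd).mul_left _
  have hvD : e + a ≤ padicValInt p Dz := by
    rcases (padicValInt_dvd_iff (e + a) Dz).mp hdvdD with h | h
    · exact absurd h hDzne
    · exact h
  -- final valuation computation
  have hgoal : (1 / ((N + 1 : ℕ) : ℚ)) * (∑ k ∈ Finset.range (N + 1),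
        (N.choose k : ℚ) * (-1) ^ k * (Nat.choose (2 * k) k : ℚ) / (m : ℚ) ^ k)
      - (catalan N : ℚ) / 4 ^ N = (Dz : ℚ) / den := by
    rw [eq_div_iff hdenne]
    exact heqD
  rw [hgoal, padicValRat.div (p := p) hDzQne hdenne]
  have hvDen : padicValRat p den = (a : ℤ) := by
    rw [hden]
    have hNne : ((N : ℚ) + 1) ≠ 0 := hNQ
    have h4ne : ((4 : ℚ) ^ N) ≠ 0 := by positivity
    have hmne : ((m : ℚ) ^ N) ≠ 0 := pow_ne_zero _ hmQ
    rw [padicValRat.mul (mul_ne_zero hNne h4ne) hmne, padicValRat.mul hNne h4ne]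
    have e1 : padicValRat p ((N : ℚ) + 1) = (a : ℤ) := by
      have : ((N : ℚ) + 1) = (((N + 1 : ℕ) : ℚ)) := by push_cast; ring
      rw [this, padicValRat.of_nat]
    have e2 : padicValRat p ((4 : ℚ) ^ N) = 0 := by
      have hc : ((4 : ℚ) ^ N) = (((4 ^ N : ℕ) : ℚ)) := by push_cast; ring
      rw [hc, padicValRat.of_nat]
      have : padicValNat p (4 ^ N) = 0 := by
        apply padicValNat.eq_zero_of_not_dvd
        intro hdvd4
        have := Nat.Prime.dvd_of_dvd_pow hp hdvd4
        have := Nat.le_of_dvd (by norm_num) this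
        omega
      rw [this]
      simp
    have e3 : padicValRat p ((m : ℚ) ^ N) = 0 := by
      have hc : ((m : ℚ) ^ N) = (((m ^ N : ℤ) : ℚ)) := by push_cast; ring
      rw [hc, padicValRat.of_int]
      have : padicValInt p (m ^ N) = 0 := by
        apply padicValInt.eq_zero_of_not_dvd
        intro hdvdm
        have hpZ : Prime (p : ℤ) := Int.prime_iff_natAbs_prime.mpr (by simpa using hp)
        exact hpm (hpZ.dvd_of_dvd_pow hdvdm)
      rw [this]
      simp
    rw [e1, e2, e3]
    ring
  rw [padicValRat.of_int, hvDen]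
  have : (e : ℤ) + (a : ℤ) ≤ (padicValInt p Dz : ℤ) := by exact_mod_cast hvD
  omega
end

section
/- Let m be an integer with 4m-1 ≠ 0 and set n = |4m-1|. Then n divides Σ_{k=0}^{n-1} C(2k,k)·m^k. -/
lemma aux_sum_id (n : ℕ) :
    ∑ k ∈ Finset.range (n + 1), (Nat.choose (2 * k) k : ℤ) * 4 ^ (n - k)
      = (2 * (n : ℤ) + 1) * Nat.centralBinom n := by
  induction n with
  | zero => simp [Nat.centralBinom]
  | succ n ih =>
    rw [Finset.sum_range_succ]
    have h1 : ∑ k ∈ Finset.range (n + 1), (Nat.choose (2 * k) k : ℤ) * 4 ^ (n + 1 - k)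
        = 4 * ∑ k ∈ Finset.range (n + 1), (Nat.choose (2 * k) k : ℤ) * 4 ^ (n - k) := by
      rw [Finset.mul_sum]
      refine Finset.sum_congr rfl fun k hk => ?_
      have hk' : k ≤ n := by
        have := Finset.mem_range.mp hk; omega
      have h2 : n + 1 - k = (n - k) + 1 := by omega
      rw [h2, pow_succ]; ring
    rw [h1, ih]
    have h2 : ((n : ℤ) + 1) * Nat.centralBinom (n + 1)
        = 2 * (2 * n + 1) * Nat.centralBinom n := by
      exact_mod_cast congrArg (Nat.cast : ℕ → ℤ) (Nat.succ_mul_centralBinom_succ n)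
    have h3 : (Nat.choose (2 * (n + 1)) (n + 1) : ℤ) = Nat.centralBinom (n + 1) := by
      simp [Nat.centralBinom]
    simp only [Nat.add_sub_cancel, Nat.sub_self, pow_zero, mul_one, h3]
    push_cast
    linear_combination (-2 : ℤ) * h2

lemma aux_zmod (N : ℕ) (hN : N ≠ 0) (x : ZMod N) (hx : 4 * x = 1) :
    ∑ k ∈ Finset.range N, (Nat.choose (2 * k) k : ZMod N) * x ^ k = 0 := by
  obtain ⟨n, rfl⟩ : ∃ n, N = n + 1 := ⟨N - 1, by omega⟩
  have hu : IsUnit (4 : ZMod (n + 1)) := IsUnit.of_mul_eq_one _ hx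
  have key : (4 : ZMod (n + 1)) ^ n
      * ∑ k ∈ Finset.range (n + 1), (Nat.choose (2 * k) k : ZMod (n + 1)) * x ^ k = 0 := by
    rw [Finset.mul_sum]
    have hcongr : ∀ k ∈ Finset.range (n + 1),
        (4 : ZMod (n + 1)) ^ n * ((Nat.choose (2 * k) k : ZMod (n + 1)) * x ^ k)
          = (Nat.choose (2 * k) k : ZMod (n + 1)) * 4 ^ (n - k) := by
      intro k hk
      have hk' : k ≤ n := by
        have := Finset.mem_range.mp hk; omega
      have h3 : (4 : ZMod (n + 1)) ^ k * x ^ k = 1 := by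
        rw [← mul_pow, hx, one_pow]
      have h2 : (4 : ZMod (n + 1)) ^ n = 4 ^ (n - k) * 4 ^ k := by
        rw [← pow_add]; congr 1; omega
      rw [h2]
      linear_combination ((Nat.choose (2 * k) k : ZMod (n + 1)) * 4 ^ (n - k)) * h3
    rw [Finset.sum_congr rfl hcongr]
    have hcast : (∑ k ∈ Finset.range (n + 1), (Nat.choose (2 * k) k : ZMod (n + 1)) * 4 ^ (n - k))
        = ((∑ k ∈ Finset.range (n + 1), (Nat.choose (2 * k) k : ℤ) * 4 ^ (n - k) : ℤ)
            : ZMod (n + 1)) := by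
      push_cast; rfl
    rw [hcast, aux_sum_id n]
    have hcb : (Nat.centralBinom n : ℤ) = (n + 1) * catalan n := by
      exact_mod_cast (succ_mul_catalan_eq_centralBinom n).symm
    rw [hcb]
    have hz : ((n + 1 : ℕ) : ZMod (n + 1)) = 0 := ZMod.natCast_self (n + 1)
    push_cast at hz ⊢
    rw [hz]
    ring
  exact ((hu.pow n).mul_right_eq_zero).mp key

theorem stmt_5 (m : ℤ) (hm : 4 * m - 1 ≠ 0) :
    ((4 * m - 1).natAbs : ℤ) ∣
      ∑ k ∈ Finset.range (4 * m - 1).natAbs, (Nat.choose (2 * k) k : ℤ) * m ^ k := by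
  set N := (4 * m - 1).natAbs with hNdef
  have hN : N ≠ 0 := Int.natAbs_ne_zero.mpr hm
  have hdvd : (N : ℤ) ∣ (4 * m - 1) := Int.natAbs_dvd.mpr dvd_rfl
  rw [← ZMod.intCast_zmod_eq_zero_iff_dvd]
  push_cast
  have hx : (4 : ZMod N) * ((m : ℤ) : ZMod N) = 1 := by
    have h0 : ((4 * m - 1 : ℤ) : ZMod N) = 0 :=
      (ZMod.intCast_zmod_eq_zero_iff_dvd _ _).mpr hdvd
    push_cast at h0
    linear_combination h0
  exact aux_zmod N hN _ hx
end

section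
/- Let p > 3 be a prime and a a positive integer. Then Σ_{k=0}^{p^a-1} C(2k,k)·((1-(-1)^{(p-1)/2}·p)/4)^k ≡ p^a (mod p^{a+1}). -/
open Finset Nat

/-- odd product `1 * 3 * ⋯ * (2n-1)` -/
def OP (n : ℕ) : ℕ := ∏ i ∈ Finset.range n, (2 * i + 1)

lemma OP_pos (n : ℕ) : 0 < OP n :=
  Finset.prod_pos (fun i _ => by omega)

lemma OP_mul_eq : ∀ n : ℕ, OP n * 2 ^ n * n ! = (2 * n)! := by
  intro n
  induction n with
  | zero => rfl
  | succ n ih =>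
    have h1 : (2 * (n + 1))! = (2 * n + 1 + 1) * ((2 * n + 1) * (2 * n)!) := by
      rw [show 2 * (n + 1) = 2 * n + 1 + 1 from by ring, factorial_succ, factorial_succ]
    rw [OP, prod_range_succ, ← OP, h1, ← ih, pow_succ, factorial_succ]
    ring

/-- factorial form of the double factorial / central binomial identity -/
lemma L1 (j : ℕ) : ∀ m : ℕ, (2 * j + 2 * m)! * j ! =
    (2 * j)! * (j + m)! * 2 ^ m * ∏ i ∈ Finset.range m, (2 * j + 1 + 2 * i) := by
  intro m
  induction m with
  | zero => simp
  | succ m ih =>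
    have h1 : (2 * j + 2 * (m + 1))! = (2 * j + 2 * m + 2) * ((2 * j + 2 * m + 1) * (2 * j + 2 * m)!) := by
      rw [show 2 * j + 2 * (m + 1) = (2 * j + 2 * m + 1) + 1 from by ring, factorial_succ,
        factorial_succ]
    rw [h1, prod_range_succ, pow_succ, show j + (m+1) = (j + m) + 1 from by omega, factorial_succ,
      show (2 * j + 2 * m + 2) * ((2 * j + 2 * m + 1) * (2 * j + 2 * m)!) * j !
        = ((2 * j + 2 * m)! * j !) * ((2 * j + 2 * m + 2) * (2 * j + 2 * m + 1)) from by ring,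
      ih]
    ring

lemma L2 (j m : ℕ) : (2 * (j + m)).choose (j + m) * (j + m).choose j * m ! =
    (2 * j).choose j * 2 ^ m * ∏ i ∈ Finset.range m, (2 * j + 1 + 2 * i) := by
  have hX : 0 < (j + m)! * (j ! * j !) :=
    mul_pos (factorial_pos _) (mul_pos (factorial_pos _) (factorial_pos _))
  apply Nat.eq_of_mul_eq_mul_right hX
  rw [show 2 * (j + m) = 2 * j + 2 * m from by ring]
  have h1 := Nat.choose_mul_factorial_mul_factorial (show j + m ≤ 2 * j + 2 * m from by omega)
  rw [show 2 * j + 2 * m - (j + m) = j + m from by omega] at h1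
  have h2 := Nat.choose_mul_factorial_mul_factorial (show j ≤ j + m from by omega)
  rw [show j + m - j = m from by omega] at h2
  have h3 := Nat.choose_mul_factorial_mul_factorial (show j ≤ 2 * j from by omega)
  rw [show 2 * j - j = j from by omega] at h3
  have hL1 := L1 j m
  zify at h1 h2 h3 hL1 ⊢
  linear_combination ((j ! : ℤ)) * h1 +
    (((2 * j + 2 * m).choose (j + m) : ℤ)) * ((j + m)! : ℤ) * ((j ! : ℤ)) * h2 -
    (((j + m)! : ℤ)) * 2 ^ m * (∏ x ∈ Finset.range m, (2 * (j:ℤ) + 1 + 2 * (x:ℤ))) * h3 + hL1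

lemma stepB (j : ℕ) : ∀ M : ℕ,
    (∑ k ∈ Finset.range (j + M + 1), (2 * k).choose k * k.choose j * 4 ^ (j + M - k)) * M ! =
    (2 * j).choose j * 2 ^ M * ∏ i ∈ Finset.range M, (2 * j + 3 + 2 * i) := by
  intro M
  induction M with
  | zero =>
    rw [Finset.sum_eq_single_of_mem j (by simp)]
    · simp
    · intro b hb hbj
      simp only [Finset.mem_range] at hb
      simp [Nat.choose_eq_zero_of_lt (show b < j from by omega)]
  | succ M ih =>
    have hsplit : (∑ k ∈ Finset.range (j + (M + 1) + 1),
        (2 * k).choose k * k.choose j * 4 ^ (j + (M + 1) - k)) =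
        4 * (∑ k ∈ Finset.range (j + M + 1), (2 * k).choose k * k.choose j * 4 ^ (j + M - k))
          + (2 * (j + M + 1)).choose (j + M + 1) * (j + M + 1).choose j := by
      rw [show j + (M + 1) + 1 = (j + M + 1) + 1 from by omega, Finset.sum_range_succ,
        Finset.mul_sum]
      congr 1
      · apply Finset.sum_congr rfl
        intro k hk
        simp only [Finset.mem_range] at hk
        rw [show j + (M + 1) - k = (j + M - k) + 1 from by omega, pow_succ]
        ring
      · rw [show j + (M + 1) - (j + M + 1) = 0 from by omega]
        ring
    have hT := L2 j (M + 1)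
    rw [show j + (M + 1) = (j + M) + 1 from by omega, Finset.prod_range_succ'] at hT
    have hprod : ∀ x : ℕ, 2 * j + 1 + 2 * (x + 1) = 2 * j + 3 + 2 * x := by intro x; omega
    simp only [hprod] at hT
    rw [factorial_succ] at hT
    rw [hsplit, Finset.prod_range_succ, pow_succ, factorial_succ]
    zify at ih hT ⊢
    linear_combination (4 * ((M:ℤ) + 1)) * ih + hT

/-- the key exact equation -/
lemma star (p a j : ℕ) (hj : j < p ^ a) :
    (∑ k ∈ Finset.range (p ^ a), (2 * k).choose k * k.choose j * 4 ^ (p ^ a - 1 - k))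
        * (p ^ a - 1 - j)! * OP (j + 1) =
    (2 * j).choose j * 2 ^ (p ^ a - 1 - j) * OP (p ^ a) := by
  set N := p ^ a
  set M := N - 1 - j with hM
  have hN : N = j + M + 1 := by omega
  have hB := stepB j M
  have hOP : OP N = OP (j + 1) * ∏ i ∈ Finset.range M, (2 * j + 3 + 2 * i) := by
    rw [show N = (j + 1) + M from by omega, OP, Finset.prod_range_add, ← OP]
    congr 1
    exact Finset.prod_congr rfl fun x _ => by ring
  have hexp : ∀ k, N - 1 - k = j + M - k := by intro k; omega
  calc (∑ k ∈ Finset.range N, (2 * k).choose k * k.choose j * 4 ^ (N - 1 - k)) * M ! * OP (j + 1)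
      = ((∑ k ∈ Finset.range (j + M + 1), (2 * k).choose k * k.choose j * 4 ^ (j + M - k)) * M !)
          * OP (j + 1) := by
        rw [← hN]
        congr 2
        apply Finset.sum_congr rfl
        intro k _
        rw [hexp k]
    _ = ((2 * j).choose j * 2 ^ M * ∏ i ∈ Finset.range M, (2 * j + 3 + 2 * i)) * OP (j + 1) := by
        rw [hB]
    _ = (2 * j).choose j * 2 ^ M * OP N := by rw [hOP]; ring

section Valuations

variable {p : ℕ} (hp : p.Prime) (h3 : 3 < p)

/-- helper: `(n * d - 1) / d = n - 1` -/
lemma div_pred_aux {n d : ℕ} (hn : 0 < n) (hd : 0 < d) : (n * d - 1) / d = n - 1 := by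
  have h1 : n * d = d * (n - 1) + d := by
    have hn' : n = (n - 1) + 1 := by omega
    calc n * d = ((n - 1) + 1) * d := by rw [← hn']
      _ = d * (n - 1) + d := by ring
  have h2 : n * d - 1 = (d - 1) + d * (n - 1) := by omega
  rw [h2, Nat.add_mul_div_left _ _ hd, Nat.div_eq_of_lt (by omega), zero_add]

include hp h3

lemma padic_two_pow (N : ℕ) : padicValNat p (2 ^ N) = 0 := by
  apply padicValNat.eq_zero_of_not_dvd
  intro h
  have := hp.dvd_of_dvd_pow h
  have := Nat.le_of_dvd (by norm_num) this
  omega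

lemma vOP_N (a : ℕ) :
    padicValNat p (OP (p ^ a)) = ∑ i ∈ Finset.Ico 1 (a + 1), p ^ (a - i) := by
  haveI : Fact p.Prime := ⟨hp⟩
  have hpow : (0:ℕ) < p ^ a := pow_pos (by omega) _
  have hmul := OP_mul_eq (p ^ a)
  have hv : padicValNat p (OP (p ^ a)) + padicValNat p ((p ^ a)!)
      = padicValNat p ((2 * p ^ a)!) := by
    rw [← hmul,
      padicValNat.mul (mul_ne_zero (OP_pos _).ne' (pow_pos (by norm_num : (0:ℕ) < 2) _).ne')
        (factorial_ne_zero _),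
      padicValNat.mul (OP_pos _).ne' (pow_pos (by norm_num : (0:ℕ) < 2) _).ne',
      padic_two_pow hp h3]
    omega
  have hlog2 : Nat.log p (2 * p ^ a) < a + 1 := by
    apply Nat.log_lt_of_lt_pow (by positivity)
    have h2p : 2 * p ^ a < p * p ^ a := (Nat.mul_lt_mul_right hpow).mpr (by omega)
    calc 2 * p ^ a < p * p ^ a := h2p
      _ = p ^ (a + 1) := by ring
  have hlog1 : Nat.log p (p ^ a) < a + 1 := by
    apply Nat.log_lt_of_lt_pow (by positivity)
    exact Nat.pow_lt_pow_right (by omega) (by omega)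
  have hleg2 : padicValNat p ((2 * p ^ a)!) = ∑ i ∈ Finset.Ico 1 (a + 1), 2 * p ^ (a - i) := by
    rw [padicValNat_factorial hlog2]
    apply Finset.sum_congr rfl
    intro i hi
    simp only [Finset.mem_Ico] at hi
    have hfac : p ^ a = p ^ (a - i) * p ^ i := by
      rw [← pow_add]; congr 1; omega
    rw [hfac, ← mul_assoc, Nat.mul_div_cancel _ (pow_pos (by omega) _)]
  have hleg1 : padicValNat p ((p ^ a)!) = ∑ i ∈ Finset.Ico 1 (a + 1), p ^ (a - i) := by
    rw [padicValNat_factorial hlog1]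
    apply Finset.sum_congr rfl
    intro i hi
    simp only [Finset.mem_Ico] at hi
    have hfac : p ^ a = p ^ (a - i) * p ^ i := by
      rw [← pow_add]; congr 1; omega
    rw [hfac, Nat.mul_div_cancel _ (pow_pos (by omega) _)]
  have h2 : ∑ i ∈ Finset.Ico 1 (a + 1), 2 * p ^ (a - i)
      = (∑ i ∈ Finset.Ico 1 (a + 1), p ^ (a - i)) + ∑ i ∈ Finset.Ico 1 (a + 1), p ^ (a - i) := by
    rw [← Finset.sum_add_distrib]
    exact Finset.sum_congr rfl fun i _ => by ring
  omega

lemma v_fac_pred (a : ℕ) (ha : 0 < a) :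
    padicValNat p ((p ^ a - 1)!) = ∑ i ∈ Finset.Ico 1 (a + 1), (p ^ (a - i) - 1) := by
  haveI : Fact p.Prime := ⟨hp⟩
  have hpow : (0:ℕ) < p ^ a := pow_pos (by omega) _
  have hlog : Nat.log p (p ^ a - 1) < a + 1 := by
    apply Nat.log_lt_of_lt_pow
    · have : 1 < p ^ a := by
        calc 1 < p := by omega
          _ = p ^ 1 := (pow_one p).symm
          _ ≤ p ^ a := Nat.pow_le_pow_right (by omega) ha
      omega
    · have : p ^ a < p ^ (a + 1) := Nat.pow_lt_pow_right (by omega) (by omega)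
      omega
  rw [padicValNat_factorial hlog]
  apply Finset.sum_congr rfl
  intro i hi
  simp only [Finset.mem_Ico] at hi
  have hfac : p ^ a = p ^ (a - i) * p ^ i := by
    rw [← pow_add]; congr 1; omega
  rw [hfac, div_pred_aux (pow_pos (by omega) _) (pow_pos (by omega) _)]

/-- `v(OP(p^a)) = v((p^a - 1)!) + a` -/
lemma vOP_eq_vfac_add (a : ℕ) (ha : 0 < a) :
    padicValNat p (OP (p ^ a)) = padicValNat p ((p ^ a - 1)!) + a := by
  rw [vOP_N hp h3, v_fac_pred hp h3 a ha]
  have hcard : (Finset.Ico 1 (a + 1)).card = a := by simp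
  have : ∑ i ∈ Finset.Ico 1 (a + 1), p ^ (a - i)
      = ∑ i ∈ Finset.Ico 1 (a + 1), ((p ^ (a - i) - 1) + 1) := by
    apply Finset.sum_congr rfl
    intro i _
    have : 0 < p ^ (a - i) := pow_pos (by omega) _
    omega
  rw [this, Finset.sum_add_distrib, Finset.sum_const, hcard, smul_eq_mul, mul_one]

/-- monotonicity of `padicValNat` on factorials -/
lemma v_fac_mono {m n : ℕ} (h : m ≤ n) :
    padicValNat p (m !) ≤ padicValNat p (n !) := by
  haveI : Fact p.Prime := ⟨hp⟩
  have hdvd : p ^ padicValNat p (m !) ∣ n ! :=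
    dvd_trans pow_padicValNat_dvd (factorial_dvd_factorial h)
  have := (Nat.Prime.pow_dvd_iff_le_factorization hp (factorial_ne_zero n)).mp hdvd
  rwa [Nat.factorization_def _ hp] at this

lemma v_fac_le (n : ℕ) : padicValNat p (n !) ≤ n / (p - 1) := by
  haveI : Fact p.Prime := ⟨hp⟩
  have h := sub_one_mul_padicValNat_factorial (p := p) n
  have h2 : (p - 1) * padicValNat p (n !) ≤ n := by
    rw [h]; exact Nat.sub_le _ _
  rw [Nat.le_div_iff_mul_le (by omega : 0 < p - 1), mul_comm]
  exact h2

lemma v_OP_small {j : ℕ} (hj1 : 1 ≤ j) : padicValNat p (OP (j + 1)) ≤ j - 1 := by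
  haveI : Fact p.Prime := ⟨hp⟩
  rcases eq_or_lt_of_le hj1 with h | h
  · -- j = 1 : OP 2 = 3
    have hOP2 : OP 2 = 3 := by norm_num [OP, Finset.prod_range_succ]
    rw [← h, hOP2]
    have : padicValNat p 3 = 0 := by
      apply padicValNat.eq_zero_of_not_dvd
      intro hdvd
      have := Nat.le_of_dvd (by norm_num) hdvd
      omega
    omega
  · -- j ≥ 2
    have hj2 : 2 ≤ j := h
    have hdvd : OP (j + 1) ∣ (2 * (j + 1))! := by
      refine ⟨2 ^ (j + 1) * (j + 1)!, ?_⟩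
      rw [← OP_mul_eq (j + 1)]; ring
    have h1 : padicValNat p (OP (j + 1)) ≤ padicValNat p ((2 * (j + 1))!) := by
      have hd : p ^ padicValNat p (OP (j + 1)) ∣ (2 * (j + 1))! :=
        dvd_trans pow_padicValNat_dvd hdvd
      have := (Nat.Prime.pow_dvd_iff_le_factorization hp (factorial_ne_zero _)).mp hd
      rwa [Nat.factorization_def _ hp] at this
    have h2 : padicValNat p ((2 * (j + 1))!) ≤ (2 * (j + 1)) / (p - 1) :=
      v_fac_le hp h3 _
    have h4 : p ≠ 4 := by rintro rfl; norm_num at hp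
    have hp5 : 5 ≤ p := by omega
    have h5 : (2 * (j + 1)) / (p - 1) ≤ (2 * (j + 1)) / 4 :=
      Nat.div_le_div_left (by omega) (by norm_num)
    have h6 : (2 * (j + 1)) / 4 ≤ j - 1 := by omega
    omega

end Valuations

section Main

variable {p : ℕ} (hp : p.Prime) (h3 : 3 < p)

include hp h3

/-- Step C: divisibility of the higher coefficients -/
lemma stepC {a j : ℕ} (ha : 0 < a) (hj1 : 1 ≤ j) (hj2 : j ≤ a) :
    p ^ (a + 1 - j) ∣
      ∑ k ∈ Finset.range (p ^ a), (2 * k).choose k * k.choose j * 4 ^ (p ^ a - 1 - k) := by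
  haveI : Fact p.Prime := ⟨hp⟩
  set N := p ^ a with hNdef
  set A := ∑ k ∈ Finset.range N, (2 * k).choose k * k.choose j * 4 ^ (N - 1 - k) with hA
  have hjN : j < N := by
    have : a < p ^ a := Nat.lt_pow_self (by omega : 1 < p)
    omega
  have hApos : 0 < A := by
    apply Finset.sum_pos' (fun i _ => Nat.zero_le _)
    refine ⟨j, Finset.mem_range.mpr hjN, ?_⟩
    have h1 : 0 < (2 * j).choose j := Nat.choose_pos (by omega)
    have h2 : 0 < j.choose j := Nat.choose_pos (le_refl _)
    positivity
  have hstar := star p a j hjN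
  -- take valuations
  have hv : padicValNat p A + padicValNat p ((N - 1 - j)!) + padicValNat p (OP (j + 1))
      = padicValNat p ((2 * j).choose j) + padicValNat p (OP N) := by
    have hL : padicValNat p (A * (N - 1 - j)! * OP (j + 1))
        = padicValNat p A + padicValNat p ((N - 1 - j)!) + padicValNat p (OP (j + 1)) := by
      rw [padicValNat.mul (mul_ne_zero hApos.ne' (factorial_ne_zero _)) (OP_pos _).ne',
        padicValNat.mul hApos.ne' (factorial_ne_zero _)]
    have hR : padicValNat p ((2 * j).choose j * 2 ^ (N - 1 - j) * OP N)
        = padicValNat p ((2 * j).choose j) + padicValNat p (OP N) := by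
      rw [padicValNat.mul (mul_ne_zero (Nat.choose_pos (by omega)).ne'
          (pow_pos (by norm_num : (0:ℕ) < 2) _).ne') (OP_pos _).ne',
        padicValNat.mul (Nat.choose_pos (by omega)).ne'
          (pow_pos (by norm_num : (0:ℕ) < 2) _).ne', padic_two_pow hp h3]
      omega
    rw [← hL, ← hR, hstar]
  have hmono : padicValNat p ((N - 1 - j)!) ≤ padicValNat p ((N - 1)!) :=
    v_fac_mono hp h3 (by omega)
  have hvfac := vOP_eq_vfac_add hp h3 a ha
  rw [← hNdef] at hvfac
  have hOPsmall := v_OP_small hp h3 hj1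
  have hle : a + 1 - j ≤ padicValNat p A := by omega
  exact (Nat.Prime.pow_dvd_iff_le_factorization hp hApos.ne').mpr
    (by rw [Nat.factorization_def _ hp]; exact hle)

lemma lucas_two (a : ℕ) : (2 * p ^ a).choose (p ^ a) ≡ 2 [MOD p] := by
  haveI : Fact p.Prime := ⟨hp⟩
  induction a with
  | zero =>
    simp
    rfl
  | succ n ih =>
    have h := Choose.choose_modEq_choose_mod_mul_choose_div_nat (p := p)
      (n := 2 * p ^ (n + 1)) (k := p ^ (n + 1))
    have e1 : 2 * p ^ (n + 1) = 2 * p ^ n * p := by ring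
    have e2 : p ^ (n + 1) = p ^ n * p := by ring
    rw [e1, e2, Nat.mul_mod_left, Nat.mul_mod_left, Nat.mul_div_cancel _ hp.pos,
      Nat.mul_div_cancel _ hp.pos] at h
    simp only [Nat.choose_self, one_mul] at h
    rw [e1, e2]
    exact h.trans ih

lemma stepD {a : ℕ} (ha : 0 < a) :
    (∑ k ∈ Finset.range (p ^ a), (2 * k).choose k * 4 ^ (p ^ a - 1 - k))
      ≡ 4 ^ (p ^ a - 1) * p ^ a [MOD p ^ (a + 1)] := by
  haveI : Fact p.Prime := ⟨hp⟩
  set N := p ^ a with hNdef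
  have hNpos : 0 < N := pow_pos (by omega) _
  have hstar := star p a 0 (by omega)
  have hOP1 : OP 1 = 1 := by norm_num [OP]
  rw [hOP1, mul_one] at hstar
  norm_num at hstar
  rw [← hNdef] at hstar
  set A := ∑ k ∈ Finset.range N, (2 * k).choose k * 4 ^ (N - 1 - k) with hA
  -- hstar : A * (N - 1)! = 2 ^ (N - 1) * OP N
  set v := ((N - 1)!).factorization p with hvdef
  set F := (OP N).factorization p with hFdef
  set u := ordCompl[p] ((N - 1)!) with hudef
  set w := ordCompl[p] (OP N) with hwdef
  have hu : p ^ v * u = (N - 1)! := Nat.ordProj_mul_ordCompl_eq_self _ p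
  have hw : p ^ F * w = OP N := Nat.ordProj_mul_ordCompl_eq_self _ p
  have hFv : F = v + a := by
    have h1 := vOP_eq_vfac_add hp h3 a ha
    rw [← hNdef] at h1
    rw [hFdef, hvdef, Nat.factorization_def _ hp, Nat.factorization_def _ hp]
    exact h1
  have hpu : ¬ p ∣ u := Nat.not_dvd_ordCompl hp (factorial_ne_zero _)
  have hAu : A * u = 2 ^ (N - 1) * (p ^ a * w) := by
    apply Nat.eq_of_mul_eq_mul_right (pow_pos hp.pos v)
    calc A * u * p ^ v = A * (p ^ v * u) := by ring
      _ = A * (N - 1)! := by rw [hu]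
      _ = 2 ^ (N - 1) * OP N := hstar
      _ = 2 ^ (N - 1) * (p ^ F * w) := by rw [hw]
      _ = 2 ^ (N - 1) * (p ^ a * w) * p ^ v := by
          rw [hFv, show v + a = a + v from by omega, pow_add]; ring
  have hCu : (2 * N).choose N * u = 2 ^ N * w := by
    have h1 := Nat.choose_mul_factorial_mul_factorial (show N ≤ 2 * N from by omega)
    rw [show 2 * N - N = N from by omega] at h1
    have h2 := OP_mul_eq N
    have h3' : (2 * N).choose N * N ! = OP N * 2 ^ N := by
      apply Nat.eq_of_mul_eq_mul_right (factorial_pos N)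
      calc (2 * N).choose N * N ! * N ! = (2 * N)! := h1
        _ = OP N * 2 ^ N * N ! := h2.symm
    have hNfac : N ! = p ^ a * (p ^ v * u) := by
      rw [hu, ← Nat.mul_factorial_pred hNpos.ne', hNdef]
    apply Nat.eq_of_mul_eq_mul_right (pow_pos hp.pos (a + v))
    calc (2 * N).choose N * u * p ^ (a + v)
        = (2 * N).choose N * (p ^ a * (p ^ v * u)) := by rw [pow_add]; ring
      _ = (2 * N).choose N * N ! := by rw [hNfac]
      _ = OP N * 2 ^ N := h3'
      _ = (p ^ F * w) * 2 ^ N := by rw [hw]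
      _ = 2 ^ N * w * p ^ (a + v) := by
          rw [hFv, show v + a = a + v from by omega, pow_add]; ring
  -- pass to ZMod p
  have h2ne : (2 : ZMod p) ≠ 0 := by
    intro h0
    have : ((2 : ℕ) : ZMod p) = 0 := by exact_mod_cast h0
    have := (ZMod.natCast_eq_zero_iff 2 p).mp this
    have := Nat.le_of_dvd (by norm_num) this
    omega
  have hmod : (2 : ZMod p) ^ N = 2 := by rw [hNdef]; exact ZMod.pow_card_pow _
  have hCmod : (((2 * N).choose N : ℕ) : ZMod p) = 2 := by
    have hl := lucas_two hp h3 a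
    rw [← hNdef] at hl
    have := (ZMod.natCast_eq_natCast_iff _ _ _).mpr hl
    simpa using this
  have huw : (u : ZMod p) = (w : ZMod p) := by
    have hcast : (((2 * N).choose N : ℕ) : ZMod p) * u = (2 : ZMod p) ^ N * w := by
      exact_mod_cast congrArg (fun x : ℕ => (x : ZMod p)) hCu
    rw [hCmod, hmod] at hcast
    exact mul_left_cancel₀ h2ne hcast
  have h2N1 : (2 : ZMod p) ^ (N - 1) = 1 := by
    apply mul_left_cancel₀ h2ne
    rw [mul_one]
    calc (2 : ZMod p) * 2 ^ (N - 1) = 2 ^ (N - 1) * 2 := by ring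
      _ = 2 ^ (N - 1 + 1) := (pow_succ 2 (N - 1)).symm
      _ = 2 ^ N := by rw [show N - 1 + 1 = N from by omega]
      _ = 2 := hmod
  have hkey : 2 ^ (N - 1) * w ≡ 4 ^ (N - 1) * u [MOD p] := by
    rw [← ZMod.natCast_eq_natCast_iff]
    push_cast
    rw [show (4 : ZMod p) = 2 ^ 2 from by norm_num, ← pow_mul,
      show 2 * (N - 1) = (N - 1) * 2 from by ring, pow_mul, h2N1, huw]
    simp
  have hmul := Nat.ModEq.mul_left' (c := p ^ a) hkey
  rw [show p ^ a * p = p ^ (a + 1) from (pow_succ p a).symm] at hmul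
  have e1 : p ^ a * (2 ^ (N - 1) * w) = A * u := by rw [hAu]; ring
  have e2 : p ^ a * (4 ^ (N - 1) * u) = (4 ^ (N - 1) * p ^ a) * u := by ring
  rw [e1, e2] at hmul
  have hco : Nat.gcd (p ^ (a + 1)) u = 1 := by
    have : Nat.Coprime p u := (Nat.Prime.coprime_iff_not_dvd hp).mpr hpu
    exact Nat.Coprime.pow_left _ this
  exact Nat.ModEq.cancel_right_of_coprime hco hmul

end Main

theorem stmt_6 (p : ℕ) (hp : p.Prime) (h3 : 3 < p) (a : ℕ) (ha : 0 < a) :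
    (∑ k ∈ Finset.range (p ^ a),
        (Nat.choose (2 * k) k : ℤ) * ((1 - (-1) ^ ((p - 1) / 2) * (p : ℤ)) / 4) ^ k)
      ≡ (p : ℤ) ^ a [ZMOD (p : ℤ) ^ (a + 1)] := by
  haveI : Fact p.Prime := ⟨hp⟩
  have hodd : p % 2 = 1 := Nat.odd_iff.mp (hp.odd_of_ne_two (by omega))
  have hmod4 : p % 4 = 1 ∨ p % 4 = 3 := by omega
  set ε : ℤ := (-1) ^ ((p - 1) / 2) with hε
  have hε1 : ε = 1 ∨ ε = -1 := by
    rcases Nat.even_or_odd ((p - 1) / 2) with h | h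
    · exact Or.inl (Even.neg_one_pow h)
    · exact Or.inr (Odd.neg_one_pow h)
  have hdvd : (4:ℤ) ∣ (1 - ε * p) := by
    rcases hmod4 with h | h
    · have heps : ε = 1 := Even.neg_one_pow (Nat.even_iff.mpr (by omega))
      rw [heps, one_mul]
      omega
    · have heps : ε = -1 := Odd.neg_one_pow (Nat.odd_iff.mpr (by omega))
      rw [heps]
      have : (1:ℤ) - -1 * p = 1 + p := by ring
      rw [this]
      omega
  set x : ℤ := (1 - ε * p) / 4 with hxdef
  have h4x : (4:ℤ) * x = 1 - ε * p := Int.mul_ediv_cancel' hdvd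
  set N := p ^ a with hN
  have hNpos : 0 < N := pow_pos (by omega) _
  have hNa : a < N := Nat.lt_pow_self (by omega : 1 < p)
  set S := ∑ k ∈ Finset.range N, ((2 * k).choose k : ℤ) * x ^ k with hS
  have key : (4:ℤ) ^ (N - 1) * S =
      ∑ j ∈ Finset.range N, (-(ε * p)) ^ j *
        ((∑ k ∈ Finset.range N, (2 * k).choose k * k.choose j * 4 ^ (N - 1 - k) : ℕ) : ℤ) := by
    rw [hS, Finset.mul_sum]
    calc ∑ k ∈ Finset.range N, (4:ℤ) ^ (N - 1) * (((2 * k).choose k : ℤ) * x ^ k)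
        = ∑ k ∈ Finset.range N, ∑ j ∈ Finset.range N,
            ((2 * k).choose k : ℤ) * ((-(ε * p)) ^ j * ((k.choose j : ℕ) : ℤ))
              * 4 ^ (N - 1 - k) := Finset.sum_congr rfl (fun k hk => ?_)
      _ = ∑ j ∈ Finset.range N, ∑ k ∈ Finset.range N,
            ((2 * k).choose k : ℤ) * ((-(ε * p)) ^ j * ((k.choose j : ℕ) : ℤ))
              * 4 ^ (N - 1 - k) := Finset.sum_comm
      _ = ∑ j ∈ Finset.range N, (-(ε * p)) ^ j *
            ((∑ k ∈ Finset.range N, (2 * k).choose k * k.choose j * 4 ^ (N - 1 - k) : ℕ) : ℤ) := by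
          apply Finset.sum_congr rfl
          intro j _
          rw [Nat.cast_sum, Finset.mul_sum]
          apply Finset.sum_congr rfl
          intro k _
          push_cast
          ring
    · simp only [Finset.mem_range] at hk
      have e2 : (4:ℤ) ^ (N - 1) = 4 ^ k * 4 ^ (N - 1 - k) := by
        rw [← pow_add]; congr 1; omega
      have e4 : ((1:ℤ) - ε * p) ^ k
          = ∑ j ∈ Finset.range N, (-(ε * p)) ^ j * ((k.choose j : ℕ) : ℤ) := by
        rw [show (1:ℤ) - ε * p = (-(ε * p)) + 1 from by ring, add_pow]
        simp only [one_pow, mul_one]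
        apply Finset.sum_subset (Finset.range_subset_range.mpr (by omega : k + 1 ≤ N))
        intro j _ hjk
        simp only [Finset.mem_range, not_lt] at hjk
        rw [Nat.choose_eq_zero_of_lt (by omega)]
        simp
      calc (4:ℤ) ^ (N - 1) * (((2 * k).choose k : ℤ) * x ^ k)
          = ((2 * k).choose k : ℤ) * (4 * x) ^ k * 4 ^ (N - 1 - k) := by
            rw [mul_pow, e2]; ring
        _ = ((2 * k).choose k : ℤ) * ((1 - ε * p) ^ k) * 4 ^ (N - 1 - k) := by rw [h4x]
        _ = ((2 * k).choose k : ℤ) *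
              (∑ j ∈ Finset.range N, (-(ε * p)) ^ j * ((k.choose j : ℕ) : ℤ)) *
              4 ^ (N - 1 - k) := by rw [e4]
        _ = ∑ j ∈ Finset.range N,
              ((2 * k).choose k : ℤ) * ((-(ε * p)) ^ j * ((k.choose j : ℕ) : ℤ))
                * 4 ^ (N - 1 - k) := by
            rw [Finset.mul_sum, Finset.sum_mul]
  -- the tail is divisible
  have hC : ∀ j ∈ Finset.Ico 1 N, ((p:ℤ) ^ (a + 1)) ∣ (-(ε * p)) ^ j *
      ((∑ k ∈ Finset.range N, (2 * k).choose k * k.choose j * 4 ^ (N - 1 - k) : ℕ) : ℤ) := by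
    intro j hj
    simp only [Finset.mem_Ico] at hj
    have hfac : (-(ε * (p:ℤ))) ^ j = (-ε) ^ j * (p:ℤ) ^ j := by
      rw [show -(ε * (p:ℤ)) = (-ε) * p from by ring, mul_pow]
    rw [hfac, mul_assoc]
    rcases le_or_gt j a with hja | hja
    · have hd := stepC hp h3 ha hj.1 hja
      rw [← hN] at hd
      have hdz : ((p:ℤ)) ^ (a + 1 - j) ∣
          ((∑ k ∈ Finset.range N, (2 * k).choose k * k.choose j * 4 ^ (N - 1 - k) : ℕ) : ℤ) := by
        exact_mod_cast Int.natCast_dvd_natCast.mpr hd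
      have hsplit : ((p:ℤ)) ^ (a + 1) = (p:ℤ) ^ j * (p:ℤ) ^ (a + 1 - j) := by
        rw [← pow_add]; congr 1; omega
      rw [hsplit]
      exact Dvd.dvd.mul_left (mul_dvd_mul (dvd_refl _) hdz) _
    · exact Dvd.dvd.mul_left (Dvd.dvd.mul_right (pow_dvd_pow _ (by omega)) _) _
  have hmodA : (4:ℤ) ^ (N - 1) * S ≡
      ((∑ k ∈ Finset.range N, (2 * k).choose k * 4 ^ (N - 1 - k) : ℕ) : ℤ)
        [ZMOD (p:ℤ) ^ (a + 1)] := by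
    have hsplit : ∀ f : ℕ → ℤ, ∑ j ∈ Finset.range N, f j = f 0 + ∑ j ∈ Finset.Ico 1 N, f j := by
      intro f
      rw [Finset.range_eq_Ico]
      exact Finset.sum_eq_sum_Ico_succ_bot hNpos f
    rw [key, hsplit]
    have htail : ((p:ℤ) ^ (a + 1)) ∣ ∑ j ∈ Finset.Ico 1 N, (-(ε * p)) ^ j *
        ((∑ k ∈ Finset.range N, (2 * k).choose k * k.choose j * 4 ^ (N - 1 - k) : ℕ) : ℤ) :=
      Finset.dvd_sum hC
    have h0 : (-(ε * (p:ℤ))) ^ 0 *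
        ((∑ k ∈ Finset.range N, (2 * k).choose k * k.choose 0 * 4 ^ (N - 1 - k) : ℕ) : ℤ)
        = ((∑ k ∈ Finset.range N, (2 * k).choose k * 4 ^ (N - 1 - k) : ℕ) : ℤ) := by
      rw [pow_zero, one_mul]
      norm_num
    rw [h0]
    have := Int.ModEq.add_left
      ((∑ k ∈ Finset.range N, (2 * k).choose k * 4 ^ (N - 1 - k) : ℕ) : ℤ)
      ((Int.modEq_zero_iff_dvd.mpr htail))
    simpa using this
  have hD := stepD hp h3 (a := a) ha
  rw [← hN] at hD
  have hDz : ((∑ k ∈ Finset.range N, (2 * k).choose k * 4 ^ (N - 1 - k) : ℕ) : ℤ) ≡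
      (((4 ^ (N - 1) * p ^ a : ℕ)) : ℤ) [ZMOD ((p ^ (a + 1) : ℕ) : ℤ)] :=
    Int.natCast_modEq_iff.mpr hD
  have hDz' : ((∑ k ∈ Finset.range N, (2 * k).choose k * 4 ^ (N - 1 - k) : ℕ) : ℤ) ≡
      (4:ℤ) ^ (N - 1) * (p:ℤ) ^ a [ZMOD (p:ℤ) ^ (a + 1)] := by
    have e1 : (((4 ^ (N - 1) * p ^ a : ℕ)) : ℤ) = (4:ℤ) ^ (N - 1) * (p:ℤ) ^ a := by push_cast; ring
    have e2 : ((p ^ (a + 1) : ℕ) : ℤ) = (p:ℤ) ^ (a + 1) := by push_cast; ring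
    rw [← e1, ← e2]
    exact hDz
  have h4S : (4:ℤ) ^ (N - 1) * S ≡ (4:ℤ) ^ (N - 1) * (p:ℤ) ^ a [ZMOD (p:ℤ) ^ (a + 1)] :=
    hmodA.trans hDz'
  -- cancel the coprime factor 4^(N-1)
  have hcop : IsCoprime ((p:ℤ) ^ (a + 1)) ((4:ℤ) ^ (N - 1)) := by
    apply IsCoprime.pow
    have h2p : Nat.Coprime 2 p := (Nat.coprime_primes Nat.prime_two hp).mpr (by omega)
    have h4p : Nat.Coprime 4 p := by
      have := Nat.Coprime.pow_left 2 h2p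
      norm_num at this
      exact this
    have := (Nat.isCoprime_iff_coprime (m := 4) (n := p)).mpr h4p
    have := this.symm
    push_cast at this
    exact this
  have hdvd2 : ((p:ℤ) ^ (a + 1)) ∣ (4:ℤ) ^ (N - 1) * ((p:ℤ) ^ a - S) := by
    have hd := Int.ModEq.dvd h4S
    have : (4:ℤ) ^ (N - 1) * ((p:ℤ) ^ a - S)
        = (4:ℤ) ^ (N - 1) * (p:ℤ) ^ a - (4:ℤ) ^ (N - 1) * S := by ring
    rw [this]
    exact hd
  have hfinal := hcop.dvd_of_dvd_mul_left hdvd2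
  exact (Int.modEq_iff_dvd).mpr hfinal
end

section
/- For every positive integer a, Σ_{k=0}^{3^a-1} (-2)^k·C(2k,k) ≡ 3^a (mod 3^{a+1}). -/
open Finset

private lemma aux_nj (n j : ℕ) : n * (n - 1).choose j = (n - j) * n.choose j := by
  cases n with
  | zero => simp
  | succ m =>
    simp only [Nat.succ_sub_one]
    calc (m + 1) * m.choose j = (m + 1).choose (j + 1) * (j + 1) :=
          Nat.add_one_mul_choose_eq m j
      _ = (m + 1).choose j * ((m + 1) - j) := Nat.choose_succ_right_eq (m + 1) j
      _ = ((m + 1) - j) * (m + 1).choose j := Nat.mul_comm _ _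

private lemma aux2 (n j : ℕ) :
    4 * (n * (n - 1).choose j) + 2 * (2 * j + 1) * n.choose j
      = 2 * (2 * n + 1) * n.choose j := by
  rw [aux_nj]
  rcases le_or_gt j n with hj | hj
  · obtain ⟨m, rfl⟩ := Nat.exists_eq_add_of_le hj
    rw [Nat.add_sub_cancel_left]
    ring
  · rw [Nat.choose_eq_zero_of_lt hj]
    simp

private lemma key (j : ℕ) : ∀ n : ℕ,
    2 * (2 * j + 1) * (∑ k ∈ range n, (2 * k).choose k * k.choose j * 4 ^ (n - 1 - k))
      = n * (n - 1).choose j * (2 * n).choose n := by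
  intro n
  induction n with
  | zero => simp
  | succ n ih =>
    rw [Finset.sum_range_succ]
    have hstep : ∀ k ∈ range n, (2 * k).choose k * k.choose j * 4 ^ (n + 1 - 1 - k)
        = 4 * ((2 * k).choose k * k.choose j * 4 ^ (n - 1 - k)) := by
      intro k hk
      rw [mem_range] at hk
      have h : n + 1 - 1 - k = (n - 1 - k) + 1 := by omega
      rw [h, pow_succ]; ring
    rw [Finset.sum_congr rfl hstep, ← Finset.mul_sum]
    have hlast : n + 1 - 1 - n = 0 := by omega
    rw [hlast, pow_zero, mul_one]
    have hc : (n + 1) * (2 * (n + 1)).choose (n + 1)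
        = 2 * (2 * n + 1) * (2 * n).choose n := by
      have h := Nat.succ_mul_centralBinom_succ n
      simpa [Nat.centralBinom, Nat.mul_succ, Nat.succ_eq_add_one] using h
    have ha2 := aux2 n j
    simp only [Nat.add_sub_cancel]
    calc 2 * (2 * j + 1) * (4 * (∑ k ∈ range n, (2 * k).choose k * k.choose j * 4 ^ (n - 1 - k))
            + (2 * n).choose n * n.choose j)
        = 4 * (2 * (2 * j + 1) * (∑ k ∈ range n, (2 * k).choose k * k.choose j * 4 ^ (n - 1 - k)))
            + 2 * (2 * j + 1) * ((2 * n).choose n * n.choose j) := by ring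
      _ = 4 * (n * (n - 1).choose j * (2 * n).choose n)
            + 2 * (2 * j + 1) * ((2 * n).choose n * n.choose j) := by rw [ih]
      _ = (4 * (n * (n - 1).choose j) + 2 * (2 * j + 1) * n.choose j) * (2 * n).choose n := by
            ring
      _ = 2 * (2 * n + 1) * n.choose j * (2 * n).choose n := by rw [ha2]
      _ = n.choose j * ((n + 1) * (2 * (n + 1)).choose (n + 1)) := by rw [hc]; ring
      _ = (n + 1) * n.choose j * (2 * (n + 1)).choose (n + 1) := by ring

private lemma swap_lemma (n : ℕ) :
    (4 : ℤ) ^ (n - 1) * ∑ k ∈ range n, (-2 : ℤ) ^ k * ((2 * k).choose k : ℤ)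
      = ∑ j ∈ range n, (-9 : ℤ) ^ j *
          ((∑ k ∈ range n, (2 * k).choose k * k.choose j * 4 ^ (n - 1 - k) : ℕ) : ℤ) := by
  have hR : ∀ j, ((∑ k ∈ range n, (2 * k).choose k * k.choose j * 4 ^ (n - 1 - k) : ℕ) : ℤ)
      = ∑ k ∈ range n, ((2 * k).choose k : ℤ) * (k.choose j : ℤ) * 4 ^ (n - 1 - k) := by
    intro j; push_cast; ring
  simp only [hR]
  rw [Finset.mul_sum]
  have step1 : ∑ j ∈ range n, (-9 : ℤ) ^ j *
        ∑ k ∈ range n, ((2 * k).choose k : ℤ) * (k.choose j : ℤ) * 4 ^ (n - 1 - k)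
      = ∑ j ∈ range n, ∑ k ∈ range n,
          (-9 : ℤ) ^ j * (((2 * k).choose k : ℤ) * (k.choose j : ℤ) * 4 ^ (n - 1 - k)) :=
    Finset.sum_congr rfl fun j _ => Finset.mul_sum _ _ _
  rw [step1, Finset.sum_comm]
  refine Finset.sum_congr rfl ?_
  intro k hk
  rw [mem_range] at hk
  have hbin : ∑ j ∈ range n, (-9 : ℤ) ^ j * (((2 * k).choose k : ℤ) * (k.choose j : ℤ)
      * 4 ^ (n - 1 - k))
      = ((2 * k).choose k : ℤ) * 4 ^ (n - 1 - k)
        * ∑ j ∈ range (k + 1), (-9 : ℤ) ^ j * (k.choose j : ℤ) := by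
    rw [Finset.mul_sum]
    rw [← Finset.sum_subset (Finset.range_subset_range.2 hk)]
    · exact Finset.sum_congr rfl fun j _ => by ring
    · intro j hjn hjk
      rw [mem_range, not_lt] at hjk
      rw [Nat.choose_eq_zero_of_lt (show k < j by omega)]
      simp
  rw [hbin]
  have hpow : ∑ j ∈ range (k + 1), (-9 : ℤ) ^ j * (k.choose j : ℤ) = (-8 : ℤ) ^ k := by
    have h := add_pow (-9 : ℤ) 1 k
    norm_num at h
    rw [← h]
  rw [hpow]
  have h4 : (4 : ℤ) ^ (n - 1) = 4 ^ (n - 1 - k) * 4 ^ k := by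
    rw [← pow_add]
    congr 1
    omega
  have h8 : (-8 : ℤ) ^ k = (-2 : ℤ) ^ k * 4 ^ k := by
    rw [← mul_pow]; norm_num
  rw [h4, h8]
  ring

private lemma le_pow_aux (j : ℕ) (hj : 1 ≤ j) : 2 * j + 1 ≤ 3 ^ (2 * j - 1) := by
  induction j with
  | zero => omega
  | succ m ih =>
    rcases Nat.eq_zero_or_pos m with rfl | hm
    · norm_num
    · have h1 := ih hm
      have h2 : 2 * (m + 1) - 1 = (2 * m - 1) + 2 := by omega
      rw [h2, pow_add]
      have h3 : 3 ^ (2 * m - 1) ≥ 1 := Nat.one_le_pow _ _ (by norm_num)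
      nlinarith

private lemma dvd_lemma (a j X M : ℕ) (hj : 1 ≤ j)
    (h : 2 * (2 * j + 1) * X = 3 ^ a * M) : 3 ^ (a + 1) ∣ 9 ^ j * X := by
  have h3 : Nat.Prime 3 := by norm_num
  have hpos : 0 < 2 * j + 1 := by omega
  have hproj : 3 ^ ((2 * j + 1).factorization 3) ∣ 2 * j + 1 := Nat.ordProj_dvd _ _
  have hvle : (2 * j + 1).factorization 3 ≤ 2 * j - 1 := by
    have hle : 3 ^ ((2 * j + 1).factorization 3) ≤ 2 * j + 1 := Nat.le_of_dvd hpos hproj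
    have h33 : (3:ℕ) ^ ((2 * j + 1).factorization 3) ≤ 3 ^ (2 * j - 1) :=
      le_trans hle (le_pow_aux j hj)
    exact (Nat.pow_le_pow_iff_right (by norm_num)).mp h33
  have hsplit : 3 ^ ((2 * j + 1).factorization 3)
      * ((2 * j + 1) / 3 ^ ((2 * j + 1).factorization 3)) = 2 * j + 1 :=
    Nat.ordProj_mul_ordCompl_eq_self _ 3
  have hnd : ¬ 3 ∣ (2 * j + 1) / 3 ^ ((2 * j + 1).factorization 3) :=
    Nat.not_dvd_ordCompl h3 (by omega)
  set v := (2 * j + 1).factorization 3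
  set u := (2 * j + 1) / 3 ^ v
  have hbig : 3 ^ v * (2 * u * (9 ^ j * X)) = 3 ^ v * (3 ^ (a + 2 * j - v) * M) := by
    have e3 : (9:ℕ) ^ j = 3 ^ (2 * j) := by
      rw [show (9:ℕ) = 3 ^ 2 by norm_num, ← pow_mul]
    have e5 : 2 * j + a = v + (a + 2 * j - v) := by omega
    calc 3 ^ v * (2 * u * (9 ^ j * X)) = 9 ^ j * (2 * (3 ^ v * u) * X) := by ring
      _ = 9 ^ j * (2 * (2 * j + 1) * X) := by rw [hsplit]
      _ = 9 ^ j * (3 ^ a * M) := by rw [h]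
      _ = 3 ^ (2 * j + a) * M := by rw [e3, pow_add]; ring
      _ = 3 ^ (v + (a + 2 * j - v)) * M := by rw [e5]
      _ = 3 ^ v * (3 ^ (a + 2 * j - v) * M) := by rw [pow_add]; ring
  have hcancel : 2 * u * (9 ^ j * X) = 3 ^ (a + 2 * j - v) * M :=
    Nat.eq_of_mul_eq_mul_left (Nat.pow_pos (by norm_num)) hbig
  have hdvd1 : 3 ^ (a + 2 * j - v) ∣ (2 * u) * (9 ^ j * X) := ⟨M, hcancel⟩
  have hcop : Nat.Coprime (3 ^ (a + 2 * j - v)) (2 * u) := by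
    apply Nat.Coprime.pow_left
    have hnd2 : ¬ 3 ∣ 2 * u := by
      intro hd
      rcases (Nat.Prime.dvd_mul h3).mp hd with h' | h'
      · omega
      · exact hnd h'
    exact (Nat.Prime.coprime_iff_not_dvd h3).mpr hnd2
  have hdvd2 : 3 ^ (a + 2 * j - v) ∣ 9 ^ j * X := hcop.dvd_of_dvd_mul_left hdvd1
  exact dvd_trans (pow_dvd_pow 3 (by omega)) hdvd2

private lemma lucas_cb (a : ℕ) : (2 * 3 ^ a).choose (3 ^ a) ≡ 2 [MOD 3] := by
  haveI : Fact (Nat.Prime 3) := ⟨by norm_num⟩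
  induction a with
  | zero => decide
  | succ a ih =>
    have h := Choose.choose_modEq_choose_mod_mul_choose_div_nat
      (p := 3) (n := 2 * 3 ^ (a + 1)) (k := 3 ^ (a + 1))
    have e1 : 2 * 3 ^ (a + 1) = 3 * (2 * 3 ^ a) := by ring
    have e2 : (3:ℕ) ^ (a + 1) = 3 * 3 ^ a := by ring
    rw [e1, e2] at h
    rw [Nat.mul_mod_right, Nat.mul_mod_right, Nat.mul_div_cancel_left _ (by norm_num : 0 < 3),
      Nat.mul_div_cancel_left _ (by norm_num : 0 < 3)] at h
    simp only [Nat.choose_self, one_mul] at h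
    rw [e1, e2]
    exact h.trans ih

theorem stmt_8 (a : ℕ) (ha : 0 < a) :
    (∑ k ∈ Finset.range (3 ^ a), (-2 : ℤ) ^ k * (Nat.choose (2 * k) k : ℤ))
      ≡ (3 : ℤ) ^ a [ZMOD (3 : ℤ) ^ (a + 1)] := by
  have hn1 : 1 ≤ 3 ^ a := Nat.one_le_pow _ _ (by norm_num)
  set n : ℕ := 3 ^ a with hn
  set S : ℤ := ∑ k ∈ Finset.range n, (-2 : ℤ) ^ k * (Nat.choose (2 * k) k : ℤ) with hS
  set C : ℤ := ((2 * n).choose n : ℤ) with hC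
  set H : ℕ → ℕ := fun j => ∑ k ∈ range n, (2 * k).choose k * k.choose j * 4 ^ (n - 1 - k)
    with hH
  -- swap identity
  have hswap : (4 : ℤ) ^ (n - 1) * S = ∑ j ∈ range n, (-9 : ℤ) ^ j * (H j : ℤ) :=
    swap_lemma n
  -- j = 0 term
  have hkey0 : 2 * (H 0 : ℤ) = (n : ℤ) * C := by
    have h : 2 * (2 * 0 + 1) * H 0 = n * (n - 1).choose 0 * (2 * n).choose n := key 0 n
    rw [Nat.choose_zero_right] at h
    have h2 := congrArg (Nat.cast (R := ℤ)) h
    push_cast at h2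
    rw [hC]
    push_cast
    linarith
  -- higher terms divisible
  have hdvdj : ∀ j ∈ (range n).erase 0, (3 : ℤ) ^ (a + 1) ∣ (-9 : ℤ) ^ j * (H j : ℤ) := by
    intro j hj
    have hj0 : j ≠ 0 := (Finset.mem_erase.mp hj).1
    have hdN : (3 : ℕ) ^ (a + 1) ∣ 9 ^ j * H j := by
      apply dvd_lemma a j (H j) ((n - 1).choose j * (2 * n).choose n) (by omega)
      have h : 2 * (2 * j + 1) * H j = n * (n - 1).choose j * (2 * n).choose n := key j n
      rw [h, hn]
      ring
    have hZ : (3 : ℤ) ^ (a + 1) ∣ ((9 : ℤ)) ^ j * (H j : ℤ) := by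
      exact_mod_cast Int.natCast_dvd_natCast.mpr hdN
    have h9 : (-9 : ℤ) ^ j * (H j : ℤ) = (-1) ^ j * ((9 : ℤ) ^ j * (H j : ℤ)) := by
      rw [← mul_assoc, ← mul_pow]; norm_num
    rw [h9]
    exact Dvd.dvd.mul_left hZ _
  -- sum minus first term divisible
  have hsum_mod : (3 : ℤ) ^ (a + 1) ∣ (∑ j ∈ range n, (-9 : ℤ) ^ j * (H j : ℤ)) - (H 0 : ℤ) := by
    have h0mem : (0 : ℕ) ∈ range n := mem_range.mpr (by omega)
    have hsplit := Finset.add_sum_erase (range n) (fun j => (-9 : ℤ) ^ j * (H j : ℤ)) h0mem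
    have heq : (∑ j ∈ range n, (-9 : ℤ) ^ j * (H j : ℤ)) - (H 0 : ℤ)
        = ∑ j ∈ (range n).erase 0, (-9 : ℤ) ^ j * (H j : ℤ) := by
      rw [← hsplit]; push_cast; ring
    rw [heq]
    exact Finset.dvd_sum hdvdj
  -- C ≡ 2 * 4^(n-1) mod 3
  have hcb : (3 : ℤ) ∣ 2 * 4 ^ (n - 1) - C := by
    have h1 : C ≡ 2 [ZMOD (3 : ℤ)] := by
      have hl := lucas_cb a
      rw [← hn] at hl
      rw [hC]
      exact_mod_cast Int.natCast_modEq_iff.mpr hl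
    have h2 : (2 : ℤ) * 4 ^ (n - 1) ≡ 2 * 1 ^ (n - 1) [ZMOD (3 : ℤ)] :=
      Int.ModEq.mul_left 2 (Int.ModEq.pow _ (by decide))
    have h3 : C ≡ 2 * 4 ^ (n - 1) [ZMOD (3 : ℤ)] := by
      refine h1.trans (Int.ModEq.symm ?_)
      simpa using h2
    exact Int.ModEq.dvd h3
  -- combine
  have hcastn : ((n : ℕ) : ℤ) = (3 : ℤ) ^ a := by rw [hn]; push_cast; ring
  have hmain : (3 : ℤ) ^ (a + 1) ∣ 2 * 4 ^ (n - 1) * ((3 : ℤ) ^ a - S) := by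
    have hd2 : (3 : ℤ) ^ (a + 1) ∣ (3 : ℤ) ^ a * (2 * 4 ^ (n - 1) - C) := by
      rw [pow_succ]
      exact mul_dvd_mul_left _ hcb
    have hd1 : (3 : ℤ) ^ (a + 1) ∣
        2 * ((∑ j ∈ range n, (-9 : ℤ) ^ j * (H j : ℤ)) - (H 0 : ℤ)) :=
      Dvd.dvd.mul_left hsum_mod 2
    have hexpr : 2 * 4 ^ (n - 1) * ((3 : ℤ) ^ a - S)
        = (3 : ℤ) ^ a * (2 * 4 ^ (n - 1) - C)
          - 2 * ((∑ j ∈ range n, (-9 : ℤ) ^ j * (H j : ℤ)) - (H 0 : ℤ)) := by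
      have e1 : 2 * ((4 : ℤ) ^ (n - 1) * S)
          = 2 * (∑ j ∈ range n, (-9 : ℤ) ^ j * (H j : ℤ)) := by rw [hswap]
      linear_combination (-1 : ℤ) * e1 - hkey0 - C * hcastn
    rw [hexpr]
    exact dvd_sub hd2 hd1
  have hcop : IsCoprime ((3 : ℤ) ^ (a + 1)) (2 * 4 ^ (n - 1)) := by
    have c32 : IsCoprime (3 : ℤ) 2 := by
      rw [Int.isCoprime_iff_gcd_eq_one]; decide
    have c34 : IsCoprime (3 : ℤ) 4 := by
      rw [Int.isCoprime_iff_gcd_eq_one]; decide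
    exact (c32.mul_right c34.pow_right).pow_left
  have hfin : (3 : ℤ) ^ (a + 1) ∣ (3 : ℤ) ^ a - S :=
    hcop.dvd_of_dvd_mul_left hmain
  exact Int.modEq_iff_dvd.mpr hfin
end

section
/- For every positive integer a, Σ_{k=0}^{7^a-1} (-5)^k·C(2k,k) ≡ 7^a (mod 7^{a+1}). -/
open Finset

/-- Key binomial identity: `(2j+1) * ∑_{k≤n} 4^(n-k) C(2k,k) C(k,j) = (2n+1) C(2n,n) C(n,j)`. -/
lemma aux_lemA (j : ℕ) : ∀ n : ℕ,
    ((2*(j:ℤ)+1)) * ∑ k ∈ Finset.range (n+1),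
        (4:ℤ)^(n-k) * (Nat.choose (2*k) k : ℤ) * (Nat.choose k j : ℤ)
      = (2*(n:ℤ)+1) * (Nat.choose (2*n) n : ℤ) * (Nat.choose n j : ℤ) := by
  intro n
  induction n with
  | zero =>
      rcases j with _ | j <;> simp
  | succ n ih =>
      have cm : ((n:ℤ)+1) * (Nat.choose n j : ℤ)
          = ((n:ℤ)+1-(j:ℤ)) * (Nat.choose (n+1) j : ℤ) := by
        rcases le_or_gt j (n+1) with h | h
        · have h0 := Nat.choose_mul_succ_eq n j
          have h2 : ((Nat.choose n j : ℤ)) * ((n:ℤ)+1)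
              = (Nat.choose (n+1) j : ℤ) * ((n+1-j : ℕ) : ℤ) := by exact_mod_cast h0
          have h1 : ((n + 1 - j : ℕ) : ℤ) = (n:ℤ)+1-(j:ℤ) := by
            rw [Nat.cast_sub h]; push_cast; ring
          rw [h1] at h2
          linarith [h2]
        · rw [Nat.choose_eq_zero_of_lt h, Nat.choose_eq_zero_of_lt (by omega : n < j)]
          simp
      have cb : ((n:ℤ)+1) * (Nat.choose (2*(n+1)) (n+1) : ℤ)
          = 2*(2*(n:ℤ)+1) * (Nat.choose (2*n) n : ℤ) := by
        have h1 : ((n+1) * Nat.centralBinom (n+1) : ℕ)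
            = (2 * (2*n+1) * Nat.centralBinom n : ℕ) := Nat.succ_mul_centralBinom_succ n
        have h2 : Nat.centralBinom (n+1) = Nat.choose (2*(n+1)) (n+1) := rfl
        have h3 : Nat.centralBinom n = Nat.choose (2*n) n := rfl
        rw [h2, h3] at h1
        exact_mod_cast congrArg (Nat.cast : ℕ → ℤ) h1
      have key : (4:ℤ) * (2*(n:ℤ)+1) * (Nat.choose (2*n) n : ℤ) * (Nat.choose n j : ℤ)
          = (2*((n:ℤ)+1)+1 - (2*(j:ℤ)+1)) * (Nat.choose (2*(n+1)) (n+1) : ℤ)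
              * (Nat.choose (n+1) j : ℤ) := by
        linear_combination (-2)*(Nat.choose n j : ℤ) * cb
          + 2*(Nat.choose (2*(n+1)) (n+1) : ℤ) * cm
      rw [Finset.sum_range_succ]
      have hre : ∑ k ∈ Finset.range (n+1),
          (4:ℤ)^(n+1-k) * (Nat.choose (2*k) k : ℤ) * (Nat.choose k j : ℤ)
          = 4 * ∑ k ∈ Finset.range (n+1),
              (4:ℤ)^(n-k) * (Nat.choose (2*k) k : ℤ) * (Nat.choose k j : ℤ) := by
        rw [Finset.mul_sum]
        apply Finset.sum_congr rfl
        intro k hk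
        have hk' : k ≤ n := Nat.lt_succ_iff.mp (Finset.mem_range.mp hk)
        have : n + 1 - k = (n - k) + 1 := by omega
        rw [this, pow_succ]
        ring
      rw [hre]
      have hsimp : n + 1 - (n+1) = 0 := by omega
      rw [hsimp]
      push_cast
      linear_combination 4 * ih + key

/-- Expansion: `4^n * ∑_{k≤n} (-5)^k C(2k,k) = ∑_{j≤n} (-21)^j T_j`. -/
lemma aux_lemB (n : ℕ) :
    (4:ℤ)^n * ∑ k ∈ Finset.range (n+1), (-5:ℤ)^k * (Nat.choose (2*k) k : ℤ)
      = ∑ j ∈ Finset.range (n+1), (-21:ℤ)^j *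
          ∑ k ∈ Finset.range (n+1),
            (4:ℤ)^(n-k) * (Nat.choose (2*k) k : ℤ) * (Nat.choose k j : ℤ) := by
  rw [Finset.mul_sum]
  have hterm : ∀ k ∈ Finset.range (n+1),
      (4:ℤ)^n * ((-5:ℤ)^k * (Nat.choose (2*k) k : ℤ))
        = ∑ j ∈ Finset.range (n+1),
            (-21:ℤ)^j * ((4:ℤ)^(n-k) * (Nat.choose (2*k) k : ℤ) * (Nat.choose k j : ℤ)) := by
    intro k hk
    have hk' : k ≤ n := Nat.lt_succ_iff.mp (Finset.mem_range.mp hk)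
    have hsplit : (4:ℤ)^n = 4^(n-k) * 4^k := by
      rw [← pow_add]; congr 1; omega
    have hpow : ((-21:ℤ)+1)^k = 4^k * (-5:ℤ)^k := by
      rw [← mul_pow]; norm_num
    have hexp : ((-21:ℤ)+1)^k
        = ∑ j ∈ Finset.range (k+1), (-21:ℤ)^j * (Nat.choose k j : ℤ) := by
      rw [add_pow]
      apply Finset.sum_congr rfl
      intro j hj
      ring
    have hsub : ∑ j ∈ Finset.range (k+1),
          (-21:ℤ)^j * ((4:ℤ)^(n-k) * (Nat.choose (2*k) k : ℤ) * (Nat.choose k j : ℤ))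
        = ∑ j ∈ Finset.range (n+1),
          (-21:ℤ)^j * ((4:ℤ)^(n-k) * (Nat.choose (2*k) k : ℤ) * (Nat.choose k j : ℤ)) := by
      apply Finset.sum_subset (Finset.range_subset_range.mpr (by omega))
      intro j _ hj
      have hkj : k < j := by
        simp only [Finset.mem_range] at hj
        omega
      simp [Nat.choose_eq_zero_of_lt hkj]
    calc (4:ℤ)^n * ((-5:ℤ)^k * (Nat.choose (2*k) k : ℤ))
        = ((4:ℤ)^(n-k) * (Nat.choose (2*k) k : ℤ)) * ((-21:ℤ)+1)^k := by
          rw [hsplit, hpow]; ring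
      _ = ((4:ℤ)^(n-k) * (Nat.choose (2*k) k : ℤ)) *
            ∑ j ∈ Finset.range (k+1), (-21:ℤ)^j * (Nat.choose k j : ℤ) := by rw [hexp]
      _ = ∑ j ∈ Finset.range (k+1),
            (-21:ℤ)^j * ((4:ℤ)^(n-k) * (Nat.choose (2*k) k : ℤ) * (Nat.choose k j : ℤ)) := by
          rw [Finset.mul_sum]
          apply Finset.sum_congr rfl
          intro j _
          ring
      _ = _ := hsub
  rw [Finset.sum_congr rfl hterm, Finset.sum_comm]
  exact Finset.sum_congr rfl fun j _ => (Finset.mul_sum _ _ _).symm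

/-- The partial-sum quantity `T_j = ∑_{k≤m} 4^(m-k) C(2k,k) C(k,j)`. -/
def auxT (m j : ℕ) : ℕ :=
  ∑ k ∈ Finset.range (m+1), 4^(m-k) * Nat.choose (2*k) k * Nat.choose k j

lemma auxT_cast (m j : ℕ) : ((auxT m j : ℕ) : ℤ)
    = ∑ k ∈ Finset.range (m+1),
        (4:ℤ)^(m-k) * (Nat.choose (2*k) k : ℤ) * (Nat.choose k j : ℤ) := by
  unfold auxT
  push_cast
  rfl

lemma aux_lemA' (m j : ℕ) :
    (2*j+1) * auxT m j = (2*m+1) * Nat.choose (2*m) m * Nat.choose m j := by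
  have h := aux_lemA j m
  rw [← auxT_cast] at h
  exact_mod_cast h

lemma aux_lemB' (m : ℕ) :
    (4:ℤ)^m * ∑ k ∈ Finset.range (m+1), (-5:ℤ)^k * (Nat.choose (2*k) k : ℤ)
      = ∑ j ∈ Finset.range (m+1), (-21:ℤ)^j * (auxT m j : ℤ) := by
  rw [aux_lemB m]
  exact Finset.sum_congr rfl fun j _ => by rw [auxT_cast]

lemma aux_lt_pow (j : ℕ) (hj : 1 ≤ j) : 2*j + 1 < 7^j := by
  induction j with
  | zero => omega
  | succ n ih =>
      rcases Nat.eq_zero_or_pos n with rfl | hn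
      · norm_num
      · have h := ih hn
        have h2 : (7:ℕ)^n < 7^(n+1) := by
          have h3 : 0 < (7:ℕ)^n := pow_pos (by norm_num) n
          calc (7:ℕ)^n < 7^n * 7 := by omega
            _ = 7^(n+1) := by rw [pow_succ]
        omega

/-- Valuation lemma: if `7^(a+j) ∣ (2j+1)*Y` and `j ≥ 1` then `7^(a+1) ∣ Y`. -/
lemma aux_lemC {j a Y : ℕ} (hj : 1 ≤ j) (h : 7^(a+j) ∣ (2*j+1) * Y) : 7^(a+1) ∣ Y := by
  have h7 : Nat.Prime 7 := by norm_num
  set d := (2*j+1).factorization 7 with hd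
  have hne : 2*j+1 ≠ 0 := by omega
  have hproj : 7^d ∣ 2*j+1 := Nat.ordProj_dvd _ _
  have hlt : 2*j+1 < 7^j := aux_lt_pow j hj
  have hdj : d < j := by
    by_contra hc
    push_neg at hc
    have h1 : (7:ℕ)^j ≤ 7^d := Nat.pow_le_pow_right (by norm_num) hc
    have h2 : (7:ℕ)^d ≤ 2*j+1 := Nat.le_of_dvd (by omega) hproj
    omega
  have hu : 2*j+1 = 7^d * ((2*j+1) / 7^d) := (Nat.mul_div_cancel' hproj).symm
  have hcop : Nat.Coprime 7 ((2*j+1) / 7^d) := Nat.coprime_ordCompl h7 hne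
  have h' : 7^(a+j) ∣ 7^d * (((2*j+1) / 7^d) * Y) := by
    rw [← mul_assoc, ← hu]; exact h
  have hsplit : (7:ℕ)^(a+j) = 7^d * 7^(a+j-d) := by
    rw [← pow_add]; congr 1; omega
  rw [hsplit] at h'
  have h'' : 7^(a+j-d) ∣ ((2*j+1) / 7^d) * Y :=
    (Nat.mul_dvd_mul_iff_left (pow_pos (by norm_num : (0:ℕ) < 7) d)).mp h'
  have hcop' : Nat.Coprime (7^(a+j-d)) ((2*j+1) / 7^d) := Nat.Coprime.pow_left _ hcop
  have hY : 7^(a+j-d) ∣ Y := hcop'.dvd_of_dvd_mul_left h''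
  exact dvd_trans (pow_dvd_pow 7 (by omega)) hY

/-- `C(2·7^a, 7^a) ≡ 2 (mod 7)` by Lucas' theorem. -/
lemma aux_cb_mod7 : ∀ a : ℕ, Nat.centralBinom (7^a) ≡ 2 [MOD 7]
  | 0 => by decide
  | (a+1) => by
      have : Fact (Nat.Prime 7) := ⟨by norm_num⟩
      have h := Choose.choose_modEq_choose_mod_mul_choose_div_nat
        (p := 7) (n := 2*7^(a+1)) (k := 7^(a+1))
      have e1 : 2*7^(a+1) = 7*(2*7^a) := by ring
      have e2 : 7^(a+1) = 7*7^a := by ring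
      rw [e1, e2, Nat.mul_mod_right, Nat.mul_mod_right,
        Nat.mul_div_cancel_left _ (by norm_num : 0 < 7),
        Nat.mul_div_cancel_left _ (by norm_num : 0 < 7)] at h
      simp only [Nat.choose_self, one_mul] at h
      have h2 : Nat.centralBinom (7^(a+1)) = Nat.choose (7*(2*7^a)) (7*7^a) := by
        rw [← e1, ← e2]; rfl
      rw [h2]
      exact h.trans (aux_cb_mod7 a)

theorem stmt_9 (a : ℕ) (ha : 0 < a) :
    (∑ k ∈ Finset.range (7 ^ a), (-5 : ℤ) ^ k * (Nat.choose (2 * k) k : ℤ))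
      ≡ (7 : ℤ) ^ a [ZMOD (7 : ℤ) ^ (a + 1)] := by
  have h7 : Nat.Prime 7 := by norm_num
  have hcbdef : ∀ n : ℕ, Nat.centralBinom n = Nat.choose (2*n) n := fun n => rfl
  obtain ⟨m, hm⟩ : ∃ m, 7^a = m+1 :=
    ⟨7^a - 1, by have : 0 < 7^a := pow_pos (by norm_num) a; omega⟩
  set S : ℤ := ∑ k ∈ Finset.range (7 ^ a), (-5 : ℤ) ^ k * (Nat.choose (2 * k) k : ℤ) with hS
  have hSm : S = ∑ k ∈ Finset.range (m+1), (-5 : ℤ) ^ k * (Nat.choose (2 * k) k : ℤ) := by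
    rw [hS, hm]
  -- 7 ∣ m+1
  have hdvd7 : (7:ℕ) ∣ m + 1 := by
    rw [← hm]; exact dvd_pow_self 7 (by omega)
  -- central binomial recurrence
  have cbrel : (m+1) * Nat.centralBinom (m+1) = 2 * (2*m+1) * Nat.centralBinom m :=
    Nat.succ_mul_centralBinom_succ m
  -- 7^a ∣ centralBinom m
  have hnd : ¬ (7:ℕ) ∣ 2*(2*m+1) := by
    rcases hdvd7 with ⟨c, hc⟩
    omega
  have cop : Nat.Coprime (7^a) (2*(2*m+1)) :=
    Nat.Coprime.pow_left a ((Nat.Prime.coprime_iff_not_dvd h7).mpr hnd)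
  have div7a : 7^a ∣ Nat.centralBinom m := by
    apply cop.dvd_of_dvd_mul_left
    rw [show 2*(2*m+1) * Nat.centralBinom m = (m+1) * Nat.centralBinom (m+1) by
      rw [cbrel]]
    exact Dvd.dvd.mul_right (hm ▸ dvd_refl _) _
  obtain ⟨c, hc⟩ := div7a
  -- divisibility of higher terms
  have divj : ∀ j, 1 ≤ j → (7:ℕ)^(a+1) ∣ 21^j * auxT m j := by
    intro j hj
    apply aux_lemC hj
    have key : (2*j+1) * (21^j * auxT m j)
        = 7^(a+j) * (3^j * (2*m+1) * c * Nat.choose m j) := by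
      rw [show (2*j+1) * (21^j * auxT m j) = 21^j * ((2*j+1) * auxT m j) by ring,
        aux_lemA' m j, ← hcbdef, hc,
        show (21:ℕ)^j = 3^j * 7^j by rw [← Nat.mul_pow], pow_add]
      ring
    exact ⟨_, key⟩
  -- 2 * T 0 = 7^a * centralBinom (m+1), as naturals
  have hT0 : 2 * auxT m 0 = 7^a * Nat.centralBinom (m+1) := by
    have h1 := aux_lemA' m 0
    norm_num at h1
    rw [hm, cbrel, hcbdef, h1]
    ring
  -- mod-7 fact: centralBinom (m+1) ≡ 2 * 4^m [MOD 7]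
  have h3m : 3 ∣ m := by
    have h1 : (7:ℕ)^a ≡ 1 [MOD 3] := by
      calc (7:ℕ)^a ≡ 1^a [MOD 3] := Nat.ModEq.pow a (by decide)
        _ = 1 := one_pow a
    have h2 : (3:ℕ) ∣ 7^a - 1 := (Nat.modEq_iff_dvd' (Nat.one_le_iff_ne_zero.mpr
      (pow_ne_zero a (by norm_num)))).mp h1.symm
    have h4 : m = 7^a - 1 := by omega
    rw [h4]; exact h2
  have h4m : (4:ℕ)^m ≡ 1 [MOD 7] := by
    obtain ⟨t, ht⟩ := h3m
    calc (4:ℕ)^m = 64^t := by rw [ht, pow_mul]; norm_num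
      _ ≡ 1^t [MOD 7] := Nat.ModEq.pow t (by decide)
      _ = 1 := one_pow t
  have hmod : Nat.centralBinom (m+1) ≡ 2 * 4^m [MOD 7] := by
    have h1 : Nat.centralBinom (m+1) ≡ 2 [MOD 7] := by
      rw [← hm]; exact aux_cb_mod7 a
    have h2 : 2 * 4^m ≡ 2 * 1 [MOD 7] := Nat.ModEq.mul_left 2 h4m
    simpa using h1.trans h2.symm
  -- coprimality for cancellation
  have hcop : IsCoprime ((7:ℤ)^(a+1)) (2 * 4^m) := by
    have c2 : IsCoprime (7:ℤ) 2 := by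
      rw [Int.isCoprime_iff_gcd_eq_one]; decide
    have c4 : IsCoprime (7:ℤ) 4 := by
      rw [Int.isCoprime_iff_gcd_eq_one]; decide
    exact IsCoprime.pow_left (c2.mul_right (IsCoprime.pow_right c4))
  -- main divisibility
  have main : (7:ℤ)^(a+1) ∣ (2 * 4^m) * ((7:ℤ)^a - S) := by
    have hB := aux_lemB' m
    rw [← hSm] at hB
    have hsplit : ∑ j ∈ Finset.range (m+1), (-21:ℤ)^j * (auxT m j : ℤ)
        = (∑ i ∈ Finset.range m, (-21:ℤ)^(i+1) * (auxT m (i+1) : ℤ))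
            + (-21:ℤ)^0 * (auxT m 0 : ℤ) :=
      Finset.sum_range_succ' _ m
    have hdvdsum : (7:ℤ)^(a+1) ∣ ∑ i ∈ Finset.range m, (-21:ℤ)^(i+1) * (auxT m (i+1) : ℤ) := by
      apply Finset.dvd_sum
      intro i _
      have hnat : (7:ℕ)^(a+1) ∣ 21^(i+1) * auxT m (i+1) := divj (i+1) (by omega)
      have hint : (7:ℤ)^(a+1) ∣ (21:ℤ)^(i+1) * (auxT m (i+1) : ℤ) := by
        have h5 := Int.natCast_dvd_natCast.mpr hnat
        push_cast at h5
        exact_mod_cast h5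
      have h6 : (-21:ℤ)^(i+1) * (auxT m (i+1) : ℤ)
          = (-1)^(i+1) * ((21:ℤ)^(i+1) * (auxT m (i+1) : ℤ)) := by
        rw [show (-21:ℤ) = -1 * 21 by norm_num, mul_pow]; ring
      rw [h6]
      exact Dvd.dvd.mul_left hint _
    have hT0z : 2 * ((auxT m 0 : ℕ) : ℤ) = (7:ℤ)^a * (Nat.centralBinom (m+1) : ℤ) := by
      exact_mod_cast congrArg (Nat.cast : ℕ → ℤ) hT0
    have hexpr : (2 * 4^m) * ((7:ℤ)^a - S)
        = ((7:ℤ)^a * (2 * 4^m - (Nat.centralBinom (m+1) : ℤ)))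
          - 2 * ∑ i ∈ Finset.range m, (-21:ℤ)^(i+1) * (auxT m (i+1) : ℤ) := by
      have h8 : (4:ℤ)^m * S
          = (∑ i ∈ Finset.range m, (-21:ℤ)^(i+1) * (auxT m (i+1) : ℤ))
              + ((auxT m 0 : ℕ) : ℤ) := by
        rw [hB, hsplit]; ring
      linear_combination (-2) * h8 - hT0z
    rw [hexpr]
    apply dvd_sub
    · have h7d : (7:ℤ) ∣ (2 * 4^m - (Nat.centralBinom (m+1) : ℤ)) := by
        have h9 := (Nat.modEq_iff_dvd (n := 7)).mp hmod
        push_cast at h9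
        exact_mod_cast h9
      rw [pow_succ]
      exact mul_dvd_mul (pow_dvd_pow 7 (le_refl a)) h7d
    · exact Dvd.dvd.mul_left hdvdsum 2
  have hfin : (7:ℤ)^(a+1) ∣ ((7:ℤ)^a - S) := hcop.dvd_of_dvd_mul_left main
  exact Int.modEq_iff_dvd.mpr hfin
end

section
/- For any positive integers n and any integer d, Σ_{0≤k<n} C(2k, k+d)·x^{n-1-k} + [d>0]·x^n·u_d(x-2) = Σ_{0≤k<n+d} C(2n,k)·u_{n+d-k}(x-2), as an identity of polynomials in x, where [d>0] is 1 if d > 0 and 0 otherwise. -/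
open Polynomial

/-- The polynomial sequence u₀ = 0, u₁ = 1, u_{k+2} = X·u_{k+1} - u_k. -/
noncomputable def lucasPoly : ℕ → Polynomial ℤ
  | 0 => 0
  | 1 => 1
  | (k + 2) => X * lucasPoly (k + 1) - lucasPoly k

noncomputable def V (j : ℕ) : Polynomial ℤ := (lucasPoly j).comp (X - 2)

noncomputable def W (m N : ℕ) : Polynomial ℤ :=
  ∑ k ∈ Finset.range N, Polynomial.C ((m.choose k : ℤ)) * V (N - k)

lemma V_zero : V 0 = 0 := by simp [V, lucasPoly]
lemma V_one : V 1 = 1 := by simp [V, lucasPoly]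

lemma V_rec (j : ℕ) : V (j+2) = (X - 2) * V (j+1) - V j := by
  simp [V, lucasPoly, sub_comp, mul_comp, X_comp]

lemma XV (j : ℕ) : X * V (j+1) = V (j+2) + 2 * V (j+1) + V j := by
  rw [V_rec]; ring

lemma W_zero (m : ℕ) : W m 0 = 0 := by simp [W]

lemma W_succ_m (m N : ℕ) : W (m+1) (N+1) = W m (N+1) + W m N := by
  rw [W, Finset.sum_range_succ', W, Finset.sum_range_succ']
  have h1 : ∀ k ∈ Finset.range N,
      Polynomial.C (((m+1).choose (k+1) : ℤ)) * V (N+1-(k+1))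
        = Polynomial.C ((m.choose k : ℤ)) * V (N-k)
          + Polynomial.C ((m.choose (k+1) : ℤ)) * V (N-k) := by
    intro k hk
    have : (m+1).choose (k+1) = m.choose k + m.choose (k+1) := Nat.choose_succ_succ m k
    rw [show N+1-(k+1) = N-k from by omega, this]
    push_cast
    rw [Polynomial.C_add]
    ring
  rw [Finset.sum_congr rfl h1, Finset.sum_add_distrib]
  simp [W]
  ring

lemma key_s10 (m M : ℕ) :
    X * W m (M+1) + Polynomial.C ((m.choose (M+1) : ℤ))
      = W m (M+2) + 2 * W m (M+1) + W m M := by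
  have h1 : X * W m (M+1) = ∑ k ∈ Finset.range (M+1),
      (Polynomial.C ((m.choose k : ℤ)) * V (M+2-k)
        + 2 * (Polynomial.C ((m.choose k : ℤ)) * V (M+1-k))
        + Polynomial.C ((m.choose k : ℤ)) * V (M-k)) := by
    rw [W, Finset.mul_sum]
    refine Finset.sum_congr rfl fun k hk => ?_
    have hk' : k ≤ M := Nat.lt_succ_iff.mp (Finset.mem_range.mp hk)
    rw [show M+1-k = (M-k)+1 from by omega, show M+2-k = (M-k)+2 from by omega]
    rw [mul_left_comm, XV]
    ring
  rw [h1, Finset.sum_add_distrib, Finset.sum_add_distrib]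
  have hA : ∑ k ∈ Finset.range (M+1), Polynomial.C ((m.choose k : ℤ)) * V (M+2-k)
      = W m (M+2) - Polynomial.C ((m.choose (M+1) : ℤ)) := by
    conv_rhs => rw [W, Finset.sum_range_succ]
    rw [show M+2-(M+1) = 1 from by omega, V_one]
    ring
  have hD : ∑ k ∈ Finset.range (M+1), Polynomial.C ((m.choose k : ℤ)) * V (M-k)
      = W m M := by
    rw [Finset.sum_range_succ, Nat.sub_self, V_zero, mul_zero, add_zero, W]
  rw [hA, hD, ← Finset.mul_sum, ← W]
  ring

lemma main_step (m M : ℕ) :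
    W (m+2) (M+2) = X * W m (M+1) + Polynomial.C ((m.choose (M+1) : ℤ)) := by
  rw [key_s10, show m+2 = (m+1)+1 from rfl, W_succ_m, W_succ_m, W_succ_m]
  ring

lemma V_two : V 2 = X - 2 := by
  rw [show (2:ℕ) = 0+2 from rfl, V_rec, V_one, V_zero]; ring

lemma XV_W2 (j : ℕ) : X * V (j+1) = W 2 (j+2) := by
  cases j with
  | zero =>
    rw [V_one, W, Finset.sum_range_succ, Finset.sum_range_succ, Finset.sum_range_zero]
    simp [V_one, V_two]
  | succ g =>
    rw [XV, W, Finset.sum_range_succ', Finset.sum_range_succ', Finset.sum_range_succ']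
    have hz : ∀ x ∈ Finset.range g,
        Polynomial.C ((Nat.choose 2 (x+1+1+1) : ℤ)) * V (g+1+2-(x+1+1+1)) = 0 := by
      intro x hx
      rw [Nat.choose_eq_zero_of_lt (by omega)]
      simp
    rw [Finset.sum_eq_zero hz]
    norm_num
    rw [show g+1+1 = g+2 from rfl]
    ring

lemma main_aux (d : ℤ) : ∀ n : ℕ,
    (∑ k ∈ Finset.range (n+1),
        Polynomial.C (if 0 ≤ (k : ℤ) + d then ((2 * k).choose ((k : ℤ) + d).toNat : ℤ) else 0)
          * X ^ (n - k))
      + (if 0 < d then X ^ (n+1) * V d.toNat else 0)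
    = W (2*(n+1)) (((n : ℤ) + 1 + d).toNat) := by
  intro n
  induction n with
  | zero =>
    rcases lt_trichotomy d 0 with hd | hd | hd
    · rw [Finset.sum_range_one, if_neg (by push_cast; omega), if_neg (by omega),
        show (((0:ℕ):ℤ) + 1 + d).toNat = 0 from by push_cast; omega, W_zero]
      simp
    · subst hd
      rw [Finset.sum_range_one, if_pos (by norm_num), if_neg (by omega)]
      norm_num
      rw [W, Finset.sum_range_one, V_one]
      simp
    · have h1 : d.toNat = (d.toNat - 1) + 1 := by omega
      rw [Finset.sum_range_one, if_pos (by push_cast; omega), if_pos hd,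
        show (((0:ℕ):ℤ) + d).toNat = d.toNat from by push_cast; omega,
        Nat.choose_eq_zero_of_lt (by simpa using hd),
        show (((0:ℕ):ℤ) + 1 + d).toNat = (d.toNat - 1) + 2 from by push_cast; omega]
      rw [← XV_W2, pow_one]
      rw [← h1]
      simp
  | succ n ih =>
    have hL : (∑ k ∈ Finset.range (n+1+1),
        Polynomial.C (if 0 ≤ (k : ℤ) + d then ((2 * k).choose ((k : ℤ) + d).toNat : ℤ) else 0)
          * X ^ (n + 1 - k))
        = X * (∑ k ∈ Finset.range (n+1),
            Polynomial.C (if 0 ≤ (k : ℤ) + d then ((2 * k).choose ((k : ℤ) + d).toNat : ℤ) else 0)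
              * X ^ (n - k))
          + Polynomial.C (if 0 ≤ ((n+1 : ℕ) : ℤ) + d
              then ((2 * (n+1)).choose (((n+1 : ℕ) : ℤ) + d).toNat : ℤ) else 0) := by
      rw [Finset.sum_range_succ, Nat.sub_self, pow_zero, mul_one, Finset.mul_sum]
      congr 1
      refine Finset.sum_congr rfl fun k hk => ?_
      have hk' : k ≤ n := Nat.lt_succ_iff.mp (Finset.mem_range.mp hk)
      rw [show n+1-k = (n-k)+1 from by omega, pow_succ]
      ring
    have hE : (if 0 < d then X ^ (n+1+1) * V d.toNat else 0)
        = X * (if 0 < d then X ^ (n+1) * V d.toNat else 0) := by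
      split_ifs with h
      · rw [pow_succ]; ring
      · rw [mul_zero]
    rw [hL, hE, add_right_comm, ← mul_add, ih]
    rcases lt_trichotomy ((n : ℤ) + 1 + d) 0 with hd | hd | hd
    · rw [show ((n : ℤ) + 1 + d).toNat = 0 from by omega, W_zero, mul_zero, zero_add,
        if_neg (by push_cast; omega),
        show (((n+1 : ℕ) : ℤ) + 1 + d).toNat = 0 from by push_cast; omega, W_zero]
      simp
    · rw [show ((n : ℤ) + 1 + d).toNat = 0 from by omega, W_zero, mul_zero, zero_add,
        if_pos (by push_cast; omega),
        show (((n+1 : ℕ) : ℤ) + d).toNat = 0 from by push_cast; omega,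
        show (((n+1 : ℕ) : ℤ) + 1 + d).toNat = 1 from by push_cast; omega,
        Nat.choose_zero_right, W, Finset.sum_range_one, Nat.choose_zero_right, V_one]
      simp
    · set M : ℕ := ((n : ℤ) + 1 + d).toNat - 1 with hM
      rw [show ((n : ℤ) + 1 + d).toNat = M + 1 from by omega,
        if_pos (by push_cast; omega),
        show (((n+1 : ℕ) : ℤ) + d).toNat = M + 1 from by push_cast; omega,
        show (((n+1 : ℕ) : ℤ) + 1 + d).toNat = M + 2 from by push_cast; omega,
        show 2 * (n+1+1) = 2*(n+1) + 2 from by omega, main_step]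

theorem stmt_10 (n : ℕ) (hn : 0 < n) (d : ℤ) :
    (∑ k ∈ Finset.range n,
        Polynomial.C (if 0 ≤ (k : ℤ) + d then ((2 * k).choose ((k : ℤ) + d).toNat : ℤ) else 0)
          * X ^ (n - 1 - k))
      + (if 0 < d then X ^ n * (lucasPoly d.toNat).comp (X - 2) else 0)
    = ∑ k ∈ Finset.range ((n : ℤ) + d).toNat,
        Polynomial.C ((2 * n).choose k : ℤ) * (lucasPoly ((n : ℤ) + d - k).toNat).comp (X - 2) := by

  obtain ⟨m, rfl⟩ : ∃ m, n = m + 1 := ⟨n - 1, by omega⟩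
  have hR : (∑ k ∈ Finset.range (((m+1 : ℕ) : ℤ) + d).toNat,
      Polynomial.C ((2 * (m+1)).choose k : ℤ)
        * (lucasPoly (((m+1 : ℕ) : ℤ) + d - k).toNat).comp (X - 2))
      = W (2*(m+1)) (((m : ℤ) + 1 + d).toNat) := by
    rw [W, show (((m+1:ℕ):ℤ) + d).toNat = ((m:ℤ)+1+d).toNat from by push_cast; omega]
    refine Finset.sum_congr rfl fun k hk => ?_
    have hk' := Finset.mem_range.mp hk
    rw [V, show (((m+1:ℕ):ℤ) + d - k).toNat = ((m:ℤ)+1+d).toNat - k from by push_cast; omega]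
  rw [hR, show ∀ j : ℕ, (lucasPoly j).comp (X - 2) = V j from fun j => rfl]
  simp only [Nat.add_sub_cancel]
  exact main_aux d m
end

section
/- Let p be a prime. Then Σ_{k=0}^{p-1} (((p-1)k)!/(k!)^{p-1}) ≡ p·B_{p-1} + (-1)^{p-1} - 2p (mod p²), where B_n is the n-th Bernoulli number. -/
open Finset

-- nilpotent helpers
lemma aux_prod_one_add {R : Type*} [CommRing R] (u : R) (hu : u * u = 0)
    (s : Finset ℕ) (f : ℕ → R) : ∏ k ∈ s, (1 + u * f k) = 1 + u * ∑ k ∈ s, f k := by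
  induction s using Finset.induction with
  | empty => simp
  | insert a s h ih =>
      rw [Finset.prod_insert h, Finset.sum_insert h, ih]
      linear_combination (f _ * ∑ k ∈ _, f k) * hu

lemma aux_pow_one_add {R : Type*} [CommRing R] (u : R) (hu : u * u = 0) (x : R) (n : ℕ) :
    (x + u) ^ (n + 1) = x ^ (n + 1) + (n + 1 : R) * x ^ n * u := by
  induction n with
  | zero => ring
  | succ n ih =>
      rw [pow_succ (x + u), ih]
      push_cast
      linear_combination (((n : R) + 1) * x ^ n) * hu
open Finset

/-- `q` is `p`-integral. -/
def PInt (p : ℕ) (q : ℚ) : Prop := ∃ a b : ℤ, ¬ (p:ℤ) ∣ b ∧ q * b = a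

lemma PInt.add {p : ℕ} (hp : p.Prime) {q r : ℚ} (hq : PInt p q) (hr : PInt p r) :
    PInt p (q + r) := by
  obtain ⟨a1, b1, hb1, h1⟩ := hq
  obtain ⟨a2, b2, hb2, h2⟩ := hr
  refine ⟨a1 * b2 + a2 * b1, b1 * b2, ?_, ?_⟩
  · intro h
    rcases ((Nat.prime_iff_prime_int.mp hp).dvd_mul.mp h) with h | h
    exacts [hb1 h, hb2 h]
  · push_cast
    linear_combination (b2:ℚ) * h1 + (b1:ℚ) * h2

lemma PInt.intCast {p : ℕ} (hp : p.Prime) (n : ℤ) : PInt p (n : ℚ) :=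
  ⟨n, 1, fun h => by have := Int.le_of_dvd one_pos h; have := hp.two_le; omega, by simp⟩

lemma PInt.int_mul {p : ℕ} (n : ℤ) {q : ℚ} (hq : PInt p q) : PInt p ((n:ℚ) * q) := by
  obtain ⟨a, b, hb, h⟩ := hq
  exact ⟨n * a, b, hb, by push_cast; linear_combination (n:ℚ) * h⟩

lemma bernoulli_pInt {p : ℕ} (hp : p.Prime) : ∀ n : ℕ, n < p - 1 → PInt p (bernoulli n) := by
  intro n
  induction n using Nat.strong_induction_on with
  | _ n ih =>
    intro hn
    match n with
    | 0 => simpa [bernoulli_zero] using PInt.intCast hp 1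
    | (n+1) =>
      have hs := sum_bernoulli (n + 2)
      rw [Finset.sum_range_succ, Nat.choose_succ_self_right, if_neg (by omega)] at hs
      have hsum : PInt p (∑ i ∈ range (n+1), ((n+2).choose i : ℚ) * bernoulli i) := by
        refine Finset.sum_induction _ _ (fun a b => PInt.add hp) ?_ ?_
        · simpa using PInt.intCast hp 0
        · intro i hi
          have hib : PInt p (bernoulli i) := ih i (Finset.mem_range.mp hi) (by
            have := Finset.mem_range.mp hi; omega)
          have h2 := PInt.int_mul (((n+2).choose i : ℤ)) hib
          simpa using h2
      obtain ⟨a, b, hb, h⟩ := hsum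
      refine ⟨-a, ((n:ℤ)+2) * b, ?_, ?_⟩
      · intro h2
        rcases ((Nat.prime_iff_prime_int.mp hp).dvd_mul.mp h2) with h2 | h2
        · have := Int.le_of_dvd (by positivity) h2
          have := hp.two_le
          omega
        · exact hb h2
      · push_cast at hs ⊢
        linear_combination (b:ℚ) * hs - h
lemma multinomial_const_spec (m k : ℕ) :
    Nat.factorial k ^ m * Nat.multinomial (Finset.range m) (fun _ => k) = Nat.factorial (m * k) := by
  have := Nat.multinomial_spec (Finset.range m) (fun _ => k)
  simpa [Finset.prod_const, Finset.sum_const, smul_eq_mul] using this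

lemma multinomial_const_zero (m : ℕ) :
    Nat.multinomial (Finset.range m) (fun _ => (0:ℕ)) = 1 := by
  have := multinomial_const_spec m 0
  simpa using this

lemma multinomial_const_one (m : ℕ) :
    Nat.multinomial (Finset.range m) (fun _ => (1:ℕ)) = Nat.factorial m := by
  have := multinomial_const_spec m 1
  simpa using this

lemma multinomial_const_two_spec (m : ℕ) :
    2 ^ m * Nat.multinomial (Finset.range m) (fun _ => (2:ℕ)) = Nat.factorial (m * 2) := by
  have := multinomial_const_spec m 2
  simpa [Nat.factorial] using this

lemma pp_dvd_multinomial {p k : ℕ} (hp : p.Prime) (h3 : 3 ≤ k) (hkp : k < p) :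
    p ^ 2 ∣ Nat.multinomial (Finset.range (p-1)) (fun _ => k) := by
  have hp3 : 3 ≤ p := by omega
  have hspec := multinomial_const_spec (p-1) k
  have h2p : p ^ 2 ∣ Nat.factorial (2 * p) := by
    have h1 : Nat.factorial (2 * p) = (2 * p) * Nat.factorial (2 * p - 1) := by
      rw [show 2 * p = (2 * p - 1) + 1 by omega, Nat.factorial_succ]
      simp
    rw [h1, pow_two]
    exact mul_dvd_mul (dvd_mul_left p 2) (Nat.dvd_factorial hp.pos (by omega))
  have hdvd : p ^ 2 ∣ Nat.factorial ((p - 1) * k) := by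
    refine h2p.trans (Nat.factorial_dvd_factorial ?_)
    calc 2 * p ≤ (p - 1) * 3 := by omega
    _ ≤ (p - 1) * k := Nat.mul_le_mul_left _ h3
  rw [← hspec] at hdvd
  have hcop : (p ^ 2).Coprime (Nat.factorial k ^ (p - 1)) := by
    refine Nat.Coprime.pow _ _ ?_
    rw [Nat.Prime.coprime_iff_not_dvd hp, hp.dvd_factorial]
    omega
  exact hcop.dvd_of_dvd_mul_left hdvd
lemma fermat_aux {p : ℕ} (hp : p.Prime) {k : ℕ} (h1 : 0 < k) (hk : k < p) :
    (p:ℤ) ∣ (k:ℤ) ^ (p-1) - 1 := by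
  haveI := Fact.mk hp
  rw [← ZMod.intCast_zmod_eq_zero_iff_dvd]
  push_cast
  have hk0 : (k : ZMod p) ≠ 0 := by
    rw [Ne, ZMod.natCast_eq_zero_iff]
    exact Nat.not_dvd_of_pos_of_lt h1 hk
  rw [ZMod.pow_card_sub_one_eq_one hk0]
  ring

lemma wilson_aux {p : ℕ} (hp : p.Prime) : ∃ w : ℤ, (Nat.factorial (p-1) : ℤ) = -1 + p * w := by
  haveI := Fact.mk hp
  have h : (p:ℤ) ∣ (Nat.factorial (p-1) : ℤ) + 1 := by
    rw [← ZMod.intCast_zmod_eq_zero_iff_dvd]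
    push_cast
    rw [ZMod.wilsons_lemma]
    ring
  obtain ⟨w, hw⟩ := h
  exact ⟨w, by linarith⟩

-- (p-2)! ≡ 1 mod p
lemma factorial_sub_two {p : ℕ} (hp : p.Prime) (h3 : 3 ≤ p) :
    ∃ n : ℤ, (Nat.factorial (p-2) : ℤ) = 1 + p * n := by
  haveI := Fact.mk hp
  have h : (p:ℤ) ∣ (Nat.factorial (p-2) : ℤ) - 1 := by
    rw [← ZMod.intCast_zmod_eq_zero_iff_dvd]
    push_cast
    have hfac : Nat.factorial (p-1) = (p-1) * Nat.factorial (p-2) := by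
      rw [show p - 1 = (p-2) + 1 by omega, Nat.factorial_succ]
    have : ((p:ZMod p) - 1) * (Nat.factorial (p-2) : ZMod p) = -1 := by
      have hw := ZMod.wilsons_lemma p
      rw [hfac] at hw
      push_cast at hw
      rw [Nat.cast_sub (by omega)] at hw
      simpa using hw
    rw [ZMod.natCast_self] at this
    have h2 : (Nat.factorial (p-2) : ZMod p) = 1 := by linear_combination -this
    rw [h2]
    ring
  obtain ⟨n, hn⟩ := h
  exact ⟨n, by linarith⟩

-- (2p-2)! ≡ -p mod p^2
lemma factorial_two_p {p : ℕ} (hp : p.Prime) (h3 : 3 ≤ p) :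
    ∃ m : ℤ, (Nat.factorial ((p-1) * 2) : ℤ) = -p + p^2 * m := by
  haveI := Fact.mk hp
  -- (2p-2)! = (p-1)! * p * ∏_{i ∈ Ico (p+1) (2p-1)} i
  have hsplit : Nat.factorial ((p-1) * 2)
      = Nat.factorial (p-1) * (p * ∏ i ∈ Ico (p+1) (2*p-1), i) := by
    have h1 : (∏ i ∈ Ico 1 (2*p-1), i) = Nat.factorial ((p-1)*2) := by
      rw [show 2*p-1 = (p-1)*2 + 1 by omega]
      exact Finset.prod_Ico_id_eq_factorial _
    have h2 : (∏ i ∈ Ico 1 p, i) * (∏ i ∈ Ico p (2*p-1), i) = ∏ i ∈ Ico 1 (2*p-1), i :=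
      Finset.prod_Ico_consecutive _ (by omega) (by omega)
    have h3' : (∏ i ∈ Ico p (2*p-1), i) = p * ∏ i ∈ Ico (p+1) (2*p-1), i :=
      Finset.prod_eq_prod_Ico_succ_bot (by omega) _
    have h4 : (∏ i ∈ Ico 1 p, i) = Nat.factorial (p-1) := by
      rw [show p = (p-1) + 1 by omega]
      exact Finset.prod_Ico_id_eq_factorial _
    rw [← h1, ← h2, h3', h4]
  -- ∏_{Ico (p+1) (2p-1)} i ≡ (p-2)! mod p
  have hprod : ∃ m1 : ℤ, ((∏ i ∈ Ico (p+1) (2*p-1), i : ℕ) : ℤ)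
      = (Nat.factorial (p-2) : ℤ) + p * m1 := by
    have h : (p:ℤ) ∣ ((∏ i ∈ Ico (p+1) (2*p-1), i : ℕ) : ℤ) - (Nat.factorial (p-2) : ℤ) := by
      rw [← ZMod.intCast_zmod_eq_zero_iff_dvd]
      push_cast
      have e2 : ((Nat.factorial (p-2) : ℕ) : ZMod p) = ∏ i ∈ Ico 1 (p-1), (i : ZMod p) := by
        rw [show p - 1 = (p-2) + 1 by omega]
        rw [← Nat.cast_prod, Finset.prod_Ico_id_eq_factorial]
      rw [e2]
      rw [Finset.prod_Ico_eq_prod_range, Finset.prod_Ico_eq_prod_range]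
      have hcard : 2*p-1 - (p+1) = p-1-1 := by omega
      rw [hcard]
      have : ∀ j, ((p + 1 + j : ℕ) : ZMod p) = ((1 + j : ℕ) : ZMod p) := by
        intro j; push_cast [ZMod.natCast_self]; ring
      rw [Finset.prod_congr rfl (fun j _ => this j)]
      ring
    obtain ⟨m1, hm1⟩ := h
    exact ⟨m1, by linarith⟩
  obtain ⟨m1, hm1⟩ := hprod
  obtain ⟨w, hw⟩ := wilson_aux hp
  obtain ⟨n, hn⟩ := factorial_sub_two hp h3
  refine ⟨w - n - m1 + p*(w*n + w*m1), ?_⟩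
  have : ((Nat.factorial ((p-1) * 2) : ℕ) : ℤ)
      = (Nat.factorial (p-1) : ℤ) * ((p:ℤ) * (((∏ i ∈ Ico (p+1) (2*p-1), i : ℕ) : ℤ))) := by
    rw [hsplit]; push_cast; ring
  rw [this, hm1, hw, hn]
  ring
lemma lerch_aux {p : ℕ} (hp : p.Prime) (h3 : 3 ≤ p) (hodd : Odd p) :
    ∃ c : ℤ, (∑ k ∈ range p, (k:ℤ)^(p-1)) = (Nat.factorial (p-1) : ℤ) + p + p^2 * c := by
  haveI := Fact.mk hp
  set a : ℕ → ℤ := fun k => ((k:ℤ)^(p-1) - 1) / p with ha_def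
  have ha : ∀ k ∈ Ico 1 p, (k:ℤ)^(p-1) = 1 + (p:ℤ) * a k := by
    intro k hk
    obtain ⟨h1, h2⟩ := Finset.mem_Ico.mp hk
    have hd := Int.mul_ediv_cancel' (fermat_aux hp h1 h2)
    simp only [ha_def]
    linarith [hd]
  obtain ⟨w, hw⟩ := wilson_aux hp
  set A : ℤ := ∑ k ∈ Ico 1 p, a k with hA_def
  have hsum : (∑ k ∈ range p, (k:ℤ)^(p-1)) = ((p:ℤ) - 1) + p * A := by
    rw [Finset.range_eq_Ico, Finset.sum_eq_sum_Ico_succ_bot (by omega : 0 < p)]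
    rw [Finset.sum_congr rfl ha, Finset.sum_add_distrib, Finset.sum_const, Nat.card_Ico,
      ← Finset.mul_sum]
    have : ((0:ℕ):ℤ)^(p-1) = 0 := by
      rw [Nat.cast_zero, zero_pow (by omega : p - 1 ≠ 0)]
    rw [this, ← hA_def, nsmul_eq_mul, Nat.cast_sub (by omega : 1 ≤ p)]
    push_cast
    ring
  -- work in ZMod (p^2)
  have hpR : ((p : ZMod (p^2)) * p) = 0 := by
    have h0 : ((p^2 : ℕ) : ZMod (p^2)) = 0 := ZMod.natCast_self _
    push_cast at h0
    linear_combination h0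
  have hwnil : ((p : ZMod (p^2)) * w) * ((p : ZMod (p^2)) * w) = 0 := by
    linear_combination ((w:ZMod (p^2)) * w) * hpR
  have hprod1 : ∏ k ∈ Ico 1 p, ((1:ZMod (p^2)) + p * (a k : ZMod (p^2)))
      = 1 + p * (A : ZMod (p^2)) := by
    rw [aux_prod_one_add _ hpR]
    rw [hA_def]
    push_cast
    ring
  have hprod2 : ∏ k ∈ Ico 1 p, ((1:ZMod (p^2)) + p * (a k : ZMod (p^2)))
      = ((Nat.factorial (p-1) : ℤ) : ZMod (p^2))^(p-1) := by
    have hterm : ∀ k ∈ Ico 1 p, ((1:ZMod (p^2)) + p * (a k : ZMod (p^2))) = (k : ZMod (p^2))^(p-1) := by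
      intro k hk
      have h := ha k hk
      calc (1:ZMod (p^2)) + p * (a k : ZMod (p^2)) = (((1 + (p:ℤ) * a k : ℤ)) : ZMod (p^2)) := by
            push_cast; ring
      _ = (((k:ℤ)^(p-1) : ℤ) : ZMod (p^2)) := by rw [← h]
      _ = (k : ZMod (p^2))^(p-1) := by push_cast; rfl
    rw [Finset.prod_congr rfl hterm, Finset.prod_pow]
    congr 1
    have : (∏ k ∈ Ico 1 p, (k : ZMod (p^2))) = ((Nat.factorial (p-1) : ℕ) : ZMod (p^2)) := by
      rw [← Nat.cast_prod]
      congr 1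
      rw [show p = (p-1)+1 by omega]
      exact Finset.prod_Ico_id_eq_factorial _
    rw [this]
    push_cast
    rfl
  have hfac : ((Nat.factorial (p-1) : ℤ) : ZMod (p^2))^(p-1) = 1 + p * (w : ZMod (p^2)) := by
    rw [hw]
    push_cast
    rw [show (-1 + (p:ZMod (p^2)) * w) = (-1) + (p:ZMod (p^2)) * w by ring]
    rw [show p - 1 = (p - 2) + 1 by omega, aux_pow_one_add _ hwnil]
    have he1 : ((-1 : ZMod (p^2)))^((p-2)+1) = 1 := by
      have : Even ((p-2)+1) := by
        rw [show (p-2)+1 = p - 1 by omega]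
        exact Nat.Odd.sub_odd hodd odd_one
      exact this.neg_one_pow
    have he2 : ((-1 : ZMod (p^2)))^(p-2) = -1 := by
      have : Odd (p-2) := Nat.Odd.sub_even (by omega) hodd (by decide)
      exact this.neg_one_pow
    rw [he1, he2]
    push_cast [Nat.cast_sub (by omega : 2 ≤ p)]
    linear_combination (-(w : ZMod (p^2))) * hpR
  have hdvd : (p:ℤ) ∣ (A - w) := by
    have h0 : (((p:ℤ) * (A - w) : ℤ) : ZMod (p^2)) = 0 := by
      push_cast
      have := hprod1.symm.trans (hprod2.trans hfac)
      linear_combination this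
    rw [ZMod.intCast_zmod_eq_zero_iff_dvd] at h0
    push_cast at h0
    rw [pow_two] at h0
    exact (mul_dvd_mul_iff_left (by exact_mod_cast hp.ne_zero : (p:ℤ) ≠ 0)).mp h0
  obtain ⟨c, hc⟩ := hdvd
  refine ⟨c, ?_⟩
  rw [hsum]
  have hA : A = w + p * c := by linarith
  rw [hA, hw]
  ring

/-- `q` has `p`-adic valuation at least 2 (cleared-denominator form). -/
def QQ (p : ℕ) (q : ℚ) : Prop := ∃ a b : ℤ, ¬ (p:ℤ) ∣ b ∧ q * b = (p:ℚ)^2 * a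

lemma QQ.add {p : ℕ} (hp : p.Prime) {q r : ℚ} (hq : QQ p q) (hr : QQ p r) :
    QQ p (q + r) := by
  obtain ⟨a1, b1, hb1, h1⟩ := hq
  obtain ⟨a2, b2, hb2, h2⟩ := hr
  refine ⟨a1 * b2 + a2 * b1, b1 * b2, ?_, ?_⟩
  · intro h
    rcases ((Nat.prime_iff_prime_int.mp hp).dvd_mul.mp h) with h | h
    exacts [hb1 h, hb2 h]
  · push_cast
    linear_combination (b2:ℚ) * h1 + (b1:ℚ) * h2

lemma QQ.zero {p : ℕ} (hp : p.Prime) : QQ p 0 :=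
  ⟨0, 1, fun h => by have := Int.le_of_dvd one_pos h; have := hp.two_le; omega, by simp⟩

lemma QQ.int_p2_mul {p : ℕ} (hp : p.Prime) (n : ℤ) : QQ p (((p:ℤ)^2 * n : ℤ) : ℚ) :=
  ⟨n, 1, fun h => by have := Int.le_of_dvd one_pos h; have := hp.two_le; omega,
    by push_cast; ring⟩

theorem stmt_13 (p : ℕ) (hp : p.Prime) :
    (∑ k ∈ Finset.range p, (Nat.multinomial (Finset.range (p - 1)) (fun _ => k) : ℚ))
        = (p : ℚ) * bernoulli (p - 1) + (-1) ^ (p - 1) - 2 * p ∨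
      (2 : ℤ) ≤
        padicValRat p
          ((∑ k ∈ Finset.range p, (Nat.multinomial (Finset.range (p - 1)) (fun _ => k) : ℚ))
            - ((p : ℚ) * bernoulli (p - 1) + (-1) ^ (p - 1) - 2 * p)) := by
  haveI := Fact.mk hp
  have hp0 : (p:ℚ) ≠ 0 := by exact_mod_cast hp.ne_zero
  -- handle p = 2 separately
  rcases eq_or_ne p 2 with rfl | hp2
  · right
    have hval : ((∑ k ∈ Finset.range 2, (Nat.multinomial (Finset.range (2 - 1)) (fun _ => k) : ℚ))
            - (((2:ℕ) : ℚ) * bernoulli (2 - 1) + (-1) ^ (2 - 1) - 2 * ((2:ℕ) : ℚ))) = (2:ℚ)^3 := by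
      rw [Finset.sum_range_succ, Finset.sum_range_one]
      norm_num [multinomial_const_zero, multinomial_const_one, bernoulli_one]
    rw [hval]
    have hv2 : padicValRat 2 ((2:ℚ)^3) = 3 := by
      rw [show ((2:ℚ)) = (((2:ℕ)):ℚ) from by norm_num, padicValRat.pow _,
        padicValRat.self (by norm_num)]
      norm_num
    rw [hv2]
    norm_num
  have h3 : 3 ≤ p := by
    rcases hp.two_le.lt_or_eq with h | h
    · omega
    · omega
  have hodd : Odd p := hp.odd_of_ne_two hp2
  -- integer computations
  set M : ℕ → ℕ := fun k => Nat.multinomial (Finset.range (p - 1)) (fun _ => k) with hM_def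
  -- M 2 ≡ -p mod p^2
  have hM2 : ∃ m : ℤ, ((M 2 : ℕ) : ℤ) = -p + p^2 * m := by
    obtain ⟨m', hm'⟩ := factorial_two_p hp h3
    have hspec : ((2:ℤ))^(p-1) * (M 2 : ℤ) = (Nat.factorial ((p-1) * 2) : ℤ) := by
      exact_mod_cast congrArg (Nat.cast : ℕ → ℤ) (multinomial_const_two_spec (p-1))
    obtain ⟨q, hq⟩ := fermat_aux hp (show 0 < 2 by norm_num) (show 2 < p by omega)
    push_cast at hq
    have hq' : (2:ℤ)^(p-1) = 1 + p * q := by linarith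
    have hdvdM : (p:ℤ) ∣ (M 2 : ℤ) := by
      have h0 : (((M 2 : ℕ) : ℤ) : ZMod p) = 0 := by
        have h20 : (2 : ZMod p) ≠ 0 := by
          have h2n : ((2:ℕ) : ZMod p) ≠ 0 := by
            rw [Ne, ZMod.natCast_eq_zero_iff]
            exact Nat.not_dvd_of_pos_of_lt (by norm_num) (by omega)
          simpa using h2n
        have h2u : ((2:ZMod p))^(p-1) = 1 := ZMod.pow_card_sub_one_eq_one h20
        have hthis := congrArg (Int.cast : ℤ → ZMod p) (hspec.trans hm')
        push_cast [ZMod.natCast_self] at hthis ⊢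
        rw [h2u] at hthis
        linear_combination hthis
      rwa [ZMod.intCast_zmod_eq_zero_iff_dvd] at h0
    obtain ⟨e, he⟩ := hdvdM
    have hpz : (p:ℤ) ≠ 0 := by exact_mod_cast hp.ne_zero
    have h1 : (p:ℤ) * (e + p*q*e) = p * (-1 + p*m') := by
      rw [he, hq', hm'] at hspec
      linear_combination hspec
    have h2 := mul_left_cancel₀ hpz h1
    exact ⟨m' - q*e, by rw [he]; linear_combination (p:ℤ) * h2⟩
  -- full sum of multinomials
  have hS : ∃ s : ℤ, (∑ k ∈ Finset.range p, ((M k : ℕ) : ℤ))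
      = 1 + (Nat.factorial (p-1) : ℤ) - p + p^2 * s := by
    obtain ⟨m, hm⟩ := hM2
    have hsplit : (∑ k ∈ Finset.range p, ((M k : ℕ) : ℤ))
        = (∑ k ∈ Finset.range 3, ((M k : ℕ) : ℤ)) + ∑ k ∈ Finset.Ico 3 p, ((M k : ℕ) : ℤ) := by
      rw [Finset.range_eq_Ico, ← Finset.sum_Ico_consecutive _ (by omega : 0 ≤ 3) (by omega : 3 ≤ p), Finset.range_eq_Ico]
    have hrest : ∃ t : ℤ, (∑ k ∈ Finset.Ico 3 p, ((M k : ℕ) : ℤ)) = p^2 * t := by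
      have : ((p:ℤ))^2 ∣ ∑ k ∈ Finset.Ico 3 p, ((M k : ℕ) : ℤ) := by
        refine Finset.dvd_sum ?_
        intro k hk
        obtain ⟨hk1, hk2⟩ := Finset.mem_Ico.mp hk
        have := pp_dvd_multinomial hp hk1 hk2
        exact_mod_cast Int.natCast_dvd_natCast.mpr this
      obtain ⟨t, ht⟩ := this
      exact ⟨t, ht⟩
    obtain ⟨t, ht⟩ := hrest
    refine ⟨m + t, ?_⟩
    rw [hsplit, ht, Finset.sum_range_succ, Finset.sum_range_succ, Finset.sum_range_one]
    simp only [hM_def]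
    rw [multinomial_const_zero, multinomial_const_one]
    simp only [hM_def] at hm
    push_cast [hm]
    ring
  obtain ⟨s, hs⟩ := hS
  obtain ⟨c, hc⟩ := lerch_aux hp h3 hodd
  -- Faulhaber
  have hF := sum_range_pow p (p-1)
  have hpp : p - 1 + 1 = p := by omega
  have hch : (p-1+1).choose (p-1) = p := by rw [Nat.choose_succ_self_right]; omega
  rw [Finset.sum_range_succ, hch] at hF
  rw [hpp] at hF
  have hexp1 : p - (p-1) = 1 := by omega
  rw [hexp1] at hF
  set T : ℚ := ∑ i ∈ Finset.range (p-1), bernoulli i * (p.choose i) * (p:ℚ)^(p-i) / p with hT_def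
  have hbern : (p:ℚ) * bernoulli (p-1) = (∑ k ∈ Finset.range p, (k:ℚ)^(p-1)) - T := by
    rw [hF, hT_def]
    have hcast : ((p-1:ℕ):ℚ) + 1 = p := by rw [Nat.cast_sub (by omega)]; push_cast; ring
    rw [hcast, add_sub_cancel_left, pow_one, mul_div_assoc, div_self hp0, mul_one, mul_comm]
  -- each term of T satisfies QQ
  have hTQQ : QQ p T := by
    rw [hT_def]
    refine Finset.sum_induction _ _ (fun a b => QQ.add hp) (QQ.zero hp) ?_
    intro i hi
    have hi' : i < p - 1 := Finset.mem_range.mp hi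
    rcases Nat.eq_zero_or_pos i with rfl | hipos
    · -- i = 0 : term = p^p / p = p^(p-1)
      refine ⟨(p:ℤ)^(p-3), 1,
        fun h => by have := Int.le_of_dvd one_pos h; have := hp.two_le; omega, ?_⟩
      rw [bernoulli_zero]
      have : (p:ℚ)^(p-0) = (p:ℚ)^2 * (p:ℚ)^(p-3) * (p:ℚ)^1 := by
        rw [← pow_add, ← pow_add]
        congr 1
        omega
      rw [this]
      push_cast
      field_simp
      simp
    · -- i ≥ 1
      obtain ⟨a, b, hb, hab⟩ := bernoulli_pInt hp i hi'
      obtain ⟨ci, hci⟩ := hp.dvd_choose_self (by omega : i ≠ 0) (by omega : i < p)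
      refine ⟨a * ci * (p:ℤ)^(p-i-2), b, hb, ?_⟩
      have hpow : (p:ℚ)^(p-i) = (p:ℚ)^2 * (p:ℚ)^(p-i-2) := by
        rw [← pow_add]
        congr 1
        omega
      rw [hci, hpow]
      push_cast
      field_simp
      linear_combination (ci:ℚ) * hab
  -- assemble
  set L : ℚ := ∑ k ∈ Finset.range p, (Nat.multinomial (Finset.range (p - 1)) (fun _ => k) : ℚ)
    with hL_def
  set Rhs : ℚ := (p : ℚ) * bernoulli (p - 1) + (-1) ^ (p - 1) - 2 * p with hR_def
  have hneg : ((-1 : ℚ)) ^ (p - 1) = 1 := (Nat.Odd.sub_odd hodd odd_one).neg_one_pow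
  have hLint : L = ((∑ k ∈ Finset.range p, ((M k : ℕ) : ℤ) : ℤ) : ℚ) := by
    rw [hL_def]
    push_cast
    rfl
  have hNint : (∑ k ∈ Finset.range p, (k:ℚ)^(p-1))
      = ((∑ k ∈ Finset.range p, (k:ℤ)^(p-1) : ℤ) : ℚ) := by
    push_cast
    rfl
  have hdiff : L - Rhs = (((p:ℤ)^2 * (s - c) : ℤ) : ℚ) + T := by
    rw [hR_def, hbern, hneg, hLint, hNint, hs, hc]
    push_cast
    ring
  have hQQ : QQ p (L - Rhs) := by
    rw [hdiff]
    exact QQ.add hp (QQ.int_p2_mul hp (s - c)) hTQQ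
  obtain ⟨a, b, hb, hab⟩ := hQQ
  by_cases hd : L - Rhs = 0
  · left
    exact sub_eq_zero.mp hd
  · right
    have hb0 : b ≠ 0 := fun h => hb (h ▸ dvd_zero _)
    have ha0 : a ≠ 0 := by
      intro h
      rw [h] at hab
      simp only [Int.cast_zero, mul_zero] at hab
      rcases mul_eq_zero.mp hab with h' | h'
      · exact hd h'
      · exact hb0 (by exact_mod_cast h')
    have h1 : padicValRat p ((L - Rhs) * (b:ℚ))
        = padicValRat p (L - Rhs) + padicValRat p (b:ℚ) :=
      padicValRat.mul hd (by exact_mod_cast hb0)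
    have h2 : (L - Rhs) * (b:ℚ) = (((p:ℤ)^2 * a : ℤ) : ℚ) := by
      push_cast
      linear_combination hab
    rw [h2, padicValRat.of_int] at h1
    have h3' : padicValInt p ((p:ℤ)^2 * a) = 2 + padicValInt p a := by
      rw [padicValInt.mul (by positivity) ha0]
      congr 1
      have : ((p:ℤ)^2) = ((p^2 : ℕ) : ℤ) := by push_cast; ring
      rw [this]
      unfold padicValInt
      rw [Int.natAbs_natCast]
      rw [padicValNat.prime_pow]
    have h4 : padicValRat p (b:ℚ) = padicValInt p b := padicValRat.of_int
    have h5 : padicValInt p b = 0 := padicValInt.eq_zero_of_not_dvd hb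
    rw [h3', h4, h5] at h1
    have : padicValRat p (L - Rhs) = 2 + (padicValInt p a : ℤ) := by push_cast at h1 ⊢; omega
    rw [this]
    omega
end
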